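/- arXiv:2412.05522 — 3 statements merged into one kernel-verified Lean document; each statement's English description precedes it below -/
import Mathlib

section
/- Let G be a simple graph on n vertices, let t ≥ 2 be an integer, and let c = (c_i)_{i≥1} be a cost vector of nonnegative reals. Then there exists a complete multipartite graph H on n vertices such that θ*_t(G, c) ≤ θ*_t(H, c). -/
open scoped Classical
open Finset
set_option linter.unusedSectionVars false
set_option linter.unusedVariables false
set_option maxHeartbeats 1000000

/-- `K` is a clique of `G`: a nonempty set of pairwise adjacent vertices. -/
def IsCliqueOf {V : Type} [Fintype V] [DecidableEq V] (G : SimpleGraph V) (K : Finset V) : Prop :=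
  K.Nonempty ∧ G.IsClique (K : Set V)

/-- Total `c`-cost of a weighting `f` of the finsets of vertices. -/
noncomputable def cliqueCost {V : Type} [Fintype V] [DecidableEq V]
    (c : ℕ → ℝ) (f : Finset V → ℝ) : ℝ :=
  ∑ K : Finset V, c K.card * f K

/-- `f` is a fractional `t`-clique cover of `G`. -/
def IsFracCover {V : Type} [Fintype V] [DecidableEq V]
    (t : ℕ) (G : SimpleGraph V) (f : Finset V → ℝ) : Prop :=
  (∀ K, 0 ≤ f K) ∧ (∀ K, ¬ IsCliqueOf G K → f K = 0) ∧
  ∀ T : Finset V, T.card = t → G.IsClique (T : Set V) →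
    1 ≤ ∑ K ∈ Finset.univ.filter (fun K => T ⊆ K), f K

/-- `f` is a fractional `t`-clique decomposition of `G`. -/
def IsFracDecomp {V : Type} [Fintype V] [DecidableEq V]
    (t : ℕ) (G : SimpleGraph V) (f : Finset V → ℝ) : Prop :=
  (∀ K, 0 ≤ f K) ∧ (∀ K, ¬ IsCliqueOf G K → f K = 0) ∧
  ∀ T : Finset V, T.card = t → G.IsClique (T : Set V) →
    ∑ K ∈ Finset.univ.filter (fun K => T ⊆ K), f K = 1

/-- `f` is an integer (`{0,1}`-valued) `t`-clique cover of `G`. -/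
def IsIntCover {V : Type} [Fintype V] [DecidableEq V]
    (t : ℕ) (G : SimpleGraph V) (f : Finset V → ℝ) : Prop :=
  IsFracCover t G f ∧ ∀ K, f K = 0 ∨ f K = 1

/-- `f` is an integer (`{0,1}`-valued) `t`-clique decomposition of `G`. -/
def IsIntDecomp {V : Type} [Fintype V] [DecidableEq V]
    (t : ℕ) (G : SimpleGraph V) (f : Finset V → ℝ) : Prop :=
  IsFracDecomp t G f ∧ ∀ K, f K = 0 ∨ f K = 1

/-- θ*_t(G,c): minimum total c-cost of a fractional t-clique cover. -/
noncomputable def thetaFrac {V : Type} [Fintype V] [DecidableEq V]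
    (t : ℕ) (G : SimpleGraph V) (c : ℕ → ℝ) : ℝ :=
  sInf { x | ∃ f, IsFracCover t G f ∧ x = cliqueCost c f }

/-- θ_t(G,c): minimum total c-cost of an integer t-clique cover. -/
noncomputable def thetaInt {V : Type} [Fintype V] [DecidableEq V]
    (t : ℕ) (G : SimpleGraph V) (c : ℕ → ℝ) : ℝ :=
  sInf { x | ∃ f, IsIntCover t G f ∧ x = cliqueCost c f }

/-- π*_t(G,c): minimum total c-cost of a fractional t-clique decomposition. -/
noncomputable def piFrac {V : Type} [Fintype V] [DecidableEq V]
    (t : ℕ) (G : SimpleGraph V) (c : ℕ → ℝ) : ℝ :=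
  sInf { x | ∃ f, IsFracDecomp t G f ∧ x = cliqueCost c f }

/-- π_t(G,c): minimum total c-cost of an integer t-clique decomposition. -/
noncomputable def piInt {V : Type} [Fintype V] [DecidableEq V]
    (t : ℕ) (G : SimpleGraph V) (c : ℕ → ℝ) : ℝ :=
  sInf { x | ∃ f, IsIntDecomp t G f ∧ x = cliqueCost c f }

/-- `G` is complete multipartite: vertices can be assigned to parts so that
adjacency holds exactly between distinct parts. -/
def IsCompleteMultipartite {V : Type} [Fintype V] [DecidableEq V]
    (G : SimpleGraph V) : Prop :=
  ∃ p : V → ℕ, ∀ u v, G.Adj u v ↔ p u ≠ p v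


namespace CMProof

variable {V : Type} [Fintype V] [DecidableEq V]

def rwG (G : SimpleGraph V) (S : Finset V) (v : V) : SimpleGraph V where
  Adj x y := (x ∉ S ∧ y ∉ S ∧ G.Adj x y) ∨ (x ∈ S ∧ y ∉ S ∧ G.Adj v y) ∨
    (y ∈ S ∧ x ∉ S ∧ G.Adj v x)
  symm := by
    constructor
    rintro x y (⟨hx, hy, h⟩ | ⟨hx, hy, h⟩ | ⟨hy, hx, h⟩)
    · exact Or.inl ⟨hy, hx, h.symm⟩
    · exact Or.inr (Or.inr ⟨hx, hy, h⟩)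
    · exact Or.inr (Or.inl ⟨hy, hx, h⟩)
  loopless := by
    constructor
    rintro x (⟨hx, hy, h⟩ | ⟨hx, hy, h⟩ | ⟨hy, hx, h⟩)
    · exact G.irrefl h
    · exact hy hx
    · exact hx hy

lemma rwG_adj {G : SimpleGraph V} {S : Finset V} {v x y : V} :
    (rwG G S v).Adj x y ↔ ((x ∉ S ∧ y ∉ S ∧ G.Adj x y) ∨ (x ∈ S ∧ y ∉ S ∧ G.Adj v y) ∨
      (y ∈ S ∧ x ∉ S ∧ G.Adj v x)) := Iff.rfl

lemma rwG_adj_out {G : SimpleGraph V} {S : Finset V} {v x y : V} (hx : x ∉ S) (hy : y ∉ S) :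
    (rwG G S v).Adj x y ↔ G.Adj x y := by
  rw [rwG_adj]; tauto

lemma rwG_adj_in {G : SimpleGraph V} {S : Finset V} {v x y : V} (hx : x ∈ S) :
    (rwG G S v).Adj x y ↔ (y ∉ S ∧ G.Adj v y) := by
  rw [rwG_adj]; tauto

lemma sum_slice (S : Finset V) {x : V} (hx : x ∈ S) (T : Finset V) (φ : Finset V → ℝ) :
    ∑ K ∈ Finset.univ.filter (fun K => T ⊆ K ∧ K ∩ S = {x}), φ K
      = ∑ K ∈ Finset.univ.filter (fun K => T.erase x ⊆ K ∧ K ∩ S = ∅), φ (insert x K) := by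
  refine Finset.sum_bij' (fun K _ => K.erase x) (fun K _ => insert x K) ?_ ?_ ?_ ?_ ?_
  · intro K hK
    simp only [Finset.mem_filter, Finset.mem_univ, true_and] at hK ⊢
    obtain ⟨hTK, hKS⟩ := hK
    constructor
    · exact Finset.erase_subset_erase x hTK
    · rw [Finset.eq_empty_iff_forall_notMem]
      intro y hy
      rw [Finset.mem_inter, Finset.mem_erase] at hy
      have : y ∈ K ∩ S := Finset.mem_inter.2 ⟨hy.1.2, hy.2⟩
      rw [hKS, Finset.mem_singleton] at this
      exact hy.1.1 this
  · intro K hK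
    simp only [Finset.mem_filter, Finset.mem_univ, true_and] at hK ⊢
    obtain ⟨hTK, hKS⟩ := hK
    constructor
    · intro a ha
      by_cases hax : a = x
      · simp [hax]
      · exact Finset.mem_insert_of_mem (hTK (Finset.mem_erase.2 ⟨hax, ha⟩))
    · ext y
      simp only [Finset.mem_inter, Finset.mem_insert, Finset.mem_singleton]
      constructor
      · rintro ⟨hy1 | hy2, hyS⟩
        · exact hy1
        · exact absurd (Finset.mem_inter.2 ⟨hy2, hyS⟩) (by simp [hKS])
      · rintro rfl; exact ⟨Or.inl rfl, hx⟩
  · intro K hK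
    simp only [Finset.mem_filter, Finset.mem_univ, true_and] at hK
    have hxK : x ∈ K := by
      have : x ∈ K ∩ S := by rw [hK.2]; exact Finset.mem_singleton_self x
      exact (Finset.mem_inter.1 this).1
    exact Finset.insert_erase hxK
  · intro K hK
    simp only [Finset.mem_filter, Finset.mem_univ, true_and] at hK
    have hxK : x ∉ K := by
      intro h
      have : x ∈ K ∩ S := Finset.mem_inter.2 ⟨h, hx⟩
      rw [hK.2] at this; exact absurd this (Finset.notMem_empty x)
    exact Finset.erase_insert hxK
  · intro K hK
    simp only [Finset.mem_filter, Finset.mem_univ, true_and] at hK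
    have hxK : x ∈ K := by
      have : x ∈ K ∩ S := by rw [hK.2]; exact Finset.mem_singleton_self x
      exact (Finset.mem_inter.1 this).1
    rw [Finset.insert_erase hxK]

end CMProof

namespace CMProof

section Master

variable {V : Type} [Fintype V] [DecidableEq V]
variable {G : SimpleGraph V} {S B : Finset V} {v : V} {t : ℕ} {g : Finset V → ℝ}

/-- The redistributed cover. -/
noncomputable def Fmap (B S : Finset V) (g : Finset V → ℝ) (K : Finset V) : ℝ :=
  if K ∩ S = ∅ then g K
  else if ∃ b ∈ B, K ∩ S = {b} then (B.card : ℝ)⁻¹ * ∑ x ∈ S, g (insert x (K \ S)) else 0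

lemma Fmap_eval_empty {K : Finset V} (h : K ∩ S = ∅) (g : Finset V → ℝ) :
    Fmap B S g K = g K := if_pos h

lemma Fmap_eval_single {K : Finset V} {b : V} (hb : b ∈ B) (h : K ∩ S = {b}) (g : Finset V → ℝ) :
    Fmap B S g K = (B.card : ℝ)⁻¹ * ∑ x ∈ S, g (insert x (K \ S)) := by
  unfold Fmap
  rw [if_neg (by simp [h]), if_pos ⟨b, hb, h⟩]

lemma Fmap_eval_zero {K : Finset V} (h1 : K ∩ S ≠ ∅) (h2 : ¬ ∃ b ∈ B, K ∩ S = {b})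
    (g : Finset V → ℝ) : Fmap B S g K = 0 := by
  unfold Fmap
  rw [if_neg h1, if_neg h2]

lemma Fmap_nonneg (hg : ∀ K, 0 ≤ g K) (K : Finset V) : 0 ≤ Fmap B S g K := by
  unfold Fmap
  split_ifs
  · exact hg K
  · exact mul_nonneg (by positivity) (Finset.sum_nonneg fun x _ => hg _)
  · exact le_refl 0

variable (hBS : B ⊆ S) (hvB : v ∈ B)
  (hInd : ∀ x ∈ S, ∀ y ∈ S, ¬ G.Adj x y)
  (hB : ∀ b ∈ B, ∀ y, G.Adj b y ↔ G.Adj v y)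
  (hg : IsFracCover t (rwG G S v) g)

include hg in
lemma g_zero_two {K : Finset V} {x y : V} (hx : x ∈ S) (hy : y ∈ S) (hxK : x ∈ K)
    (hyK : y ∈ K) (hxy : x ≠ y) : g K = 0 := by
  refine hg.2.1 K ?_
  rintro ⟨-, hcl⟩
  have := hcl (Finset.mem_coe.2 hxK) (Finset.mem_coe.2 hyK) hxy
  rw [rwG_adj_in hx] at this
  exact this.1 hy

include hg in
lemma g_zero_big {K : Finset V} (h1 : K ∩ S ≠ ∅) (h2 : ¬ ∃ x ∈ S, K ∩ S = {x}) : g K = 0 := by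
  have hne : (K ∩ S).Nonempty := Finset.nonempty_iff_ne_empty.2 h1
  have hcard : 1 < (K ∩ S).card := by
    rcases Nat.lt_or_ge 1 (K ∩ S).card with h | h
    · exact h
    · interval_cases h' : (K ∩ S).card
      · exact absurd (Finset.card_eq_zero.1 h') h1
      · obtain ⟨x, hx⟩ := Finset.card_eq_one.1 h'
        have hxm : x ∈ K ∩ S := by rw [hx]; exact Finset.mem_singleton_self x
        exact absurd ⟨x, (Finset.mem_inter.1 hxm).2, hx⟩ h2
  obtain ⟨x, hx, y, hy, hxy⟩ := Finset.one_lt_card.1 hcard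
  exact g_zero_two hg (Finset.mem_inter.1 hx).2 (Finset.mem_inter.1 hy).2
    (Finset.mem_inter.1 hx).1 (Finset.mem_inter.1 hy).1 hxy

end Master

end CMProof

namespace CMProof

section Master2

variable {V : Type} [Fintype V] [DecidableEq V]
variable {G : SimpleGraph V} {S B : Finset V} {v : V} {t : ℕ} {g : Finset V → ℝ}

lemma eq_insert_sdiff {K : Finset V} {b : V} (h : K ∩ S = {b}) : K = insert b (K \ S) := by
  ext z
  simp only [Finset.mem_insert, Finset.mem_sdiff]
  constructor
  · intro hz
    by_cases hzS : z ∈ S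
    · left
      have : z ∈ K ∩ S := Finset.mem_inter.2 ⟨hz, hzS⟩
      rw [h, Finset.mem_singleton] at this; exact this
    · right; exact ⟨hz, hzS⟩
  · rintro (hzb | ⟨hz, -⟩)
    · have h2 : b ∈ K ∩ S := by rw [h]; exact Finset.mem_singleton_self b
      rw [hzb]
      exact (Finset.mem_inter.1 h2).1
    · exact hz

lemma not_mem_of_inter_empty {K₀ : Finset V} {x : V} (h : K₀ ∩ S = ∅) (hx : x ∈ S) :
    x ∉ K₀ := fun hz => by
  have : x ∈ K₀ ∩ S := Finset.mem_inter.2 ⟨hz, hx⟩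
  rw [h] at this; exact absurd this (Finset.notMem_empty x)

lemma insert_sdiff_eq {K₀ : Finset V} {b : V} (h : K₀ ∩ S = ∅) (hb : b ∈ S) :
    (insert b K₀) \ S = K₀ := by
  ext z
  simp only [Finset.mem_sdiff, Finset.mem_insert]
  constructor
  · rintro ⟨rfl | hz, hzS⟩
    · exact absurd hb hzS
    · exact hz
  · intro hz
    exact ⟨Or.inr hz, fun hzS => not_mem_of_inter_empty h hzS hz⟩

lemma clique_rw_out {T : Finset V} (hTS : T ∩ S = ∅) (hT : G.IsClique (T : Set V)) :
    (rwG G S v).IsClique (T : Set V) := by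
  intro a ha b hb hab
  rw [rwG_adj_out (fun hS => not_mem_of_inter_empty hTS hS (Finset.mem_coe.1 ha))
    (fun hS => not_mem_of_inter_empty hTS hS (Finset.mem_coe.1 hb))]
  exact hT ha hb hab

lemma clique_base {K₀ : Finset V} {x : V} (hx : x ∈ S) (h0 : K₀ ∩ S = ∅)
    (h : (rwG G S v).IsClique ((insert x K₀ : Finset V) : Set V)) :
    G.IsClique (K₀ : Set V) ∧ ∀ y ∈ K₀, G.Adj v y := by
  constructor
  · intro a ha b hb hab
    have h1 := h (by simp [Finset.mem_coe.1 ha]) (by simp [Finset.mem_coe.1 hb]) hab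
    rwa [rwG_adj_out (fun hS => not_mem_of_inter_empty h0 hS (Finset.mem_coe.1 ha))
      (fun hS => not_mem_of_inter_empty h0 hS (Finset.mem_coe.1 hb))] at h1
  · intro y hy
    have hyx : x ≠ y := fun he => not_mem_of_inter_empty h0 hx (he ▸ hy)
    have h1 := h (by simp) (by simp [hy]) hyx
    rw [rwG_adj_in hx] at h1
    exact h1.2

lemma clique_rw_insert {K₀ : Finset V} {x : V} (hx : x ∈ S) (h0 : K₀ ∩ S = ∅)
    (hcl : G.IsClique (K₀ : Set V)) (hN : ∀ y ∈ K₀, G.Adj v y) :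
    (rwG G S v).IsClique ((insert x K₀ : Finset V) : Set V) := by
  intro a ha b hb hab
  simp only [Finset.coe_insert, Set.mem_insert_iff, Finset.mem_coe] at ha hb
  rcases ha with rfl | ha <;> rcases hb with rfl | hb
  · exact absurd rfl hab
  · rw [rwG_adj_in hx]
    exact ⟨fun hS => not_mem_of_inter_empty h0 hS hb, hN b hb⟩
  · rw [rwG_adj]
    exact Or.inr (Or.inr ⟨hx, fun hS => not_mem_of_inter_empty h0 hS ha, hN a ha⟩)
  · rw [rwG_adj_out (fun hS => not_mem_of_inter_empty h0 hS ha)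
      (fun hS => not_mem_of_inter_empty h0 hS hb)]
    exact hcl ha hb hab

lemma clique_G_insert (hB : ∀ b ∈ B, ∀ y, G.Adj b y ↔ G.Adj v y) {K₀ : Finset V} {b : V}
    (hb : b ∈ B) (h0 : K₀ ∩ S = ∅) (hbS : b ∈ S)
    (hcl : G.IsClique (K₀ : Set V)) (hN : ∀ y ∈ K₀, G.Adj v y) :
    G.IsClique ((insert b K₀ : Finset V) : Set V) := by
  intro a ha b' hb' hab
  simp only [Finset.coe_insert, Set.mem_insert_iff, Finset.mem_coe] at ha hb'
  rcases ha with rfl | ha <;> rcases hb' with rfl | hb'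
  · exact absurd rfl hab
  · exact (hB a hb b').2 (hN b' hb')
  · exact ((hB b' hb a).2 (hN a ha)).symm
  · exact hcl ha hb' hab

variable (hBS : B ⊆ S) (hvB : v ∈ B)
  (hInd : ∀ x ∈ S, ∀ y ∈ S, ¬ G.Adj x y)
  (hB : ∀ b ∈ B, ∀ y, G.Adj b y ↔ G.Adj v y)
  (hg : IsFracCover t (rwG G S v) g)

include hBS hB hg in
lemma Fmap_zero (K : Finset V) (hK : ¬ IsCliqueOf G K) : Fmap B S g K = 0 := by
  by_cases h1 : K ∩ S = ∅
  · rw [Fmap_eval_empty h1]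
    refine hg.2.1 K ?_
    rintro ⟨hne, hcl⟩
    refine hK ⟨hne, ?_⟩
    intro a ha b hb hab
    have h2 := hcl ha hb hab
    rwa [rwG_adj_out (fun hS => not_mem_of_inter_empty h1 hS (Finset.mem_coe.1 ha))
      (fun hS => not_mem_of_inter_empty h1 hS (Finset.mem_coe.1 hb))] at h2
  · by_cases h2 : ∃ b ∈ B, K ∩ S = {b}
    · obtain ⟨b, hbB, hKS⟩ := h2
      rw [Fmap_eval_single hbB hKS]
      rw [Finset.sum_eq_zero, mul_zero]
      intro x hxS
      refine hg.2.1 _ ?_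
      rintro ⟨-, hcl⟩
      have hds : (K \ S) ∩ S = ∅ := Finset.sdiff_inter_self S K
      obtain ⟨hcl0, hN0⟩ := clique_base hxS hds hcl
      have : G.IsClique ((insert b (K \ S) : Finset V) : Set V) :=
        clique_G_insert hB hbB hds (hBS hbB) hcl0 hN0
      rw [← eq_insert_sdiff hKS] at this
      have hbK : b ∈ K := by
        have : b ∈ K ∩ S := by rw [hKS]; exact Finset.mem_singleton_self b
        exact (Finset.mem_inter.1 this).1
      exact hK ⟨⟨b, hbK⟩, this⟩
    · exact Fmap_eval_zero h1 h2 g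

end Master2

end CMProof

namespace CMProof

section Master3

open Finset

variable {V : Type} [Fintype V] [DecidableEq V]
variable {G : SimpleGraph V} {S B : Finset V} {v : V} {t : ℕ} {g : Finset V → ℝ}

lemma insert_inter_eq {K₀ : Finset V} {b : V} (h0 : K₀ ∩ S = ∅) (hbS : b ∈ S) :
    (insert b K₀) ∩ S = {b} := by
  ext y
  simp only [mem_inter, mem_insert, mem_singleton]
  constructor
  · rintro ⟨rfl | hy, hyS⟩
    · rfl
    · exact absurd hy (not_mem_of_inter_empty h0 hyS)
  · rintro rfl
    exact ⟨Or.inl rfl, hbS⟩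

lemma sum_singleton_biUnion (S W : Finset V) (T : Finset V) (φ : Finset V → ℝ) :
    ∑ K ∈ univ.filter (fun K => T ⊆ K ∧ ∃ b ∈ W, K ∩ S = {b}), φ K
      = ∑ b ∈ W, ∑ K ∈ univ.filter (fun K => T ⊆ K ∧ K ∩ S = {b}), φ K := by
  rw [show univ.filter (fun K => T ⊆ K ∧ ∃ b ∈ W, K ∩ S = {b})
      = W.biUnion (fun b => univ.filter (fun K => T ⊆ K ∧ K ∩ S = {b})) by
    ext K
    simp only [mem_filter, mem_univ, true_and, mem_biUnion]
    tauto]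
  refine Finset.sum_biUnion ?_
  intro b _ b' _ hne
  simp only [Function.onFun]
  rw [Finset.disjoint_left]
  intro K hK hK'
  simp only [mem_filter, mem_univ, true_and] at hK hK'
  apply hne
  have := hK.2 ▸ hK'.2
  exact Finset.singleton_injective this

variable (hBS : B ⊆ S) (hvB : v ∈ B)
  (hInd : ∀ x ∈ S, ∀ y ∈ S, ¬ G.Adj x y)
  (hB : ∀ b ∈ B, ∀ y, G.Adj b y ↔ G.Adj v y)
  (hg : IsFracCover t (rwG G S v) g)

include hg in
lemma g_split (T : Finset V) :
    ∑ K ∈ univ.filter (fun K => T ⊆ K), g K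
      = (∑ K ∈ univ.filter (fun K => T ⊆ K ∧ K ∩ S = ∅), g K)
        + ∑ x ∈ S, ∑ K ∈ univ.filter (fun K => T ⊆ K ∧ K ∩ S = {x}), g K := by
  have h1 : ∑ K ∈ univ.filter (fun K => T ⊆ K ∧ (K ∩ S = ∅ ∨ ∃ x ∈ S, K ∩ S = {x})), g K
      = ∑ K ∈ univ.filter (fun K => T ⊆ K), g K := by
    refine Finset.sum_subset ?_ ?_
    · intro K hK
      simp only [mem_filter, mem_univ, true_and] at hK ⊢
      exact hK.1
    · intro K hK hK'
      simp only [mem_filter, mem_univ, true_and, not_and, not_or] at hK hK'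
      exact g_zero_big hg (hK' hK).1 (hK' hK).2
  rw [← h1]
  rw [show univ.filter (fun K => T ⊆ K ∧ (K ∩ S = ∅ ∨ ∃ x ∈ S, K ∩ S = {x}))
      = univ.filter (fun K => T ⊆ K ∧ K ∩ S = ∅)
        ∪ univ.filter (fun K => T ⊆ K ∧ ∃ x ∈ S, K ∩ S = {x}) by
    ext K
    simp only [mem_filter, mem_univ, true_and, mem_union]
    tauto]
  rw [Finset.sum_union, sum_singleton_biUnion]
  rw [Finset.disjoint_left]
  intro K hK hK'
  simp only [mem_filter, mem_univ, true_and] at hK hK'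
  obtain ⟨x, -, hx⟩ := hK'.2
  rw [hK.2] at hx
  exact Finset.singleton_ne_empty x hx.symm

include hBS hvB in
lemma Fmap_slice (b : V) (hb : b ∈ B) (T : Finset V) (w : ℕ → ℝ) :
    ∑ K ∈ univ.filter (fun K => T ⊆ K ∧ K ∩ S = {b}), w K.card * Fmap B S g K
      = (B.card : ℝ)⁻¹ * ∑ K₀ ∈ univ.filter (fun K₀ => T.erase b ⊆ K₀ ∧ K₀ ∩ S = ∅),
          w (K₀.card + 1) * ∑ x ∈ S, g (insert x K₀) := by
  rw [sum_slice S (hBS hb) T (fun K => w K.card * Fmap B S g K), Finset.mul_sum]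
  refine Finset.sum_congr rfl ?_
  intro K₀ hK₀
  simp only [mem_filter, mem_univ, true_and] at hK₀
  obtain ⟨-, h0⟩ := hK₀
  have hbK₀ : b ∉ K₀ := not_mem_of_inter_empty h0 (hBS hb)
  rw [Fmap_eval_single hb (insert_inter_eq h0 (hBS hb)), insert_sdiff_eq h0 (hBS hb),
    Finset.card_insert_of_notMem hbK₀]
  ring

lemma g_slice (x : V) (hxS : x ∈ S) (T : Finset V) (w : ℕ → ℝ) :
    ∑ K ∈ univ.filter (fun K => T ⊆ K ∧ K ∩ S = {x}), w K.card * g K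
      = ∑ K₀ ∈ univ.filter (fun K₀ => T.erase x ⊆ K₀ ∧ K₀ ∩ S = ∅),
          w (K₀.card + 1) * g (insert x K₀) := by
  rw [sum_slice S hxS T (fun K => w K.card * g K)]
  refine Finset.sum_congr rfl ?_
  intro K₀ hK₀
  simp only [mem_filter, mem_univ, true_and] at hK₀
  rw [Finset.card_insert_of_notMem (not_mem_of_inter_empty hK₀.2 hxS)]

end Master3

end CMProof

namespace CMProof

section Master4

open Finset

variable {V : Type} [Fintype V] [DecidableEq V]
variable {G : SimpleGraph V} {S B : Finset V} {v : V} {t : ℕ} {g : Finset V → ℝ}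

variable (hBS : B ⊆ S) (hvB : v ∈ B)
  (hB : ∀ b ∈ B, ∀ y, G.Adj b y ↔ G.Adj v y)
  (hg : IsFracCover t (rwG G S v) g)

include hBS hvB hB hg in
lemma Fmap_cover_out (T : Finset V) (hTt : T.card = t) (hT : G.IsClique (T : Set V))
    (hTS : T ∩ S = ∅) :
    1 ≤ ∑ K ∈ univ.filter (fun K => T ⊆ K), Fmap B S g K := by
  have hBne : (B.card : ℝ) ≠ 0 := Nat.cast_ne_zero.2 (Finset.card_ne_zero_of_mem hvB)
  have h1 : 1 ≤ ∑ K ∈ univ.filter (fun K => T ⊆ K), g K := hg.2.2 T hTt (clique_rw_out hTS hT)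
  rw [g_split hg T] at h1
  -- the two pieces of the Fmap sum
  have hE0 : ∑ K ∈ univ.filter (fun K => T ⊆ K ∧ K ∩ S = ∅), Fmap B S g K
      = ∑ K ∈ univ.filter (fun K => T ⊆ K ∧ K ∩ S = ∅), g K := by
    refine Finset.sum_congr rfl ?_
    intro K hK
    simp only [mem_filter, mem_univ, true_and] at hK
    exact Fmap_eval_empty hK.2 g
  have hperb : ∀ b ∈ B, (∑ K ∈ univ.filter (fun K => T ⊆ K ∧ K ∩ S = {b}), Fmap B S g K)
      = (B.card : ℝ)⁻¹ * ∑ K₀ ∈ univ.filter (fun K₀ => T ⊆ K₀ ∧ K₀ ∩ S = ∅),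
          ∑ x ∈ S, g (insert x K₀) := by
    intro b hb
    have hbT : b ∉ T := not_mem_of_inter_empty hTS (hBS hb)
    have h2 := Fmap_slice (g := g) hBS hvB b hb T (fun _ => (1 : ℝ))
    simp only [one_mul] at h2
    rwa [Finset.erase_eq_of_notMem hbT] at h2
  have hE1 : ∑ K ∈ univ.filter (fun K => T ⊆ K ∧ ∃ b ∈ B, K ∩ S = {b}), Fmap B S g K
      = ∑ x ∈ S, ∑ K ∈ univ.filter (fun K => T ⊆ K ∧ K ∩ S = {x}), g K := by
    rw [sum_singleton_biUnion, Finset.sum_congr rfl hperb, Finset.sum_const, nsmul_eq_mul,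
      ← mul_assoc, mul_inv_cancel₀ hBne, one_mul, Finset.sum_comm]
    refine Finset.sum_congr rfl ?_
    intro x hxS
    have h3 := g_slice (S := S) (g := g) x hxS T (fun _ => (1 : ℝ))
    simp only [one_mul] at h3
    rw [h3, Finset.erase_eq_of_notMem (not_mem_of_inter_empty hTS hxS)]
  have hsub : (univ.filter (fun K => T ⊆ K ∧ K ∩ S = ∅)
      ∪ univ.filter (fun K => T ⊆ K ∧ ∃ b ∈ B, K ∩ S = {b}))
      ⊆ univ.filter (fun K => T ⊆ K) := by
    intro K hK
    simp only [mem_union, mem_filter, mem_univ, true_and] at hK ⊢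
    tauto
  have hdisj : Disjoint (univ.filter (fun K => T ⊆ K ∧ K ∩ S = ∅))
      (univ.filter (fun K => T ⊆ K ∧ ∃ b ∈ B, K ∩ S = {b})) := by
    rw [Finset.disjoint_left]
    intro K hK hK'
    simp only [mem_filter, mem_univ, true_and] at hK hK'
    obtain ⟨b, -, hb⟩ := hK'.2
    rw [hK.2] at hb
    exact Finset.singleton_ne_empty b hb.symm
  have hmain : (∑ K ∈ univ.filter (fun K => T ⊆ K ∧ K ∩ S = ∅), Fmap B S g K)
      + ∑ K ∈ univ.filter (fun K => T ⊆ K ∧ ∃ b ∈ B, K ∩ S = {b}), Fmap B S g K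
      ≤ ∑ K ∈ univ.filter (fun K => T ⊆ K), Fmap B S g K := by
    rw [← Finset.sum_union hdisj]
    exact Finset.sum_le_sum_of_subset_of_nonneg hsub (fun K _ _ => Fmap_nonneg hg.1 K)
  rw [hE0, hE1] at hmain
  linarith

include hBS hvB hB hg in
lemma Fmap_cover_in (T : Finset V) (hTt : T.card = t) (hT : G.IsClique (T : Set V))
    {b₀ : V} (hb₀ : b₀ ∈ B) (hTS : T ∩ S = {b₀}) :
    (S.card : ℝ) / B.card ≤ ∑ K ∈ univ.filter (fun K => T ⊆ K), Fmap B S g K := by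
  have hb₀S := hBS hb₀
  have hb₀T : b₀ ∈ T := by
    have h2 : b₀ ∈ T ∩ S := by rw [hTS]; exact Finset.mem_singleton_self b₀
    exact (Finset.mem_inter.1 h2).1
  have hTe : (T.erase b₀) ∩ S = ∅ := by
    rw [Finset.eq_empty_iff_forall_notMem]
    intro y hy
    simp only [mem_inter, mem_erase] at hy
    have h2 : y ∈ T ∩ S := Finset.mem_inter.2 ⟨hy.1.2, hy.2⟩
    rw [hTS, Finset.mem_singleton] at h2
    exact hy.1.1 h2
  -- restrict the sum
  have hstep1 : ∑ K ∈ univ.filter (fun K => T ⊆ K ∧ K ∩ S = {b₀}), Fmap B S g K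
      ≤ ∑ K ∈ univ.filter (fun K => T ⊆ K), Fmap B S g K := by
    refine Finset.sum_le_sum_of_subset_of_nonneg ?_ (fun K _ _ => Fmap_nonneg hg.1 K)
    intro K hK
    simp only [mem_filter, mem_univ, true_and] at hK ⊢
    exact hK.1
  have hstep2 := Fmap_slice (g := g) hBS hvB b₀ hb₀ T (fun _ => (1 : ℝ))
  simp only [one_mul] at hstep2
  -- each inner sum is at least 1
  have hper : ∀ x ∈ S, (1 : ℝ) ≤ ∑ K₀ ∈ univ.filter
      (fun K₀ => T.erase b₀ ⊆ K₀ ∧ K₀ ∩ S = ∅), g (insert x K₀) := by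
    intro x hxS
    have hxTe : x ∉ T.erase b₀ := not_mem_of_inter_empty hTe hxS
    have e1 : (insert x (T.erase b₀)).erase x = T.erase b₀ := Finset.erase_insert hxTe
    have hslice := sum_slice S hxS (insert x (T.erase b₀)) g
    rw [e1] at hslice
    rw [← hslice]
    have hfull : ∑ K ∈ univ.filter (fun K => insert x (T.erase b₀) ⊆ K ∧ K ∩ S = {x}), g K
        = ∑ K ∈ univ.filter (fun K => insert x (T.erase b₀) ⊆ K), g K := by
      refine Finset.sum_subset ?_ ?_
      · intro K hK
        simp only [mem_filter, mem_univ, true_and] at hK ⊢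
        exact hK.1
      · intro K hK hK'
        simp only [mem_filter, mem_univ, true_and, not_and] at hK hK'
        have hxK : x ∈ K ∩ S := Finset.mem_inter.2 ⟨hK (Finset.mem_insert_self x _), hxS⟩
        have hne : K ∩ S ≠ {x} := hK' hK
        have : ¬ (K ∩ S ⊆ {x}) := by
          intro hsub'
          rcases Finset.subset_singleton_iff.1 hsub' with h | h
          · rw [h] at hxK; exact absurd hxK (Finset.notMem_empty x)
          · exact hne h
        obtain ⟨y, hy, hyx⟩ := Finset.not_subset.1 this
        rw [Finset.mem_singleton] at hyx
        exact g_zero_two hg (Finset.mem_inter.1 hxK).2 (Finset.mem_inter.1 hy).2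
          (Finset.mem_inter.1 hxK).1 (Finset.mem_inter.1 hy).1 (Ne.symm hyx)
    rw [hfull]
    refine hg.2.2 _ ?_ ?_
    · rw [Finset.card_insert_of_notMem hxTe, Finset.card_erase_of_mem hb₀T, hTt]
      have : 1 ≤ t := by
        rw [← hTt]
        exact Finset.card_pos.2 ⟨b₀, hb₀T⟩
      omega
    · refine clique_rw_insert hxS hTe (hT.subset (Finset.coe_subset.2 (Finset.erase_subset b₀ T))) ?_
      intro y hy
      rw [Finset.mem_erase] at hy
      have hadj : G.Adj b₀ y := hT (Finset.mem_coe.2 hb₀T) (Finset.mem_coe.2 hy.2)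
        (fun h => hy.1 h.symm)
      exact (hB b₀ hb₀ y).1 hadj
  calc (S.card : ℝ) / B.card
      = (B.card : ℝ)⁻¹ * (S.card : ℝ) := by rw [div_eq_mul_inv, mul_comm]
    _ ≤ (B.card : ℝ)⁻¹ * ∑ K₀ ∈ univ.filter (fun K₀ => T.erase b₀ ⊆ K₀ ∧ K₀ ∩ S = ∅),
          ∑ x ∈ S, g (insert x K₀) := by
        refine mul_le_mul_of_nonneg_left ?_ (by positivity)
        rw [Finset.sum_comm]
        calc (S.card : ℝ) = ∑ _x ∈ S, (1 : ℝ) := by rw [Finset.sum_const, nsmul_eq_mul, mul_one]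
          _ ≤ _ := Finset.sum_le_sum hper
    _ = ∑ K ∈ univ.filter (fun K => T ⊆ K ∧ K ∩ S = {b₀}), Fmap B S g K := by
        rw [hstep2]
    _ ≤ _ := hstep1

end Master4

end CMProof

namespace CMProof

section Master5

open Finset

variable {V : Type} [Fintype V] [DecidableEq V]
variable {G : SimpleGraph V} {S B : Finset V} {v : V} {t : ℕ} {g : Finset V → ℝ}

variable (hBS : B ⊆ S) (hvB : v ∈ B)
  (hB : ∀ b ∈ B, ∀ y, G.Adj b y ↔ G.Adj v y)
  (hg : IsFracCover t (rwG G S v) g)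

include hBS hvB hg in
lemma Fmap_cost (c : ℕ → ℝ) (hc : ∀ i, 1 ≤ i → 0 ≤ c i) :
    cliqueCost c (Fmap B S g) ≤ cliqueCost c g := by
  classical
  have hBne : (B.card : ℝ) ≠ 0 := Nat.cast_ne_zero.2 (Finset.card_ne_zero_of_mem hvB)
  unfold cliqueCost
  -- split the LHS sum
  have hL : ∑ K : Finset V, c K.card * Fmap B S g K
      = (∑ K ∈ univ.filter (fun K => (∅ : Finset V) ⊆ K ∧ K ∩ S = ∅), c K.card * g K)
        + ∑ K ∈ univ.filter (fun K => (∅ : Finset V) ⊆ K ∧ ∃ b ∈ B, K ∩ S = {b}),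
            c K.card * Fmap B S g K := by
    have hdisj : Disjoint (univ.filter (fun K => (∅ : Finset V) ⊆ K ∧ K ∩ S = ∅))
        (univ.filter (fun K => (∅ : Finset V) ⊆ K ∧ ∃ b ∈ B, K ∩ S = {b})) := by
      rw [Finset.disjoint_left]
      intro K hK hK'
      simp only [mem_filter, mem_univ, true_and] at hK hK'
      obtain ⟨b, -, hb⟩ := hK'.2
      rw [hK.2] at hb
      exact Finset.singleton_ne_empty b hb.symm
    have hsub : (univ.filter (fun K => (∅ : Finset V) ⊆ K ∧ K ∩ S = ∅)
        ∪ univ.filter (fun K => (∅ : Finset V) ⊆ K ∧ ∃ b ∈ B, K ∩ S = {b}))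
        ⊆ univ := Finset.subset_univ _
    have hzero : ∀ K ∈ univ, K ∉ (univ.filter (fun K => (∅ : Finset V) ⊆ K ∧ K ∩ S = ∅)
        ∪ univ.filter (fun K => (∅ : Finset V) ⊆ K ∧ ∃ b ∈ B, K ∩ S = {b})) →
        c K.card * Fmap B S g K = 0 := by
      intro K _ hK
      simp only [mem_union, mem_filter, mem_univ, true_and, not_or, not_and] at hK
      rw [Fmap_eval_zero (hK.1 (Finset.empty_subset K)) (hK.2 (Finset.empty_subset K)) g,
        mul_zero]
    rw [← Finset.sum_subset hsub hzero, Finset.sum_union hdisj]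
    congr 1
    refine Finset.sum_congr rfl ?_
    intro K hK
    simp only [mem_filter, mem_univ, true_and] at hK
    rw [Fmap_eval_empty hK.2 g]
  rw [hL]
  -- transform the second piece
  have hE1 : ∑ K ∈ univ.filter (fun K => (∅ : Finset V) ⊆ K ∧ ∃ b ∈ B, K ∩ S = {b}),
        c K.card * Fmap B S g K
      = ∑ K ∈ univ.filter (fun K => (∅ : Finset V) ⊆ K ∧ ∃ x ∈ S, K ∩ S = {x}),
          c K.card * g K := by
    rw [sum_singleton_biUnion S B ∅ (fun K => c K.card * Fmap B S g K),
      sum_singleton_biUnion S S ∅ (fun K => c K.card * g K)]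
    have hperb : ∀ b ∈ B, (∑ K ∈ univ.filter (fun K => (∅ : Finset V) ⊆ K ∧ K ∩ S = {b}),
        c K.card * Fmap B S g K)
        = (B.card : ℝ)⁻¹ * ∑ K₀ ∈ univ.filter (fun K₀ => (∅ : Finset V) ⊆ K₀ ∧ K₀ ∩ S = ∅),
            c (K₀.card + 1) * ∑ x ∈ S, g (insert x K₀) := by
      intro b hb
      have h2 := Fmap_slice (g := g) hBS hvB b hb ∅ c
      rwa [Finset.erase_empty] at h2
    have hperx : ∀ x ∈ S, (∑ K ∈ univ.filter (fun K => (∅ : Finset V) ⊆ K ∧ K ∩ S = {x}),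
        c K.card * g K)
        = ∑ K₀ ∈ univ.filter (fun K₀ => (∅ : Finset V) ⊆ K₀ ∧ K₀ ∩ S = ∅),
            c (K₀.card + 1) * g (insert x K₀) := by
      intro x hxS
      have h2 := g_slice (S := S) (g := g) x hxS ∅ c
      rwa [Finset.erase_empty] at h2
    rw [Finset.sum_congr rfl hperb, Finset.sum_congr rfl hperx, Finset.sum_const,
      nsmul_eq_mul, ← mul_assoc, mul_inv_cancel₀ hBne, one_mul]
    simp_rw [Finset.mul_sum]
    rw [Finset.sum_comm]
  rw [hE1, ← Finset.sum_filter_add_sum_filter_not univ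
    (fun K => (∅ : Finset V) ⊆ K ∧ K ∩ S = ∅) (fun K => c K.card * g K)]
  refine add_le_add (le_refl _) ?_
  refine Finset.sum_le_sum_of_subset_of_nonneg ?_ ?_
  · intro K hK
    simp only [mem_filter, mem_univ, true_and] at hK ⊢
    obtain ⟨-, x, -, hx⟩ := hK
    rintro ⟨-, h0⟩
    rw [h0] at hx
    exact Finset.singleton_ne_empty x hx.symm
  · intro K hK _
    simp only [mem_filter, mem_univ, true_and, not_and] at hK
    have h0 : K ∩ S ≠ ∅ := hK (Finset.empty_subset K)
    have hKne : K.Nonempty := by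
      obtain ⟨y, hy⟩ := Finset.nonempty_iff_ne_empty.2 h0
      exact ⟨y, (Finset.mem_inter.1 hy).1⟩
    exact mul_nonneg (hc _ (Finset.card_pos.2 hKne)) (hg.1 K)

end Master5

end CMProof

namespace CMProof

section Theta

open Finset

variable {V : Type} [Fintype V] [DecidableEq V]

lemma exists_cover (t : ℕ) (ht : 0 < t) (G : SimpleGraph V) :
    ∃ f : Finset V → ℝ, IsFracCover t G f := by
  refine ⟨fun K => if IsCliqueOf G K then 1 else 0, fun K => ?_, fun K hK => if_neg hK, ?_⟩
  · dsimp only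
    split_ifs
    · exact zero_le_one
    · exact le_refl 0
  · intro T hTt hT
    have hTc : IsCliqueOf G T := ⟨Finset.card_pos.1 (hTt ▸ ht), hT⟩
    calc (1 : ℝ) = (if IsCliqueOf G T then (1 : ℝ) else 0) := (if_pos hTc).symm
      _ ≤ _ := Finset.single_le_sum
          (f := fun K => if IsCliqueOf G K then (1 : ℝ) else 0)
          (fun K _ => by split_ifs; exacts [zero_le_one, le_refl 0])
          (by simp only [Finset.mem_filter, Finset.mem_univ, true_and]; exact Finset.Subset.refl T)

lemma cost_nonneg {t : ℕ} {G : SimpleGraph V} {f : Finset V → ℝ} (hf : IsFracCover t G f)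
    {c : ℕ → ℝ} (hc : ∀ i, 1 ≤ i → 0 ≤ c i) : 0 ≤ cliqueCost c f := by
  unfold cliqueCost
  refine Finset.sum_nonneg fun K _ => ?_
  by_cases hK : K = ∅
  · subst hK
    rw [hf.2.1 ∅ (fun h => Finset.not_nonempty_empty h.1), mul_zero]
  · exact mul_nonneg (hc _ (Finset.card_pos.2 (Finset.nonempty_iff_ne_empty.2 hK))) (hf.1 K)

lemma theta_le {t : ℕ} {G : SimpleGraph V} {f : Finset V → ℝ} (hf : IsFracCover t G f)
    {c : ℕ → ℝ} (hc : ∀ i, 1 ≤ i → 0 ≤ c i) : thetaFrac t G c ≤ cliqueCost c f := by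
  refine csInf_le ⟨0, ?_⟩ ⟨f, hf, rfl⟩
  rintro x ⟨f', hf', rfl⟩
  exact cost_nonneg hf' hc

lemma exists_near (t : ℕ) (ht : 0 < t) (G : SimpleGraph V) (c : ℕ → ℝ) {ε : ℝ} (hε : 0 < ε) :
    ∃ f : Finset V → ℝ, IsFracCover t G f ∧ cliqueCost c f < thetaFrac t G c + ε := by
  obtain ⟨f₀, hf₀⟩ := exists_cover t ht G
  have hne : { x | ∃ f, IsFracCover t G f ∧ x = cliqueCost c f }.Nonempty :=
    ⟨cliqueCost c f₀, f₀, hf₀, rfl⟩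
  obtain ⟨x, ⟨f, hf, rfl⟩, hlt⟩ := exists_lt_of_csInf_lt hne
    (lt_add_of_pos_right (thetaFrac t G c) hε)
  exact ⟨f, hf, hlt⟩

/-- neighborhood class of a vertex -/
noncomputable def cls (G : SimpleGraph V) (w : V) : Finset V :=
  univ.filter (fun x => G.neighborFinset x = G.neighborFinset w)

lemma mem_cls {G : SimpleGraph V} {w x : V} :
    x ∈ cls G w ↔ G.neighborFinset x = G.neighborFinset w := by
  simp [cls]

lemma theta_le_max (t : ℕ) (ht : 0 < t) (c : ℕ → ℝ) (hc : ∀ i, 1 ≤ i → 0 ≤ c i)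
    (G : SimpleGraph V) (u v : V) (huv : ¬ G.Adj u v)
    (hne : G.neighborFinset u ≠ G.neighborFinset v) :
    thetaFrac t G c ≤ max (thetaFrac t (rwG G (cls G u ∪ cls G v) v) c)
      (thetaFrac t (rwG G (cls G u ∪ cls G v) u) c) := by
  set A := cls G u with hA
  set B := cls G v with hBdef
  set S := A ∪ B with hS
  have hadj_of : ∀ {x w : V}, x ∈ cls G w → ∀ y, G.Adj x y ↔ G.Adj w y := by
    intro x w hx y
    rw [mem_cls] at hx
    constructor <;> intro h
    · rwa [← SimpleGraph.mem_neighborFinset, ← hx, SimpleGraph.mem_neighborFinset]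
    · rwa [← SimpleGraph.mem_neighborFinset, hx, SimpleGraph.mem_neighborFinset]
  have huA : u ∈ A := by rw [hA, mem_cls]
  have hvB : v ∈ B := by rw [hBdef, mem_cls]
  have hASS : A ⊆ S := Finset.subset_union_left
  have hBSS : B ⊆ S := Finset.subset_union_right
  have hBint : ∀ b ∈ B, ∀ y, G.Adj b y ↔ G.Adj v y := fun b hb => hadj_of hb
  have hAint : ∀ a ∈ A, ∀ y, G.Adj a y ↔ G.Adj u y := fun a ha => hadj_of ha
  have hInd : ∀ x ∈ S, ∀ y ∈ S, ¬ G.Adj x y := by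
    intro x hx y hy hxy
    rw [hS, Finset.mem_union] at hx hy
    have h1 : G.Adj u y ∨ G.Adj v y := by
      rcases hx with hx | hx
      · exact Or.inl ((hadj_of hx y).1 hxy)
      · exact Or.inr ((hadj_of hx y).1 hxy)
    have h2 : ∀ w1, G.Adj w1 y → (G.Adj u w1 ∨ G.Adj v w1) := by
      intro w1 hw
      rcases hy with hy | hy
      · exact Or.inl ((hadj_of hy w1).1 hw.symm)
      · exact Or.inr ((hadj_of hy w1).1 hw.symm)
    rcases h1 with h1 | h1 <;> rcases h2 _ h1 with h3 | h3
    · exact G.irrefl h3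
    · exact huv h3.symm
    · exact huv h3
    · exact G.irrefl h3
  have hAB : Disjoint A B := by
    rw [Finset.disjoint_left]
    intro x hxA hxB
    rw [hA, mem_cls] at hxA
    rw [hBdef, mem_cls] at hxB
    exact hne (hxA.symm.trans hxB)
  have hScard : S.card = A.card + B.card := Finset.card_union_of_disjoint hAB
  have hAR : (0 : ℝ) < A.card := by
    exact_mod_cast Finset.card_pos.2 ⟨u, huA⟩
  have hBR : (0 : ℝ) < B.card := by
    exact_mod_cast Finset.card_pos.2 ⟨v, hvB⟩
  have hSR : (0 : ℝ) < S.card := by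
    have : (S.card : ℝ) = (A.card : ℝ) + B.card := by rw [hScard]; push_cast; ring
    linarith
  refine le_of_forall_pos_le_add ?_
  intro ε hε
  obtain ⟨g₁, hg₁, hcost₁⟩ := exists_near t ht (rwG G S v) c hε
  obtain ⟨g₂, hg₂, hcost₂⟩ := exists_near t ht (rwG G S u) c hε
  set M := max (thetaFrac t (rwG G S v) c) (thetaFrac t (rwG G S u) c) with hM
  set lam := (B.card : ℝ) / S.card with hlam
  set mu := (A.card : ℝ) / S.card with hmu
  have hlam0 : 0 ≤ lam := by positivity
  have hmu0 : 0 ≤ mu := by positivity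
  have hlammu : lam + mu = 1 := by
    rw [hlam, hmu, ← add_div]
    rw [div_eq_one_iff_eq (ne_of_gt hSR)]
    rw [hScard]; push_cast; ring
  set f := fun K => lam * Fmap B S g₁ K + mu * Fmap A S g₂ K with hf
  have hcov : IsFracCover t G f := by
    refine ⟨fun K => add_nonneg (mul_nonneg hlam0 (Fmap_nonneg hg₁.1 K))
      (mul_nonneg hmu0 (Fmap_nonneg hg₂.1 K)), fun K hK => ?_, ?_⟩
    · rw [hf]
      dsimp only
      rw [Fmap_zero hBSS hBint hg₁ K hK, Fmap_zero hASS hAint hg₂ K hK, mul_zero, mul_zero,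
        add_zero]
    · intro T hTt hT
      have hsplit : ∑ K ∈ univ.filter (fun K => T ⊆ K), f K
          = lam * (∑ K ∈ univ.filter (fun K => T ⊆ K), Fmap B S g₁ K)
            + mu * ∑ K ∈ univ.filter (fun K => T ⊆ K), Fmap A S g₂ K := by
        rw [hf, Finset.mul_sum, Finset.mul_sum, ← Finset.sum_add_distrib]
      rw [hsplit]
      have hcard : (T ∩ S).card ≤ 1 := by
        by_contra h
        push_neg at h
        obtain ⟨x, hx, y, hy, hxy⟩ := Finset.one_lt_card.1 h
        exact hInd x (Finset.mem_inter.1 hx).2 y (Finset.mem_inter.1 hy).2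
          (hT (Finset.mem_coe.2 (Finset.mem_inter.1 hx).1)
            (Finset.mem_coe.2 (Finset.mem_inter.1 hy).1) hxy)
      by_cases hES : T ∩ S = ∅
      · have hF₁ := Fmap_cover_out hBSS hvB hBint hg₁ T hTt hT hES
        have hF₂ := Fmap_cover_out hASS huA hAint hg₂ T hTt hT hES
        have e1 := mul_le_mul_of_nonneg_left hF₁ hlam0
        have e2 := mul_le_mul_of_nonneg_left hF₂ hmu0
        linarith
      · have hone : (T ∩ S).card = 1 := by
          have : (T ∩ S).Nonempty := Finset.nonempty_iff_ne_empty.2 hES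
          have := Finset.card_pos.2 this
          omega
        obtain ⟨x, hx⟩ := Finset.card_eq_one.1 hone
        have hxS : x ∈ S := by
          have : x ∈ T ∩ S := by rw [hx]; exact Finset.mem_singleton_self x
          exact (Finset.mem_inter.1 this).2
        rw [hS, Finset.mem_union] at hxS
        rcases hxS with hxA | hxB
        · -- covered by the second map with weight mu = |A|/|S| and bound |S|/|A|
          have hF₂ := Fmap_cover_in hASS huA hAint hg₂ T hTt hT hxA hx
          have hF₁ : 0 ≤ ∑ K ∈ univ.filter (fun K => T ⊆ K), Fmap B S g₁ K :=
            Finset.sum_nonneg fun K _ => Fmap_nonneg hg₁.1 K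
          have e2 := mul_le_mul_of_nonneg_left hF₂ hmu0
          have e3 : mu * ((S.card : ℝ) / A.card) = 1 := by
            rw [hmu]
            field_simp
          have e4 := mul_nonneg hlam0 hF₁
          linarith
        · have hF₁ := Fmap_cover_in hBSS hvB hBint hg₁ T hTt hT hxB hx
          have hF₂ : 0 ≤ ∑ K ∈ univ.filter (fun K => T ⊆ K), Fmap A S g₂ K :=
            Finset.sum_nonneg fun K _ => Fmap_nonneg hg₂.1 K
          have e1 := mul_le_mul_of_nonneg_left hF₁ hlam0
          have e3 : lam * ((S.card : ℝ) / B.card) = 1 := by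
            rw [hlam]
            field_simp
          have e4 := mul_nonneg hmu0 hF₂
          linarith
  have hθ : thetaFrac t G c ≤ cliqueCost c f := theta_le hcov hc
  have hcostf : cliqueCost c f = lam * cliqueCost c (Fmap B S g₁)
      + mu * cliqueCost c (Fmap A S g₂) := by
    unfold cliqueCost
    rw [Finset.mul_sum, Finset.mul_sum, ← Finset.sum_add_distrib]
    refine Finset.sum_congr rfl fun K _ => ?_
    rw [hf]
    ring
  have hb₁ : cliqueCost c (Fmap B S g₁) ≤ cliqueCost c g₁ := Fmap_cost hBSS hvB hg₁ c hc
  have hb₂ : cliqueCost c (Fmap A S g₂) ≤ cliqueCost c g₂ := Fmap_cost hASS huA hg₂ c hc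
  have hm₁ : cliqueCost c g₁ < M + ε := lt_of_lt_of_le hcost₁ (by
    have := le_max_left (thetaFrac t (rwG G S v) c) (thetaFrac t (rwG G S u) c)
    rw [hM]; linarith)
  have hm₂ : cliqueCost c g₂ < M + ε := lt_of_lt_of_le hcost₂ (by
    have := le_max_right (thetaFrac t (rwG G S v) c) (thetaFrac t (rwG G S u) c)
    rw [hM]; linarith)
  have hc₁' : lam * cliqueCost c (Fmap B S g₁) ≤ lam * (M + ε) :=
    mul_le_mul_of_nonneg_left (le_of_lt (lt_of_le_of_lt hb₁ hm₁)) hlam0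
  have hc₂' : mu * cliqueCost c (Fmap A S g₂) ≤ mu * (M + ε) :=
    mul_le_mul_of_nonneg_left (le_of_lt (lt_of_le_of_lt hb₂ hm₂)) hmu0
  calc thetaFrac t G c ≤ cliqueCost c f := hθ
    _ = lam * cliqueCost c (Fmap B S g₁) + mu * cliqueCost c (Fmap A S g₂) := hcostf
    _ ≤ lam * (M + ε) + mu * (M + ε) := add_le_add hc₁' hc₂'
    _ = (lam + mu) * (M + ε) := by ring
    _ = M + ε := by rw [hlammu, one_mul]

end Theta

end CMProof

namespace CMProof

section Final

open Finset

variable {V : Type} [Fintype V] [DecidableEq V]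

noncomputable def kcount (G : SimpleGraph V) : ℕ :=
  (univ.image (fun x => G.neighborFinset x)).card

lemma kcount_lt (G : SimpleGraph V) (u v : V)
    (hne : G.neighborFinset u ≠ G.neighborFinset v) :
    kcount (rwG G (cls G u ∪ cls G v) v) < kcount G := by
  classical
  set S := cls G u ∪ cls G v with hS
  set N := fun x => G.neighborFinset x with hN
  set Ψ : Finset V → Finset V := fun M =>
    if M = N u ∨ M = N v then (N v) \ S
    else (M \ S) ∪ (if v ∈ M then S else ∅) with hΨ
  have hmem : ∀ x, x ∈ S ↔ (N x = N u ∨ N x = N v) := by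
    intro x
    rw [hS, Finset.mem_union, mem_cls, mem_cls]
  have key : ∀ x, (rwG G S v).neighborFinset x = Ψ (N x) := by
    intro x
    by_cases hx : x ∈ S
    · rw [hΨ]
      dsimp only
      rw [if_pos ((hmem x).1 hx)]
      ext y
      rw [SimpleGraph.mem_neighborFinset, rwG_adj_in hx, Finset.mem_sdiff, hN]
      dsimp only
      rw [SimpleGraph.mem_neighborFinset]
      tauto
    · rw [hΨ]
      dsimp only
      have hxne : ¬(N x = N u ∨ N x = N v) := fun h => hx ((hmem x).2 h)
      rw [if_neg hxne]
      ext y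
      simp only [hN, SimpleGraph.mem_neighborFinset, rwG_adj, Finset.mem_union, Finset.mem_sdiff]
      by_cases hy : y ∈ S
      · constructor
        · rintro (⟨-, hy', -⟩ | ⟨hx', -, -⟩ | ⟨-, -, hadj⟩)
          · exact absurd hy hy'
          · exact absurd hx' hx
          · exact Or.inr (by rw [if_pos (hadj.symm : G.Adj x v)]; exact hy)
        · rintro (⟨-, hy'⟩ | hy')
          · exact absurd hy hy'
          · by_cases hvx : G.Adj x v
            · rw [if_pos hvx] at hy'
              exact Or.inr (Or.inr ⟨hy, hx, hvx.symm⟩)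
            · rw [if_neg hvx] at hy'
              exact absurd hy' (Finset.notMem_empty y)
      · constructor
        · rintro (⟨-, -, hadj⟩ | ⟨hx', -, -⟩ | ⟨hy', -, -⟩)
          · exact Or.inl ⟨hadj, hy⟩
          · exact absurd hx' hx
          · exact absurd hy' hy
        · rintro (⟨hadj, -⟩ | hy')
          · exact Or.inl ⟨hx, hy, hadj⟩
          · exfalso
            revert hy'
            split_ifs
            · exact fun h => hy h
            · exact fun h => Finset.notMem_empty y h
  have himg : Finset.image (fun x => (rwG G S v).neighborFinset x) univ
      = Finset.image Ψ (Finset.image N univ) := by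
    rw [Finset.image_image]
    exact Finset.image_congr (fun x _ => key x)
  have hcollide : Ψ (N u) = Ψ (N v) := by
    rw [hΨ]
    dsimp only
    rw [if_pos (Or.inl rfl), if_pos (Or.inr rfl)]
  have hNu : N u ∈ Finset.image N univ := Finset.mem_image_of_mem N (Finset.mem_univ u)
  have hNv : N v ∈ Finset.image N univ := Finset.mem_image_of_mem N (Finset.mem_univ v)
  have himg2 : Finset.image Ψ (Finset.image N univ)
      = Finset.image Ψ ((Finset.image N univ).erase (N u)) := by
    apply Finset.Subset.antisymm
    · intro m hm
      obtain ⟨M, hM, rfl⟩ := Finset.mem_image.1 hm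
      by_cases hMu : M = N u
      · subst hMu
        rw [hcollide]
        exact Finset.mem_image_of_mem Ψ (Finset.mem_erase.2 ⟨fun h => hne h.symm, hNv⟩)
      · exact Finset.mem_image_of_mem Ψ (Finset.mem_erase.2 ⟨hMu, hM⟩)
    · exact Finset.image_subset_image (Finset.erase_subset _ _)
  unfold kcount
  calc (univ.image (fun x => (rwG G S v).neighborFinset x)).card
      = (Finset.image Ψ ((Finset.image N univ).erase (N u))).card := by rw [himg, himg2]
    _ ≤ ((Finset.image N univ).erase (N u)).card := Finset.card_image_le
    _ < (Finset.image N univ).card := Finset.card_erase_lt_of_mem hNu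

lemma cm_of_no_bad (G : SimpleGraph V)
    (h : ∀ u v, ¬ G.Adj u v → G.neighborFinset u = G.neighborFinset v) :
    IsCompleteMultipartite G := by
  classical
  refine ⟨fun x => ((Fintype.equivFin (Finset V)) (G.neighborFinset x) : ℕ), ?_⟩
  intro u v
  constructor
  · intro hadj hpe
    have hN : G.neighborFinset u = G.neighborFinset v := by
      apply (Fintype.equivFin (Finset V)).injective
      exact Fin.val_injective hpe
    have h1 : v ∈ G.neighborFinset u := (SimpleGraph.mem_neighborFinset _ _ _).2 hadj
    rw [hN] at h1
    exact G.irrefl ((SimpleGraph.mem_neighborFinset _ _ _).1 h1)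
  · intro hpe
    by_contra hadj
    exact hpe (congrArg (fun M => ((Fintype.equivFin (Finset V)) M : ℕ)) (h u v hadj))

lemma main_aux (t : ℕ) (ht : 0 < t) (c : ℕ → ℝ) (hc : ∀ i, 1 ≤ i → 0 ≤ c i) :
    ∀ (k : ℕ) (G : SimpleGraph V), kcount G ≤ k →
      ∃ H : SimpleGraph V, IsCompleteMultipartite H ∧ thetaFrac t G c ≤ thetaFrac t H c := by
  intro k
  induction k with
  | zero =>
    intro G hG
    by_cases hbad : ∃ u v, ¬ G.Adj u v ∧ G.neighborFinset u ≠ G.neighborFinset v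
    · obtain ⟨u, v, huv, hne⟩ := hbad
      have := kcount_lt G u v hne
      omega
    · push_neg at hbad
      exact ⟨G, cm_of_no_bad G hbad, le_refl _⟩
  | succ k ih =>
    intro G hG
    by_cases hbad : ∃ u v, ¬ G.Adj u v ∧ G.neighborFinset u ≠ G.neighborFinset v
    · obtain ⟨u, v, huv, hne⟩ := hbad
      have h1 := kcount_lt G u v hne
      have h2 := kcount_lt G v u hne.symm
      rw [Finset.union_comm (cls G v) (cls G u)] at h2
      obtain ⟨H₁, hH₁, hle₁⟩ := ih (rwG G (cls G u ∪ cls G v) v) (by omega)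
      obtain ⟨H₂, hH₂, hle₂⟩ := ih (rwG G (cls G u ∪ cls G v) u) (by omega)
      have hmax := theta_le_max t ht c hc G u v huv hne
      by_cases hcmp : thetaFrac t H₁ c ≤ thetaFrac t H₂ c
      · exact ⟨H₂, hH₂, le_trans hmax (max_le (le_trans hle₁ hcmp) hle₂)⟩
      · exact ⟨H₁, hH₁, le_trans hmax (max_le hle₁ (le_trans hle₂ (le_of_not_ge hcmp)))⟩
    · push_neg at hbad
      exact ⟨G, cm_of_no_bad G hbad, le_refl _⟩

end Final

end CMProof

/-- Theorem 1.7 (cover part): the fractional `t`-clique cover number of any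
`n`-vertex graph is at most that of some `n`-vertex complete multipartite graph. -/
theorem stmt2 (n t : ℕ) (ht : 2 ≤ t) (c : ℕ → ℝ) (hc : ∀ i, 1 ≤ i → 0 ≤ c i)
    (G : SimpleGraph (Fin n)) :
    ∃ H : SimpleGraph (Fin n), IsCompleteMultipartite H ∧
      thetaFrac t G c ≤ thetaFrac t H c := by
  classical
  obtain ⟨H, hH, hle⟩ := CMProof.main_aux t (by omega) c hc (CMProof.kcount G) G (le_refl _)
  exact ⟨H, hH, hle⟩
end

section
/- Let G be a simple graph on n vertices, let t ≥ 2 be an integer, and let c = (c_i)_{i≥1} be a cost vector of nonnegative reals. Then there exists a complete multipartite graph H' on n vertices such that π*_t(G, c) ≤ π*_t(H', c). -/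
open scoped Classical
open Finset

namespace S3

variable {n : ℕ}
def twinsP (H : SimpleGraph (Fin n)) (x y : Fin n) : Prop := ∀ z, H.Adj x z ↔ H.Adj y z
lemma twinsP_refl (H : SimpleGraph (Fin n)) (x : Fin n) : twinsP H x x := fun _ => Iff.rfl
lemma twinsP_symm {H : SimpleGraph (Fin n)} {x y : Fin n} (h : twinsP H x y) : twinsP H y x :=
  fun z => (h z).symm
lemma twinsP_trans {H : SimpleGraph (Fin n)} {x y z : Fin n} (h : twinsP H x y)
    (h' : twinsP H y z) : twinsP H x z := fun w => (h w).trans (h' w)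
noncomputable def cls (H : SimpleGraph (Fin n)) (x : Fin n) : ℕ :=
  (Finset.univ.filter (fun y => twinsP H x y)).card
noncomputable def Phi (H : SimpleGraph (Fin n)) : ℕ := ∑ x, cls H x
def clone (H : SimpleGraph (Fin n)) (u v : Fin n) : SimpleGraph (Fin n) where
  Adj x y := if x = v then (H.Adj u y ∧ y ≠ v) else if y = v then (H.Adj x u ∧ x ≠ v) else H.Adj x y
  symm := by
    constructor
    intro x y h
    by_cases hx : x = v <;> by_cases hy : y = v <;>
      simp only [hx, hy, if_pos, if_neg, ite_true, ite_false] at h ⊢ <;>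
      simp_all [SimpleGraph.adj_comm]
  loopless := by
    constructor
    intro x h
    by_cases hx : x = v <;> simp only [hx, ite_true, ite_false, if_neg] at h <;> simp_all
lemma clone_adj_of_ne {H : SimpleGraph (Fin n)} {u v x y : Fin n} (hx : x ≠ v) (hy : y ≠ v) :
    (clone H u v).Adj x y ↔ H.Adj x y := by
  simp [clone, hx, hy, SimpleGraph.Adj]
lemma clone_adj_right_v {H : SimpleGraph (Fin n)} {u v x : Fin n} :
    (clone H u v).Adj x v ↔ (H.Adj x u ∧ x ≠ v) := by
  by_cases hx : x = v
  · subst hx; simp [clone, SimpleGraph.Adj]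
  · simp [clone, hx, SimpleGraph.Adj]
lemma clone_adj_left_v {H : SimpleGraph (Fin n)} {u v y : Fin n} :
    (clone H u v).Adj v y ↔ (H.Adj u y ∧ y ≠ v) := by
  simp [clone, SimpleGraph.Adj]
lemma twins_clone_of_twins {H : SimpleGraph (Fin n)} {u v x y : Fin n}
    (hx : x ≠ v) (hy : y ≠ v) (h : twinsP H x y) : twinsP (clone H u v) x y := by
  intro z
  by_cases hz : z = v
  · rw [hz, clone_adj_right_v, clone_adj_right_v]
    constructor
    · rintro ⟨ha, _⟩; exact ⟨((h u).mp ha), hy⟩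
    · rintro ⟨ha, _⟩; exact ⟨((h u).mpr ha), hx⟩
  · rw [clone_adj_of_ne hx hz, clone_adj_of_ne hy hz]; exact h z
lemma twins_clone_u_v {H : SimpleGraph (Fin n)} {u v : Fin n} (huv : u ≠ v) :
    twinsP (clone H u v) v u := by
  intro z
  by_cases hz : z = v
  · rw [hz]; simp [clone_adj_right_v]
  · rw [clone_adj_left_v, clone_adj_of_ne huv hz]
    constructor
    · rintro ⟨h, _⟩; exact h
    · intro h; exact ⟨h, hz⟩

lemma cls_eq_of_twins {H : SimpleGraph (Fin n)} {x y : Fin n} (h : twinsP H x y) :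
    cls H x = cls H y := by
  unfold cls
  congr 1
  apply Finset.filter_congr
  intro z _
  constructor
  · intro hz; exact twinsP_trans (twinsP_symm h) hz
  · intro hz; exact twinsP_trans h hz

lemma cls_pos (H : SimpleGraph (Fin n)) (x : Fin n) : 1 ≤ cls H x := by
  have : x ∈ Finset.univ.filter (fun y => twinsP H x y) := by
    simp [twinsP_refl]
  exact Finset.card_pos.mpr ⟨x, this⟩

/-- Main potential lemma: cloning `v` onto `u` (with `cls H v ≤ cls H u`,
`u,v` non-twins) increases `Phi` by at least 2. -/
lemma Phi_lt_Phi_clone {H : SimpleGraph (Fin n)} {u v : Fin n} (hne : u ≠ v)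
    (hntw : ¬ twinsP H u v) (hcl : cls H v ≤ cls H u) :
    Phi H + 2 ≤ Phi (clone H u v) := by
  set Cu := Finset.univ.filter (fun y => twinsP H u y) with hCu
  set Cv := Finset.univ.filter (fun y => twinsP H v y) with hCv
  have hvCu : v ∉ Cu := by simp [hCu, hntw]
  have hvCv : v ∈ Cv := by simp [hCv, twinsP_refl]
  set A : Finset (Fin n) := insert v Cu with hA
  set B : Finset (Fin n) := Cv.erase v with hB
  -- members of A are mutual clone-twins
  have hvA : ∀ a ∈ A, twinsP (clone H u v) v a := by
    intro a ha
    rcases Finset.mem_insert.mp ha with h | h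
    · rw [h]; exact twinsP_refl _ _
    · have htw : twinsP H u a := by simpa [hCu] using h
      have hav : a ≠ v := by rintro rfl; exact hntw htw
      exact twinsP_trans (twins_clone_u_v hne) (twins_clone_of_twins hne hav htw)
  -- lower bounds on cls of clone
  have lbA : ∀ x ∈ A, cls H u + 1 ≤ cls (clone H u v) x := by
    intro x hx
    have hsub : A ⊆ Finset.univ.filter (fun y => twinsP (clone H u v) x y) := by
      intro y hy
      simp only [Finset.mem_filter, Finset.mem_univ, true_and]
      exact twinsP_trans (twinsP_symm (hvA x hx)) (hvA y hy)
    have hcard : A.card = cls H u + 1 := by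
      rw [hA, Finset.card_insert_of_notMem hvCu]
      rfl
    calc cls H u + 1 = A.card := hcard.symm
    _ ≤ _ := Finset.card_le_card hsub
    _ = cls (clone H u v) x := rfl
  have lbB : ∀ x ∈ B, cls H v - 1 ≤ cls (clone H u v) x := by
    intro x hx
    have hxv : x ≠ v := (Finset.mem_erase.mp hx).1
    have hxtw : twinsP H v x := by
      have := (Finset.mem_erase.mp hx).2; simpa [hCv] using this
    have hsub : B ⊆ Finset.univ.filter (fun y => twinsP (clone H u v) x y) := by
      intro y hy
      have hyv : y ≠ v := (Finset.mem_erase.mp hy).1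
      have hytw : twinsP H v y := by
        have := (Finset.mem_erase.mp hy).2; simpa [hCv] using this
      simp only [Finset.mem_filter, Finset.mem_univ, true_and]
      exact twins_clone_of_twins hxv hyv (twinsP_trans (twinsP_symm hxtw) hytw)
    have hcard : B.card = cls H v - 1 := by
      rw [hB, Finset.card_erase_of_mem hvCv]; rfl
    calc cls H v - 1 = B.card := hcard.symm
    _ ≤ _ := Finset.card_le_card hsub
    _ = cls (clone H u v) x := rfl
  have lbC : ∀ x, x ∉ A → x ∉ B → cls H x ≤ cls (clone H u v) x := by
    intro x hxA hxB
    have hxv : x ≠ v := by rintro rfl; exact hxA (Finset.mem_insert_self _ _)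
    have hxtwv : ¬ twinsP H v x := by
      intro h
      exact hxB (Finset.mem_erase.mpr ⟨hxv, by simp [hCv, h]⟩)
    have hsub : Finset.univ.filter (fun y => twinsP H x y) ⊆
        Finset.univ.filter (fun y => twinsP (clone H u v) x y) := by
      intro y hy
      have hytw : twinsP H x y := by simpa using hy
      have hyv : y ≠ v := by
        rintro rfl
        exact hxtwv (twinsP_symm hytw)
      simp only [Finset.mem_filter, Finset.mem_univ, true_and]
      exact twins_clone_of_twins hxv hyv hytw
    exact Finset.card_le_card hsub
  -- disjointness
  have hdisj : Disjoint A B := by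
    rw [Finset.disjoint_left]
    intro x hxA hxB
    rcases Finset.mem_insert.mp hxA with h | h
    · exact (Finset.mem_erase.mp hxB).1 h
    · have h1 : twinsP H u x := by simpa [hCu] using h
      have h2 : twinsP H v x := by
        have := (Finset.mem_erase.mp hxB).2; simpa [hCv] using this
      exact hntw (twinsP_trans h1 (twinsP_symm h2))
  -- sums over A and B
  have sumA_cls : ∑ x ∈ A, cls H x = cls H u * cls H u + cls H v := by
    rw [hA, Finset.sum_insert hvCu]
    have : ∀ x ∈ Cu, cls H x = cls H u := by
      intro x hx
      exact (cls_eq_of_twins (by simpa [hCu] using hx)).symm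
    rw [Finset.sum_congr rfl this, Finset.sum_const, smul_eq_mul]
    have : Cu.card = cls H u := rfl
    rw [this]
    have : cls H v = cls H v := rfl
    ring
  have sumB_cls : ∑ x ∈ B, cls H x = (cls H v - 1) * cls H v := by
    have : ∀ x ∈ B, cls H x = cls H v := by
      intro x hx
      have := (Finset.mem_erase.mp hx).2
      exact (cls_eq_of_twins (by simpa [hCv] using this)).symm
    rw [Finset.sum_congr rfl this, Finset.sum_const, smul_eq_mul]
    have hcard : B.card = cls H v - 1 := by rw [hB, Finset.card_erase_of_mem hvCv]; rfl
    rw [hcard]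
  -- totals
  have hsplit : ∀ g : Fin n → ℕ, ∑ x, g x = ∑ x ∈ A, g x + ∑ x ∈ B, g x
      + ∑ x ∈ (Finset.univ \ (A ∪ B)), g x := by
    intro g
    rw [← Finset.sum_union hdisj, ← Finset.sum_union (Finset.sdiff_disjoint.symm)]
    congr 1
    rw [Finset.union_sdiff_of_subset (Finset.subset_univ _)]
  have h1 : Phi (clone H u v) ≥ A.card * (cls H u + 1) + B.card * (cls H v - 1)
      + ∑ x ∈ (Finset.univ \ (A ∪ B)), cls H x := by
    rw [Phi, hsplit (fun x => cls (clone H u v) x)]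
    gcongr ?_ + ?_ + ?_
    · calc A.card * (cls H u + 1) = ∑ _x ∈ A, (cls H u + 1) := by
            rw [Finset.sum_const, smul_eq_mul]
      _ ≤ _ := Finset.sum_le_sum lbA
    · calc B.card * (cls H v - 1) = ∑ _x ∈ B, (cls H v - 1) := by
            rw [Finset.sum_const, smul_eq_mul]
      _ ≤ _ := Finset.sum_le_sum lbB
    · apply Finset.sum_le_sum
      intro x hx
      have hx' := Finset.mem_sdiff.mp hx
      have hxA : x ∉ A := fun h => hx'.2 (Finset.mem_union_left _ h)
      have hxB : x ∉ B := fun h => hx'.2 (Finset.mem_union_right _ h)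
      exact lbC x hxA hxB
  have h2 : Phi H = cls H u * cls H u + cls H v + (cls H v - 1) * cls H v
      + ∑ x ∈ (Finset.univ \ (A ∪ B)), cls H x := by
    rw [Phi, hsplit (fun x => cls H x), sumA_cls, sumB_cls]
  have hcardA : A.card = cls H u + 1 := by
    rw [hA, Finset.card_insert_of_notMem hvCu]; rfl
  have hcardB : B.card = cls H v - 1 := by rw [hB, Finset.card_erase_of_mem hvCv]; rfl
  rw [hcardA, hcardB] at h1
  have hav : 1 ≤ cls H v := cls_pos H v
  obtain ⟨a', ha'⟩ := Nat.exists_eq_add_of_le hav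
  rw [ha'] at h1 h2 hcl
  simp only [Nat.add_sub_cancel_left] at h1 h2
  rw [h2]
  nlinarith [h1, hcl]

lemma cls_le (H : SimpleGraph (Fin n)) (x : Fin n) : cls H x ≤ n := by
  classical
  have := Finset.card_filter_le (Finset.univ : Finset (Fin n)) (fun y => twinsP H x y)
  simpa [cls] using this

lemma Phi_le (H : SimpleGraph (Fin n)) : Phi H ≤ n * n := by
  classical
  calc Phi H ≤ ∑ _x : Fin n, n := Finset.sum_le_sum (fun x _ => cls_le H x)
  _ = n * n := by simp [mul_comm]


/-! ### Clique correspondence for the clone -/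

lemma clique_clone_iff_of_not_mem {H : SimpleGraph (Fin n)} {u v : Fin n} {K : Finset (Fin n)}
    (hv : v ∉ K) :
    (clone H u v).IsClique (K : Set (Fin n)) ↔ H.IsClique (K : Set (Fin n)) := by
  constructor <;> intro h x hx y hy hxy
  · have hxv : x ≠ v := ne_of_mem_of_not_mem (Finset.mem_coe.mp hx) hv
    have hyv : y ≠ v := ne_of_mem_of_not_mem (Finset.mem_coe.mp hy) hv
    exact (clone_adj_of_ne hxv hyv).mp (h hx hy hxy)
  · have hxv : x ≠ v := ne_of_mem_of_not_mem (Finset.mem_coe.mp hx) hv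
    have hyv : y ≠ v := ne_of_mem_of_not_mem (Finset.mem_coe.mp hy) hv
    exact (clone_adj_of_ne hxv hyv).mpr (h hx hy hxy)

lemma not_mem_swap_self {u v : Fin n} {K : Finset (Fin n)} (hne : u ≠ v) :
    v ∉ insert u (K.erase v) := by
  simp [Finset.mem_insert, Finset.mem_erase, hne.symm]

lemma card_swap {u v : Fin n} {K : Finset (Fin n)} (hv : v ∈ K) (hu : u ∉ K) :
    (insert u (K.erase v)).card = K.card := by
  rw [Finset.card_insert_of_notMem (fun h => hu (Finset.mem_of_mem_erase h)),
    Finset.card_erase_of_mem hv]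
  have : 1 ≤ K.card := Finset.card_pos.mpr ⟨v, hv⟩
  omega

lemma swap_swap {u v : Fin n} {T : Finset (Fin n)} (hv : v ∈ T) (hu : u ∉ T) :
    insert v ((insert u (T.erase v)).erase u) = T := by
  rw [Finset.erase_insert (fun h => hu (Finset.mem_of_mem_erase h)), Finset.insert_erase hv]

lemma clique_clone_swap {H : SimpleGraph (Fin n)} {u v : Fin n} {K : Finset (Fin n)}
    (hu : ¬ H.Adj u v) (hne : u ≠ v) (hv : v ∈ K)
    (h : (clone H u v).IsClique (K : Set (Fin n))) :
    u ∉ K ∧ H.IsClique ((insert u (K.erase v) : Finset (Fin n)) : Set (Fin n)) := by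
  have huK : u ∉ K := by
    intro huK
    have hadj : (clone H u v).Adj u v := h (Finset.mem_coe.mpr huK) (Finset.mem_coe.mpr hv) hne
    rcases clone_adj_right_v.mp hadj with ⟨h1, _⟩
    exact H.irrefl h1
  refine ⟨huK, ?_⟩
  intro x hx y hy hxy
  have hx' := Finset.mem_coe.mp hx
  have hy' := Finset.mem_coe.mp hy
  rcases Finset.mem_insert.mp hx' with hh | hxK
  · rcases Finset.mem_insert.mp hy' with hh2 | hyK
    · exact absurd (hh.trans hh2.symm) hxy
    · rw [hh]
      have hyKK : y ∈ K := Finset.mem_of_mem_erase hyK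
      have hyv : y ≠ v := (Finset.mem_erase.mp hyK).1
      have hadj : (clone H u v).Adj v y :=
        h (Finset.mem_coe.mpr hv) (Finset.mem_coe.mpr hyKK) (Ne.symm hyv)
      exact (clone_adj_left_v.mp hadj).1
  · rcases Finset.mem_insert.mp hy' with hh2 | hyK
    · rw [hh2]
      have hxKK : x ∈ K := Finset.mem_of_mem_erase hxK
      have hxv : x ≠ v := (Finset.mem_erase.mp hxK).1
      have hadj : (clone H u v).Adj v x :=
        h (Finset.mem_coe.mpr hv) (Finset.mem_coe.mpr hxKK) (Ne.symm hxv)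
      exact ((clone_adj_left_v.mp hadj).1).symm
    · have hxv : x ≠ v := (Finset.mem_erase.mp hxK).1
      have hyv : y ≠ v := (Finset.mem_erase.mp hyK).1
      have hadj := h (Finset.mem_coe.mpr (Finset.mem_of_mem_erase hxK))
        (Finset.mem_coe.mpr (Finset.mem_of_mem_erase hyK)) hxy
      exact (clone_adj_of_ne hxv hyv).mp hadj

lemma clique_swap_clone {H : SimpleGraph (Fin n)} {u v : Fin n} {S : Finset (Fin n)}
    (hu : ¬ H.Adj u v) (hne : u ≠ v) (huS : u ∈ S) (h : H.IsClique (S : Set (Fin n))) :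
    v ∉ S ∧ (clone H u v).IsClique ((insert v (S.erase u) : Finset (Fin n)) : Set (Fin n)) := by
  have hvS : v ∉ S := by
    intro hvS
    exact hu (h (Finset.mem_coe.mpr huS) (Finset.mem_coe.mpr hvS) hne)
  refine ⟨hvS, ?_⟩
  intro x hx y hy hxy
  have hx' := Finset.mem_coe.mp hx
  have hy' := Finset.mem_coe.mp hy
  rcases Finset.mem_insert.mp hx' with hh | hxS
  · rcases Finset.mem_insert.mp hy' with hh2 | hyS
    · exact absurd (hh.trans hh2.symm) hxy
    · rw [hh]
      have hyu : y ≠ u := (Finset.mem_erase.mp hyS).1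
      have hyS' : y ∈ S := Finset.mem_of_mem_erase hyS
      have hyv : y ≠ v := ne_of_mem_of_not_mem hyS' hvS
      rw [clone_adj_left_v]
      exact ⟨h (Finset.mem_coe.mpr huS) (Finset.mem_coe.mpr hyS') (Ne.symm hyu), hyv⟩
  · rcases Finset.mem_insert.mp hy' with hh2 | hyS
    · rw [hh2]
      have hxu : x ≠ u := (Finset.mem_erase.mp hxS).1
      have hxS' : x ∈ S := Finset.mem_of_mem_erase hxS
      have hxv : x ≠ v := ne_of_mem_of_not_mem hxS' hvS
      rw [clone_adj_right_v]
      exact ⟨h (Finset.mem_coe.mpr hxS') (Finset.mem_coe.mpr huS) hxu, hxv⟩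
    · have hxv : x ≠ v := ne_of_mem_of_not_mem (Finset.mem_of_mem_erase hxS) hvS
      have hyv : y ≠ v := ne_of_mem_of_not_mem (Finset.mem_of_mem_erase hyS) hvS
      rw [clone_adj_of_ne hxv hyv]
      exact h (Finset.mem_coe.mpr (Finset.mem_of_mem_erase hxS))
        (Finset.mem_coe.mpr (Finset.mem_of_mem_erase hyS)) hxy


/-! ### The dual LP region and transfer under cloning -/

def region (t : ℕ) (c : ℕ → ℝ) (B : ℝ) (H : SimpleGraph (Fin n)) :
    Set (Finset (Fin n) → ℝ) :=
  {y | (∀ T : Finset (Fin n), ¬(T.card = t ∧ H.IsClique (T : Set (Fin n))) → y T = 0) ∧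
    (∀ T, -B ≤ y T) ∧
    ∀ K, IsCliqueOf H K →
      ∑ T ∈ Finset.univ.filter (fun T : Finset (Fin n) => T ⊆ K ∧ T.card = t), y T ≤ c K.card}

noncomputable def dval (y : Finset (Fin n) → ℝ) : ℝ := ∑ T, y T

noncomputable def Dfun (y : Finset (Fin n) → ℝ) (x : Fin n) : ℝ :=
  ∑ T ∈ Finset.univ.filter (fun T : Finset (Fin n) => x ∈ T), y T

noncomputable def cloneDual (u v : Fin n) (y : Finset (Fin n) → ℝ) : Finset (Fin n) → ℝ :=
  fun T => if v ∈ T then (if u ∈ T then 0 else y (insert u (T.erase v))) else y T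

lemma region_zero_of_pair {t : ℕ} {c : ℕ → ℝ} {B : ℝ} {H : SimpleGraph (Fin n)}
    {y : Finset (Fin n) → ℝ} {u v : Fin n} {S : Finset (Fin n)}
    (hy : y ∈ region t c B H) (hu : ¬ H.Adj u v) (hne : u ≠ v)
    (huS : u ∈ S) (hvS : v ∈ S) : y S = 0 := by
  apply hy.1
  rintro ⟨-, hcl⟩
  exact hu (hcl (Finset.mem_coe.mpr huS) (Finset.mem_coe.mpr hvS) hne)

lemma cloneDual_mem_region {t : ℕ} {c : ℕ → ℝ} {B : ℝ} {H : SimpleGraph (Fin n)}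
    {y : Finset (Fin n) → ℝ} {u v : Fin n}
    (hy : y ∈ region t c B H) (hu : ¬ H.Adj u v) (hne : u ≠ v) (hB : 0 ≤ B) :
    cloneDual u v y ∈ region t c B (clone H u v) := by
  obtain ⟨hsupp, hlb, hcons⟩ := hy
  refine ⟨?_, ?_, ?_⟩
  · -- support
    intro T hT
    by_cases hvT : v ∈ T
    · by_cases huT : u ∈ T
      · simp [cloneDual, hvT, huT]
      · simp only [cloneDual, hvT, huT, if_true, if_false, ite_true, ite_false]
        apply hsupp
        rintro ⟨hcard, hclq⟩
        have huS : u ∈ insert u (T.erase v) := Finset.mem_insert_self _ _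
        obtain ⟨-, hc2⟩ := clique_swap_clone hu hne huS hclq
        rw [swap_swap hvT huT] at hc2
        exact hT ⟨by rw [← card_swap hvT huT]; exact hcard, hc2⟩
    · simp only [cloneDual, hvT, ite_false]
      apply hsupp
      rintro ⟨hcard, hclq⟩
      exact hT ⟨hcard, (clique_clone_iff_of_not_mem hvT).mpr hclq⟩
  · -- lower bound
    intro T
    by_cases hvT : v ∈ T
    · by_cases huT : u ∈ T
      · simp only [cloneDual, hvT, huT, ite_true]
        linarith
      · simp only [cloneDual, hvT, huT, ite_true, ite_false]
        exact hlb _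
    · simp only [cloneDual, hvT, ite_false]
      exact hlb _
  · -- constraints
    rintro K ⟨hKne, hKcl⟩
    by_cases hvK : v ∈ K
    · obtain ⟨huK, hScl⟩ := clique_clone_swap hu hne hvK hKcl
      have hvS : v ∉ insert u (K.erase v) := not_mem_swap_self hne
      have hSK : (insert u (K.erase v)).erase u = K.erase v :=
        Finset.erase_insert (fun h => huK (Finset.mem_of_mem_erase h))
      have key : ∑ T ∈ Finset.univ.filter (fun T : Finset (Fin n) => T ⊆ K ∧ T.card = t),
          cloneDual u v y T
          = ∑ T ∈ Finset.univ.filter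
              (fun T : Finset (Fin n) => T ⊆ insert u (K.erase v) ∧ T.card = t), y T := by
        rw [← Finset.sum_filter_add_sum_filter_not
          (Finset.univ.filter (fun T : Finset (Fin n) => T ⊆ K ∧ T.card = t)) (fun T => v ∈ T),
          ← Finset.sum_filter_add_sum_filter_not
          (Finset.univ.filter (fun T : Finset (Fin n) =>
            T ⊆ insert u (K.erase v) ∧ T.card = t)) (fun T => u ∈ T)]
        congr 1
        · -- pieces containing v resp. u
          simp only [Finset.filter_filter]
          refine Finset.sum_nbij' (i := fun T => insert u (T.erase v))
            (j := fun T => insert v (T.erase u)) ?_ ?_ ?_ ?_ ?_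
          · intro T hT
            simp only [Finset.mem_filter, Finset.mem_univ, true_and] at hT ⊢
            obtain ⟨⟨hTK, hTc⟩, hvT⟩ := hT
            have huT : u ∉ T := fun h => huK (hTK h)
            exact ⟨⟨Finset.insert_subset_insert u (Finset.erase_subset_erase v hTK),
              by rw [card_swap hvT huT]; exact hTc⟩, Finset.mem_insert_self _ _⟩
          · intro T hT
            simp only [Finset.mem_filter, Finset.mem_univ, true_and] at hT ⊢
            obtain ⟨⟨hTS, hTc⟩, huT⟩ := hT
            have hvT : v ∉ T := fun h => hvS (hTS h)
            refine ⟨⟨?_, by rw [card_swap huT hvT]; exact hTc⟩, Finset.mem_insert_self _ _⟩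
            intro x hx
            rcases Finset.mem_insert.mp hx with hh | hx'
            · rw [hh]; exact hvK
            · have hxe : x ∈ (insert u (K.erase v)).erase u := Finset.mem_erase.mpr
                ⟨(Finset.mem_erase.mp hx').1, hTS (Finset.mem_of_mem_erase hx')⟩
              rw [hSK] at hxe
              exact Finset.mem_of_mem_erase hxe
          · intro T hT
            simp only [Finset.mem_filter, Finset.mem_univ, true_and] at hT
            obtain ⟨⟨hTK, _⟩, hvT⟩ := hT
            exact swap_swap hvT (fun h => huK (hTK h))
          · intro T hT
            simp only [Finset.mem_filter, Finset.mem_univ, true_and] at hT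
            obtain ⟨⟨hTS, _⟩, huT⟩ := hT
            exact swap_swap huT (fun h => hvS (hTS h))
          · intro T hT
            simp only [Finset.mem_filter, Finset.mem_univ, true_and] at hT
            obtain ⟨⟨hTK, _⟩, hvT⟩ := hT
            have huT : u ∉ T := fun h => huK (hTK h)
            simp [cloneDual, hvT, huT]
        · -- pieces avoiding v resp. u
          simp only [Finset.filter_filter]
          have hset : Finset.univ.filter (fun T : Finset (Fin n) => (T ⊆ K ∧ T.card = t) ∧ v ∉ T)
              = Finset.univ.filter (fun T : Finset (Fin n) =>
                  (T ⊆ insert u (K.erase v) ∧ T.card = t) ∧ u ∉ T) := by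
            apply Finset.filter_congr
            intro T _
            constructor
            · rintro ⟨⟨hTK, hTc⟩, hvT⟩
              refine ⟨⟨(Finset.subset_erase.mpr ⟨hTK, hvT⟩).trans (Finset.subset_insert _ _),
                hTc⟩, fun h => huK (hTK h)⟩
            · rintro ⟨⟨hTS, hTc⟩, huT⟩
              have hTK : T ⊆ K := by
                intro x hx
                have hxe : x ∈ (insert u (K.erase v)).erase u := Finset.mem_erase.mpr
                  ⟨ne_of_mem_of_not_mem hx huT, hTS hx⟩
                rw [hSK] at hxe
                exact Finset.mem_of_mem_erase hxe
              exact ⟨⟨hTK, hTc⟩, fun h => hvS (hTS h)⟩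
          rw [hset]
          apply Finset.sum_congr rfl
          intro T hT
          simp only [Finset.mem_filter, Finset.mem_univ, true_and] at hT
          have hvT : v ∉ T := fun h => hvS (hT.1.1 h)
          simp [cloneDual, hvT]
      rw [key]
      have hcardS : (insert u (K.erase v)).card = K.card := card_swap hvK huK
      have := hcons (insert u (K.erase v)) ⟨⟨u, Finset.mem_insert_self _ _⟩, hScl⟩
      rwa [hcardS] at this
    · have : ∀ T ∈ Finset.univ.filter (fun T : Finset (Fin n) => T ⊆ K ∧ T.card = t),
          cloneDual u v y T = y T := by
        intro T hT
        simp only [Finset.mem_filter, Finset.mem_univ, true_and] at hT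
        have hvT : v ∉ T := fun h => hvK (hT.1 h)
        simp [cloneDual, hvT]
      rw [Finset.sum_congr rfl this]
      exact hcons K ⟨hKne, (clique_clone_iff_of_not_mem hvK).mp hKcl⟩

lemma cloneDual_dval {t : ℕ} {c : ℕ → ℝ} {B : ℝ} {H : SimpleGraph (Fin n)}
    {y : Finset (Fin n) → ℝ} {u v : Fin n}
    (hy : y ∈ region t c B H) (hu : ¬ H.Adj u v) (hne : u ≠ v) :
    dval (cloneDual u v y) = dval y - Dfun y v + Dfun y u := by
  classical
  have hsplit := Finset.sum_filter_add_sum_filter_not (Finset.univ : Finset (Finset (Fin n)))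
    (fun T => v ∈ T) (cloneDual u v y)
  have h2 : ∑ T ∈ Finset.univ.filter (fun T : Finset (Fin n) => ¬ v ∈ T), cloneDual u v y T
      = ∑ T ∈ Finset.univ.filter (fun T : Finset (Fin n) => ¬ v ∈ T), y T := by
    apply Finset.sum_congr rfl
    intro T hT
    simp only [Finset.mem_filter, Finset.mem_univ, true_and] at hT
    simp [cloneDual, hT]
  have h3 : ∑ T ∈ Finset.univ.filter (fun T : Finset (Fin n) => v ∈ T), cloneDual u v y T
      = ∑ T ∈ Finset.univ.filter (fun T : Finset (Fin n) => v ∈ T ∧ u ∉ T),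
          y (insert u (T.erase v)) := by
    rw [← Finset.sum_filter_add_sum_filter_not
      (Finset.univ.filter (fun T : Finset (Fin n) => v ∈ T)) (fun T => u ∈ T)]
    have hz : ∑ T ∈ (Finset.univ.filter (fun T : Finset (Fin n) => v ∈ T)).filter
        (fun T => u ∈ T), cloneDual u v y T = 0 := by
      apply Finset.sum_eq_zero
      intro T hT
      simp only [Finset.mem_filter, Finset.mem_univ, true_and] at hT
      simp [cloneDual, hT.1, hT.2]
    rw [hz, zero_add, Finset.filter_filter]
    apply Finset.sum_congr rfl
    intro T hT
    simp only [Finset.mem_filter, Finset.mem_univ, true_and] at hT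
    simp [cloneDual, hT.1, hT.2]
  have h4 : ∑ T ∈ Finset.univ.filter (fun T : Finset (Fin n) => v ∈ T ∧ u ∉ T),
        y (insert u (T.erase v))
      = ∑ T ∈ Finset.univ.filter (fun T : Finset (Fin n) => u ∈ T ∧ v ∉ T), y T := by
    refine Finset.sum_nbij' (i := fun T => insert u (T.erase v))
      (j := fun T => insert v (T.erase u)) ?_ ?_ ?_ ?_ ?_
    · intro T hT
      simp only [Finset.mem_filter, Finset.mem_univ, true_and] at hT ⊢
      exact ⟨Finset.mem_insert_self _ _, not_mem_swap_self hne⟩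
    · intro T hT
      simp only [Finset.mem_filter, Finset.mem_univ, true_and] at hT ⊢
      exact ⟨Finset.mem_insert_self _ _, not_mem_swap_self hne.symm⟩
    · intro T hT
      simp only [Finset.mem_filter, Finset.mem_univ, true_and] at hT
      exact swap_swap hT.1 hT.2
    · intro T hT
      simp only [Finset.mem_filter, Finset.mem_univ, true_and] at hT
      exact swap_swap hT.1 hT.2
    · intro T hT
      rfl
  have h5 : Dfun y u = ∑ T ∈ Finset.univ.filter (fun T : Finset (Fin n) => u ∈ T ∧ v ∉ T),
      y T := by
    rw [Dfun, ← Finset.sum_filter_add_sum_filter_not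
      (Finset.univ.filter (fun T : Finset (Fin n) => u ∈ T)) (fun T => v ∈ T)]
    have hz : ∑ T ∈ (Finset.univ.filter (fun T : Finset (Fin n) => u ∈ T)).filter
        (fun T => v ∈ T), y T = 0 := by
      apply Finset.sum_eq_zero
      intro T hT
      simp only [Finset.mem_filter, Finset.mem_univ, true_and] at hT
      exact region_zero_of_pair hy hu hne hT.1 hT.2
    rw [hz, zero_add, Finset.filter_filter]
  have h6 : ∑ T ∈ Finset.univ.filter (fun T : Finset (Fin n) => ¬ v ∈ T), y T
      = dval y - Dfun y v := by
    have := Finset.sum_filter_add_sum_filter_not (Finset.univ : Finset (Finset (Fin n)))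
      (fun T => v ∈ T) y
    rw [Dfun, dval]
    linarith [this]
  rw [dval, ← hsplit, h2, h3, h4, ← h5, h6]
  ring


/-! ### Compactness of the dual region, optimal duals, weak duality -/

lemma zero_mem_region {t : ℕ} {c : ℕ → ℝ} {B : ℝ} {H : SimpleGraph (Fin n)}
    (hc : ∀ i, 1 ≤ i → 0 ≤ c i) (hB : 0 ≤ B) :
    (0 : Finset (Fin n) → ℝ) ∈ region t c B H := by
  refine ⟨fun T _ => rfl, fun T => by simpa using hB, ?_⟩
  rintro K ⟨hKne, -⟩
  simp only [Pi.zero_apply, Finset.sum_const_zero]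
  exact hc K.card (Finset.card_pos.mpr hKne)

lemma region_isClosed {t : ℕ} {c : ℕ → ℝ} {B : ℝ} {H : SimpleGraph (Fin n)} :
    IsClosed (region t c B H) := by
  have h1 : IsClosed {y : Finset (Fin n) → ℝ |
      ∀ T : Finset (Fin n), ¬(T.card = t ∧ H.IsClique (T : Set (Fin n))) → y T = 0} := by
    have : {y : Finset (Fin n) → ℝ |
        ∀ T : Finset (Fin n), ¬(T.card = t ∧ H.IsClique (T : Set (Fin n))) → y T = 0}
        = ⋂ T : Finset (Fin n),
          {y : Finset (Fin n) → ℝ | ¬(T.card = t ∧ H.IsClique (T : Set (Fin n))) → y T = 0} := by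
      ext y; simp [Set.mem_iInter]
    rw [this]
    apply isClosed_iInter
    intro T
    by_cases hP : ¬(T.card = t ∧ H.IsClique (T : Set (Fin n)))
    · have : {y : Finset (Fin n) → ℝ | ¬(T.card = t ∧ H.IsClique (T : Set (Fin n))) → y T = 0}
          = {y : Finset (Fin n) → ℝ | y T = 0} := by
        ext y; simp [hP]
      rw [this]
      exact isClosed_eq (continuous_apply T) continuous_const
    · have : {y : Finset (Fin n) → ℝ | ¬(T.card = t ∧ H.IsClique (T : Set (Fin n))) → y T = 0}
          = Set.univ := by
        ext y; simp [hP]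
      rw [this]; exact isClosed_univ
  have h2 : IsClosed {y : Finset (Fin n) → ℝ | ∀ T, -B ≤ y T} := by
    have : {y : Finset (Fin n) → ℝ | ∀ T, -B ≤ y T}
        = ⋂ T : Finset (Fin n), {y : Finset (Fin n) → ℝ | -B ≤ y T} := by
      ext y; simp [Set.mem_iInter]
    rw [this]
    exact isClosed_iInter (fun T => isClosed_le continuous_const (continuous_apply T))
  have h3 : IsClosed {y : Finset (Fin n) → ℝ | ∀ K, IsCliqueOf H K →
      ∑ T ∈ Finset.univ.filter (fun T : Finset (Fin n) => T ⊆ K ∧ T.card = t), y T ≤ c K.card} := by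
    have : {y : Finset (Fin n) → ℝ | ∀ K, IsCliqueOf H K →
        ∑ T ∈ Finset.univ.filter (fun T : Finset (Fin n) => T ⊆ K ∧ T.card = t), y T ≤ c K.card}
        = ⋂ K : Finset (Fin n), {y : Finset (Fin n) → ℝ | IsCliqueOf H K →
          ∑ T ∈ Finset.univ.filter (fun T : Finset (Fin n) => T ⊆ K ∧ T.card = t), y T ≤ c K.card} := by
      ext y; simp [Set.mem_iInter]
    rw [this]
    apply isClosed_iInter
    intro K
    by_cases hK : IsCliqueOf H K
    · have : {y : Finset (Fin n) → ℝ | IsCliqueOf H K →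
          ∑ T ∈ Finset.univ.filter (fun T : Finset (Fin n) => T ⊆ K ∧ T.card = t), y T ≤ c K.card}
          = {y : Finset (Fin n) → ℝ |
            ∑ T ∈ Finset.univ.filter (fun T : Finset (Fin n) => T ⊆ K ∧ T.card = t), y T ≤ c K.card} := by
        ext y; simp [hK]
      rw [this]
      exact isClosed_le (by continuity) continuous_const
    · have : {y : Finset (Fin n) → ℝ | IsCliqueOf H K →
          ∑ T ∈ Finset.univ.filter (fun T : Finset (Fin n) => T ⊆ K ∧ T.card = t), y T ≤ c K.card}
          = Set.univ := by
        ext y; simp [hK]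
      rw [this]; exact isClosed_univ
  have : region t c B H = _ ∩ (_ ∩ _) := rfl
  exact h1.inter (h2.inter h3)

lemma region_upper {t : ℕ} {c : ℕ → ℝ} {B : ℝ} {H : SimpleGraph (Fin n)} (ht : 2 ≤ t)
    {y : Finset (Fin n) → ℝ} (hy : y ∈ region t c B H) (T : Finset (Fin n)) :
    y T ≤ max (c t) 0 := by
  obtain ⟨hsupp, hlb, hcons⟩ := hy
  by_cases hP : T.card = t ∧ H.IsClique (T : Set (Fin n))
  · have hTne : T.Nonempty := Finset.card_pos.mp (by rw [hP.1]; omega)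
    have := hcons T ⟨hTne, hP.2⟩
    have hfil : Finset.univ.filter (fun T' : Finset (Fin n) => T' ⊆ T ∧ T'.card = t) = {T} := by
      ext T'
      simp only [Finset.mem_filter, Finset.mem_univ, true_and, Finset.mem_singleton]
      constructor
      · rintro ⟨hsub, hcard⟩
        exact Finset.eq_of_subset_of_card_le hsub (by rw [hcard, hP.1])
      · rintro rfl; exact ⟨Finset.Subset.refl _, hP.1⟩
    rw [hfil, Finset.sum_singleton, hP.1] at this
    exact this.trans (le_max_left _ _)
  · rw [hsupp T hP]
    exact le_max_right _ _

lemma region_isCompact {t : ℕ} {c : ℕ → ℝ} {B : ℝ} {H : SimpleGraph (Fin n)} (ht : 2 ≤ t) :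
    IsCompact (region t c B H) := by
  have hbox : IsCompact (Set.pi Set.univ
      (fun _ : Finset (Fin n) => Set.Icc (-B) (max (c t) 0))) :=
    isCompact_univ_pi (fun _ => isCompact_Icc)
  apply IsCompact.of_isClosed_subset hbox region_isClosed
  intro y hy T _
  exact ⟨hy.2.1 T, region_upper ht hy T⟩

noncomputable def mu (t : ℕ) (c : ℕ → ℝ) (B : ℝ) (H : SimpleGraph (Fin n)) : ℝ :=
  sSup (dval '' region t c B H)

lemma dval_continuous : Continuous (dval : (Finset (Fin n) → ℝ) → ℝ) := by
  unfold dval; continuity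

lemma exists_opt {t : ℕ} {c : ℕ → ℝ} {B : ℝ} {H : SimpleGraph (Fin n)} (ht : 2 ≤ t)
    (hc : ∀ i, 1 ≤ i → 0 ≤ c i) (hB : 0 ≤ B) :
    ∃ y ∈ region t c B H, dval y = mu t c B H ∧ ∀ y' ∈ region t c B H, dval y' ≤ dval y := by
  obtain ⟨y, hy, hmax⟩ := (region_isCompact ht).exists_isMaxOn
    ⟨0, zero_mem_region hc hB⟩ (dval_continuous.continuousOn)
  refine ⟨y, hy, ?_, fun y' hy' => hmax hy'⟩
  have hgt : IsGreatest (dval '' region t c B H) (dval y) := by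
    constructor
    · exact ⟨y, hy, rfl⟩
    · rintro x ⟨y', hy', rfl⟩
      exact hmax hy'
  exact hgt.csSup_eq.symm

lemma le_mu {t : ℕ} {c : ℕ → ℝ} {B : ℝ} {H : SimpleGraph (Fin n)} (ht : 2 ≤ t)
    (hc : ∀ i, 1 ≤ i → 0 ≤ c i) (hB : 0 ≤ B)
    {y : Finset (Fin n) → ℝ} (hy : y ∈ region t c B H) : dval y ≤ mu t c B H := by
  obtain ⟨y₀, hy₀, heq, hmax⟩ := exists_opt (H := H) ht hc hB
  rw [← heq]; exact hmax y hy

/-! ### The indicator decomposition and weak duality -/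

lemma indicator_isFracDecomp {t : ℕ} (H : SimpleGraph (Fin n)) (ht : 1 ≤ t) :
    IsFracDecomp t H (fun K => if IsCliqueOf H K ∧ K.card = t then 1 else 0) := by
  refine ⟨fun K => by positivity, fun K hK => by simp [hK], ?_⟩
  intro T hTc hTcl
  have hfil : (Finset.univ.filter (fun K : Finset (Fin n) => T ⊆ K)).filter
      (fun K => IsCliqueOf H K ∧ K.card = t) = {T} := by
    ext K
    simp only [Finset.mem_filter, Finset.mem_univ, true_and, Finset.mem_singleton]
    constructor
    · rintro ⟨hsub, -, hcard⟩
      exact (Finset.eq_of_subset_of_card_le hsub (by rw [hcard, hTc])).symm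
    · rintro rfl
      exact ⟨Finset.Subset.refl _, ⟨Finset.card_pos.mp (by rw [hTc]; omega), hTcl⟩, hTc⟩
  calc ∑ K ∈ Finset.univ.filter (fun K : Finset (Fin n) => T ⊆ K),
        (fun K => if IsCliqueOf H K ∧ K.card = t then (1:ℝ) else 0) K
      = ∑ K ∈ (Finset.univ.filter (fun K : Finset (Fin n) => T ⊆ K)).filter
          (fun K => IsCliqueOf H K ∧ K.card = t), 1 := by
        rw [Finset.sum_filter, Finset.sum_filter, Finset.sum_filter]
    _ = 1 := by rw [hfil, Finset.sum_singleton]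

lemma decompSet_nonempty {t : ℕ} (H : SimpleGraph (Fin n)) (c : ℕ → ℝ) (ht : 1 ≤ t) :
    {x | ∃ f, IsFracDecomp t H f ∧ x = cliqueCost c f}.Nonempty :=
  ⟨_, _, indicator_isFracDecomp H ht, rfl⟩

lemma decompSet_bddBelow {t : ℕ} (H : SimpleGraph (Fin n)) {c : ℕ → ℝ}
    (hc : ∀ i, 1 ≤ i → 0 ≤ c i) :
    ∀ x ∈ {x | ∃ f, IsFracDecomp t H f ∧ x = cliqueCost c f}, (0:ℝ) ≤ x := by
  rintro x ⟨f, hf, rfl⟩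
  apply Finset.sum_nonneg
  intro K _
  by_cases hK : IsCliqueOf H K
  · exact mul_nonneg (hc K.card (Finset.card_pos.mpr hK.1)) (hf.1 K)
  · rw [hf.2.1 K hK, mul_zero]

lemma weak_duality {t : ℕ} {c : ℕ → ℝ} {B : ℝ} {H : SimpleGraph (Fin n)} (ht : 2 ≤ t)
    {y : Finset (Fin n) → ℝ} (hy : y ∈ region t c B H) : dval y ≤ piFrac t H c := by
  apply le_csInf (decompSet_nonempty H c (by omega))
  rintro x ⟨f, hf, rfl⟩
  obtain ⟨hf0, hfsupp, hfcov⟩ := hf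
  obtain ⟨hsupp, hlb, hcons⟩ := hy
  have swap : ∑ K : Finset (Fin n),
      (∑ T ∈ Finset.univ.filter (fun T : Finset (Fin n) => T ⊆ K ∧ T.card = t), y T) * f K
      = ∑ T : Finset (Fin n), (if T.card = t then
          y T * (∑ K ∈ Finset.univ.filter (fun K : Finset (Fin n) => T ⊆ K), f K) else 0) := by
    have step1 : ∀ K : Finset (Fin n),
        (∑ T ∈ Finset.univ.filter (fun T : Finset (Fin n) => T ⊆ K ∧ T.card = t), y T) * f K
        = ∑ T : Finset (Fin n), (if T ⊆ K ∧ T.card = t then y T * f K else 0) := by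
      intro K
      rw [Finset.sum_filter, Finset.sum_mul]
      apply Finset.sum_congr rfl
      intro T _
      by_cases h : T ⊆ K ∧ T.card = t <;> simp [h]
    rw [Finset.sum_congr rfl (fun K _ => step1 K), Finset.sum_comm]
    apply Finset.sum_congr rfl
    intro T _
    by_cases hc' : T.card = t
    · rw [if_pos hc', Finset.mul_sum, Finset.sum_filter]
      apply Finset.sum_congr rfl
      intro K _
      by_cases h : T ⊆ K <;> simp [h, hc']
    · rw [if_neg hc']
      apply Finset.sum_eq_zero
      intro K _
      simp [hc']
  have hterm : ∀ T : Finset (Fin n), (if T.card = t then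
      y T * (∑ K ∈ Finset.univ.filter (fun K : Finset (Fin n) => T ⊆ K), f K) else 0) = y T := by
    intro T
    by_cases hc' : T.card = t
    · rw [if_pos hc']
      by_cases hcl : H.IsClique (T : Set (Fin n))
      · rw [hfcov T hc' hcl, mul_one]
      · rw [hsupp T (fun h => hcl h.2), zero_mul]
    · rw [if_neg hc', hsupp T (fun h => hc' h.1)]
  have hle : ∀ K : Finset (Fin n),
      (∑ T ∈ Finset.univ.filter (fun T : Finset (Fin n) => T ⊆ K ∧ T.card = t), y T) * f K
      ≤ c K.card * f K := by
    intro K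
    by_cases hK : IsCliqueOf H K
    · exact mul_le_mul_of_nonneg_right (hcons K hK) (hf0 K)
    · rw [hfsupp K hK, mul_zero, mul_zero]
  calc dval y = ∑ T : Finset (Fin n), (if T.card = t then
      y T * (∑ K ∈ Finset.univ.filter (fun K : Finset (Fin n) => T ⊆ K), f K) else 0) := by
        rw [dval]; exact (Finset.sum_congr rfl (fun T _ => hterm T)).symm
    _ = ∑ K : Finset (Fin n),
        (∑ T ∈ Finset.univ.filter (fun T : Finset (Fin n) => T ⊆ K ∧ T.card = t), y T) * f K :=
        swap.symm
    _ ≤ ∑ K : Finset (Fin n), c K.card * f K := Finset.sum_le_sum (fun K _ => hle K)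
    _ = cliqueCost c f := rfl


/-! ### Symmetrization -/

lemma completeMultipartite_of_no_badpair {H : SimpleGraph (Fin n)}
    (h : ∀ u v : Fin n, u ≠ v → ¬ H.Adj u v → twinsP H u v) : IsCompleteMultipartite H := by
  classical
  let e := Fintype.equivFin (Finset (Fin n))
  refine ⟨fun x => (e (H.neighborFinset x) : ℕ), ?_⟩
  intro a b
  constructor
  · intro hab hpe
    have hNe : H.neighborFinset a = H.neighborFinset b := e.injective (Fin.val_injective hpe)
    have : a ∈ H.neighborFinset b := (SimpleGraph.mem_neighborFinset _ _ _).mpr hab.symm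
    rw [← hNe] at this
    exact H.irrefl ((SimpleGraph.mem_neighborFinset _ _ _).mp this)
  · intro hpe
    by_contra hadj
    apply hpe
    by_cases hab : a = b
    · subst hab; rfl
    · have htw := h a b hab hadj
      have hNN : H.neighborFinset a = H.neighborFinset b := by
        ext z
        rw [SimpleGraph.mem_neighborFinset, SimpleGraph.mem_neighborFinset]
        exact htw z
      simp only [hNN]

lemma sym_step {t : ℕ} {c : ℕ → ℝ} {B : ℝ} (ht : 2 ≤ t)
    (hc : ∀ i, 1 ≤ i → 0 ≤ c i) (hB : 0 ≤ B) {H : SimpleGraph (Fin n)}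
    (hmax : ∀ H₂ : SimpleGraph (Fin n), mu t c B H₂ ≤ mu t c B H)
    {u v : Fin n} (hne : u ≠ v) (hnadj : ¬ H.Adj u v) (hntw : ¬ twinsP H u v)
    (hcls : cls H v ≤ cls H u) :
    mu t c B (clone H u v) = mu t c B H ∧ Phi H + 2 ≤ Phi (clone H u v) := by
  obtain ⟨y, hy, hyval, -⟩ := exists_opt (H := H) ht hc hB
  have hnadj' : ¬ H.Adj v u := fun h => hnadj h.symm
  have h1 : dval y - Dfun y v + Dfun y u ≤ mu t c B (clone H u v) := by
    rw [← cloneDual_dval hy hnadj hne]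
    exact le_mu ht hc hB (cloneDual_mem_region hy hnadj hne hB)
  have h2 : dval y - Dfun y u + Dfun y v ≤ mu t c B (clone H v u) := by
    rw [← cloneDual_dval hy hnadj' hne.symm]
    exact le_mu ht hc hB (cloneDual_mem_region hy hnadj' hne.symm hB)
  have hA : mu t c B (clone H u v) ≤ mu t c B H := hmax _
  have hB2 : mu t c B (clone H v u) ≤ mu t c B H := hmax _
  constructor
  · apply le_antisymm hA
    rw [← hyval]
    linarith
  · exact Phi_lt_Phi_clone hne hntw hcls

lemma exists_CM_maximizer {t : ℕ} {c : ℕ → ℝ} {B : ℝ} (ht : 2 ≤ t)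
    (hc : ∀ i, 1 ≤ i → 0 ≤ c i) (hB : 0 ≤ B) :
    ∀ k : ℕ, ∀ H : SimpleGraph (Fin n),
      (∀ H₂ : SimpleGraph (Fin n), mu t c B H₂ ≤ mu t c B H) →
      n * n - Phi H ≤ k →
      ∃ H₁ : SimpleGraph (Fin n), IsCompleteMultipartite H₁ ∧ mu t c B H₁ = mu t c B H := by
  intro k
  induction k with
  | zero =>
    intro H hmax hk
    by_cases hbp : ∀ u v : Fin n, u ≠ v → ¬ H.Adj u v → twinsP H u v
    · exact ⟨H, completeMultipartite_of_no_badpair hbp, rfl⟩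
    · push_neg at hbp
      obtain ⟨u, v, hne, hnadj, hntw⟩ := hbp
      exfalso
      by_cases hcls : cls H v ≤ cls H u
      · obtain ⟨-, hPhi⟩ := sym_step ht hc hB hmax hne hnadj hntw hcls
        have := Phi_le (clone H u v)
        omega
      · have hntw' : ¬ twinsP H v u := fun h => hntw (twinsP_symm h)
        have hnadj' : ¬ H.Adj v u := fun h => hnadj h.symm
        obtain ⟨-, hPhi⟩ := sym_step ht hc hB hmax hne.symm hnadj' hntw' (by omega)
        have := Phi_le (clone H v u)
        omega
  | succ k ih =>
    intro H hmax hk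
    by_cases hbp : ∀ u v : Fin n, u ≠ v → ¬ H.Adj u v → twinsP H u v
    · exact ⟨H, completeMultipartite_of_no_badpair hbp, rfl⟩
    · push_neg at hbp
      obtain ⟨u, v, hne, hnadj, hntw⟩ := hbp
      have main : ∀ (u' v' : Fin n), u' ≠ v' → ¬ H.Adj u' v' → ¬ twinsP H u' v' →
          cls H v' ≤ cls H u' →
          ∃ H₁ : SimpleGraph (Fin n), IsCompleteMultipartite H₁ ∧
            mu t c B H₁ = mu t c B H := by
        intro u' v' hne' hnadj' hntw' hcls'
        obtain ⟨hmu, hPhi⟩ := sym_step ht hc hB hmax hne' hnadj' hntw' hcls'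
        have hPle := Phi_le (clone H u' v')
        have hmax' : ∀ H₂ : SimpleGraph (Fin n), mu t c B H₂ ≤ mu t c B (clone H u' v') := by
          intro H₂; rw [hmu]; exact hmax H₂
        obtain ⟨H₁, hH₁, hmu₁⟩ := ih (clone H u' v') hmax' (by omega)
        exact ⟨H₁, hH₁, by rw [hmu₁, hmu]⟩
      by_cases hcls : cls H v ≤ cls H u
      · exact main u v hne hnadj hntw hcls
      · exact main v u hne.symm (fun h => hnadj h.symm) (fun h => hntw (twinsP_symm h))
          (by omega)


/-! ### Farkas-type duality via separation -/

noncomputable def covFn (t : ℕ) (K T : Finset (Fin n)) : ℝ :=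
  if T ⊆ K ∧ T.card = t then 1 else 0

noncomputable def Lmap (t : ℕ) (c : ℕ → ℝ) :
    ((Finset (Fin n) → ℝ) × ℝ) →ₗ[ℝ] ((Finset (Fin n) → ℝ) × ℝ) where
  toFun p := (fun T => ∑ K, p.1 K * covFn t K T, (∑ K : Finset (Fin n), c K.card * p.1 K) + p.2)
  map_add' p q := by
    refine Prod.ext ?_ ?_
    · funext T
      simp only [Prod.fst_add, Pi.add_apply, add_mul]
      rw [Finset.sum_add_distrib]
    · simp only [Prod.fst_add, Prod.snd_add, Pi.add_apply, mul_add]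
      rw [Finset.sum_add_distrib]
      ring
  map_smul' a p := by
    refine Prod.ext ?_ ?_
    · funext T
      simp only [Prod.smul_fst, Pi.smul_apply, smul_eq_mul, RingHom.id_apply]
      rw [Finset.mul_sum]
      apply Finset.sum_congr rfl
      intro K _
      ring
    · simp only [Prod.smul_fst, Prod.smul_snd, Pi.smul_apply, smul_eq_mul, RingHom.id_apply]
      rw [mul_add, Finset.mul_sum]
      congr 1
      apply Finset.sum_congr rfl
      intro K _
      ring

def Pset (G : SimpleGraph (Fin n)) : Set ((Finset (Fin n) → ℝ) × ℝ) :=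
  {p | (∀ K, 0 ≤ p.1 K) ∧ (∀ K, ¬ IsCliqueOf G K → p.1 K = 0) ∧ 0 ≤ p.2}

lemma Pset_closed (G : SimpleGraph (Fin n)) : IsClosed (Pset G) := by
  have h1 : IsClosed {p : (Finset (Fin n) → ℝ) × ℝ | ∀ K, 0 ≤ p.1 K} := by
    have : {p : (Finset (Fin n) → ℝ) × ℝ | ∀ K, 0 ≤ p.1 K}
        = ⋂ K : Finset (Fin n), {p : (Finset (Fin n) → ℝ) × ℝ | 0 ≤ p.1 K} := by
      ext p; simp [Set.mem_iInter]
    rw [this]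
    exact isClosed_iInter (fun K =>
      isClosed_le continuous_const ((continuous_apply K).comp continuous_fst))
  have h2 : IsClosed {p : (Finset (Fin n) → ℝ) × ℝ | ∀ K, ¬ IsCliqueOf G K → p.1 K = 0} := by
    have : {p : (Finset (Fin n) → ℝ) × ℝ | ∀ K, ¬ IsCliqueOf G K → p.1 K = 0}
        = ⋂ K : Finset (Fin n), {p : (Finset (Fin n) → ℝ) × ℝ | ¬ IsCliqueOf G K → p.1 K = 0} := by
      ext p; simp [Set.mem_iInter]
    rw [this]
    apply isClosed_iInter
    intro K
    by_cases hK : IsCliqueOf G K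
    · have : {p : (Finset (Fin n) → ℝ) × ℝ | ¬ IsCliqueOf G K → p.1 K = 0} = Set.univ := by
        ext p; simp [hK]
      rw [this]; exact isClosed_univ
    · have : {p : (Finset (Fin n) → ℝ) × ℝ | ¬ IsCliqueOf G K → p.1 K = 0}
          = {p : (Finset (Fin n) → ℝ) × ℝ | p.1 K = 0} := by
        ext p; simp [hK]
      rw [this]
      exact isClosed_eq ((continuous_apply K).comp continuous_fst) continuous_const
  have h3 : IsClosed {p : (Finset (Fin n) → ℝ) × ℝ | 0 ≤ p.2} :=
    isClosed_le continuous_const continuous_snd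
  have : Pset G = _ ∩ (_ ∩ _) := rfl
  exact h1.inter (h2.inter h3)

lemma Pset_convexish (G : SimpleGraph (Fin n)) : Convex ℝ (Pset G) := by
  intro p hp q hq a b ha hb hab
  refine ⟨?_, ?_, ?_⟩
  · intro K
    simp only [Prod.fst_add, Prod.smul_fst, Pi.add_apply, Pi.smul_apply, smul_eq_mul]
    exact add_nonneg (mul_nonneg ha (hp.1 K)) (mul_nonneg hb (hq.1 K))
  · intro K hK
    simp only [Prod.fst_add, Prod.smul_fst, Pi.add_apply, Pi.smul_apply, smul_eq_mul]
    rw [hp.2.1 K hK, hq.2.1 K hK]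
    ring
  · simp only [Prod.snd_add, Prod.smul_snd, smul_eq_mul]
    exact add_nonneg (mul_nonneg ha hp.2.2) (mul_nonneg hb hq.2.2)

lemma Pset_smul {G : SimpleGraph (Fin n)} {p : (Finset (Fin n) → ℝ) × ℝ} (hp : p ∈ Pset G)
    {r : ℝ} (hr : 0 ≤ r) : r • p ∈ Pset G := by
  refine ⟨?_, ?_, ?_⟩
  · intro K
    simp only [Prod.smul_fst, Pi.smul_apply, smul_eq_mul]
    exact mul_nonneg hr (hp.1 K)
  · intro K hK
    simp only [Prod.smul_fst, Pi.smul_apply, smul_eq_mul]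
    rw [hp.2.1 K hK, mul_zero]
  · simp only [Prod.smul_snd, smul_eq_mul]
    exact mul_nonneg hr hp.2.2

lemma cost_le_snd {t : ℕ} {c : ℕ → ℝ} {G : SimpleGraph (Fin n)} {δ : ℝ}
    (hδ : ∀ i, 1 ≤ i → δ ≤ c i) (hδ0 : 0 < δ)
    {p : (Finset (Fin n) → ℝ) × ℝ} (hp : p ∈ Pset G) (K₀ : Finset (Fin n)) :
    δ * p.1 K₀ ≤ (Lmap t c p).2 := by
  have hc0 : ∀ K : Finset (Fin n), 0 ≤ c K.card * p.1 K := by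
    intro K
    by_cases hK : IsCliqueOf G K
    · exact mul_nonneg ((hδ0.le.trans (hδ K.card (Finset.card_pos.mpr hK.1)))) (hp.1 K)
    · rw [hp.2.1 K hK, mul_zero]
  have h1 : δ * p.1 K₀ ≤ c K₀.card * p.1 K₀ := by
    by_cases hK : IsCliqueOf G K₀
    · exact mul_le_mul_of_nonneg_right (hδ K₀.card (Finset.card_pos.mpr hK.1)) (hp.1 K₀)
    · rw [hp.2.1 K₀ hK, mul_zero, mul_zero]
  have h2 : c K₀.card * p.1 K₀ ≤ ∑ K : Finset (Fin n), c K.card * p.1 K :=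
    Finset.single_le_sum (fun K _ => hc0 K) (Finset.mem_univ K₀)
  have h3 : (∑ K : Finset (Fin n), c K.card * p.1 K) ≤ (Lmap t c p).2 := by
    simp only [Lmap, LinearMap.coe_mk, AddHom.coe_mk]
    linarith [hp.2.2]
  linarith

lemma Cset_closed {t : ℕ} {c : ℕ → ℝ} (G : SimpleGraph (Fin n)) {δ : ℝ}
    (hδ : ∀ i, 1 ≤ i → δ ≤ c i) (hδ0 : 0 < δ) :
    IsClosed (Lmap t c '' (Pset G) : Set ((Finset (Fin n) → ℝ) × ℝ)) := by
  rw [← isSeqClosed_iff_isClosed]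
  intro x lim hx hlim
  -- choose preimages
  have hch : ∀ k, ∃ p ∈ Pset G, Lmap t c p = x k := fun k => hx k
  choose p hpP hpL using hch
  have hsnd : Filter.Tendsto (fun k => (x k).2) Filter.atTop (nhds lim.2) :=
    (continuous_snd.tendsto lim).comp hlim
  obtain ⟨M, hM⟩ := hsnd.bddAbove_range
  simp only [mem_upperBounds, Set.mem_range, forall_exists_index] at hM
  have hMk : ∀ k, (x k).2 ≤ M := fun k => hM _ k rfl
  set M' := max M 0 with hM'
  -- p k lies in a compact box
  set box : Set ((Finset (Fin n) → ℝ) × ℝ) :=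
    (Set.pi Set.univ (fun _ : Finset (Fin n) => Set.Icc (0:ℝ) (M' / δ))) ×ˢ Set.Icc (0:ℝ) M'
    with hbox
  have hboxc : IsCompact box :=
    (isCompact_univ_pi (fun _ => isCompact_Icc)).prod isCompact_Icc
  have hpbox : ∀ k, p k ∈ box := by
    intro k
    constructor
    · intro K _
      refine ⟨(hpP k).1 K, ?_⟩
      have h1 : δ * (p k).1 K ≤ (Lmap t c (p k)).2 := cost_le_snd hδ hδ0 (hpP k) K
      rw [hpL k] at h1
      have h2 : (x k).2 ≤ M' := (hMk k).trans (le_max_left _ _)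
      rw [le_div_iff₀ hδ0]
      linarith
    · constructor
      · exact (hpP k).2.2
      · have h1 : δ * (p k).1 ∅ ≤ (Lmap t c (p k)).2 := cost_le_snd hδ hδ0 (hpP k) ∅
        have h4 : (p k).2 ≤ (Lmap t c (p k)).2 := by
          have hc0 : 0 ≤ ∑ K : Finset (Fin n), c K.card * (p k).1 K := by
            apply Finset.sum_nonneg
            intro K _
            by_cases hK : IsCliqueOf G K
            · exact mul_nonneg ((hδ0.le.trans (hδ K.card (Finset.card_pos.mpr hK.1)))) ((hpP k).1 K)
            · rw [(hpP k).2.1 K hK, mul_zero]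
          simp only [Lmap, LinearMap.coe_mk, AddHom.coe_mk]
          linarith
        rw [hpL k] at h4
        exact h4.trans ((hMk k).trans (le_max_left _ _))
  -- extract convergent subsequence within P ∩ box
  have hQc : IsCompact (Pset G ∩ box) :=
    hboxc.of_isClosed_subset ((Pset_closed G).inter hboxc.isClosed) Set.inter_subset_right
  have hmem : ∀ k, p k ∈ Pset G ∩ box := fun k => ⟨hpP k, hpbox k⟩
  obtain ⟨pstar, hpstar, φ, hφ, hconv⟩ := hQc.tendsto_subseq hmem
  have hLcont : Continuous (Lmap t c (n := n)) := (Lmap t c).continuous_of_finiteDimensional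
  have hL1 : Filter.Tendsto (fun j => Lmap t c (p (φ j))) Filter.atTop (nhds (Lmap t c pstar)) :=
    (hLcont.tendsto pstar).comp hconv
  have hL2 : Filter.Tendsto (fun j => Lmap t c (p (φ j))) Filter.atTop (nhds lim) := by
    have : (fun j => Lmap t c (p (φ j))) = (fun j => x (φ j)) := by
      funext j; exact hpL (φ j)
    rw [this]
    exact hlim.comp hφ.tendsto_atTop
  have : Lmap t c pstar = lim := tendsto_nhds_unique hL1 hL2
  exact ⟨pstar, hpstar.1, this⟩


lemma farkas {t : ℕ} (ht : 2 ≤ t) (G : SimpleGraph (Fin n)) {c : ℕ → ℝ} {δ : ℝ}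
    (hδ0 : 0 < δ) (hδ : ∀ i, 1 ≤ i → δ ≤ c i) {lam : ℝ} (hlam : lam < piFrac t G c) :
    ∃ z : Finset (Fin n) → ℝ,
      (∀ T : Finset (Fin n), ¬(T.card = t ∧ G.IsClique (T : Set (Fin n))) → z T = 0) ∧
      (∀ K, IsCliqueOf G K →
        ∑ T ∈ Finset.univ.filter (fun T : Finset (Fin n) => T ⊆ K ∧ T.card = t), z T
          ≤ c K.card) ∧
      lam < dval z := by
  classical
  have hc : ∀ i, 1 ≤ i → 0 ≤ c i := fun i hi => hδ0.le.trans (hδ i hi)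
  set bvec : Finset (Fin n) → ℝ :=
    fun T => if T.card = t ∧ G.IsClique (T : Set (Fin n)) then 1 else 0 with hbvec
  have hCconv : Convex ℝ (Lmap t c '' Pset G) := (Pset_convexish G).linear_image (Lmap t c)
  have hCclosed : IsClosed (Lmap t c '' Pset G) := Cset_closed G hδ hδ0
  have hnot : (bvec, lam) ∉ Lmap t c '' Pset G := by
    rintro ⟨p, hp, heq⟩
    have hfst : ∀ T, (Lmap t c p).1 T = bvec T := fun T => congrFun (congrArg Prod.fst heq) T
    have hsnd : (Lmap t c p).2 = lam := congrArg Prod.snd heq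
    have hdec : IsFracDecomp t G p.1 := by
      refine ⟨hp.1, hp.2.1, ?_⟩
      intro T hTc hTcl
      have h1 : ∑ K : Finset (Fin n), p.1 K * covFn t K T = 1 := by
        have := hfst T
        simp only [Lmap, LinearMap.coe_mk, AddHom.coe_mk] at this
        rw [this, hbvec]
        simp [hTc, hTcl]
      calc ∑ K ∈ Finset.univ.filter (fun K : Finset (Fin n) => T ⊆ K), p.1 K
          = ∑ K : Finset (Fin n), p.1 K * covFn t K T := by
            rw [Finset.sum_filter]
            apply Finset.sum_congr rfl
            intro K _
            by_cases h : T ⊆ K <;> simp [covFn, h, hTc]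
        _ = 1 := h1
    have hcost : cliqueCost c p.1 ≤ lam := by
      have h2 := hsnd
      simp only [Lmap, LinearMap.coe_mk, AddHom.coe_mk] at h2
      have h3 := hp.2.2
      have : cliqueCost c p.1 = ∑ K : Finset (Fin n), c K.card * p.1 K := rfl
      linarith
    have hpi : piFrac t G c ≤ cliqueCost c p.1 :=
      csInf_le ⟨0, fun x hx => decompSet_bddBelow G hc x hx⟩ ⟨p.1, hdec, rfl⟩
    linarith
  obtain ⟨φ, s, hφC, hφpt⟩ := geometric_hahn_banach_closed_point hCconv hCclosed hnot
  have h0C : (0 : (Finset (Fin n) → ℝ) × ℝ) ∈ Lmap t c '' Pset G := by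
    refine ⟨0, ⟨?_, ?_, ?_⟩, map_zero _⟩
    · intro K; simp
    · intro K _; simp
    · simp
  have hs0 : 0 < s := by
    have := hφC 0 h0C
    simpa using this
  have hφle : ∀ a ∈ Lmap t c '' Pset G, φ a ≤ 0 := by
    rintro a ⟨p, hp, rfl⟩
    by_contra hpos
    push_neg at hpos
    set r := (s + 1) / φ (Lmap t c p) with hr
    have hr0 : 0 ≤ r := div_nonneg (by linarith) hpos.le
    have hmem : Lmap t c (r • p) ∈ Lmap t c '' Pset G := ⟨r • p, Pset_smul hp hr0, rfl⟩
    have h1 := hφC _ hmem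
    rw [map_smul, map_smul, smul_eq_mul, hr, div_mul_cancel₀ _ (ne_of_gt hpos)] at h1
    linarith
  set y0 : Finset (Fin n) → ℝ := fun T => φ ((Pi.single T (1:ℝ) : Finset (Fin n) → ℝ), (0:ℝ))
    with hy0
  set μ : ℝ := φ ((0 : Finset (Fin n) → ℝ), (1:ℝ)) with hμ
  have hrep : ∀ (x : Finset (Fin n) → ℝ) (r : ℝ),
      φ (x, r) = (∑ T : Finset (Fin n), x T * y0 T) + r * μ := by
    intro x r
    have hxdecomp : ((x, r) : (Finset (Fin n) → ℝ) × ℝ)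
        = (∑ T : Finset (Fin n),
            x T • ((Pi.single T (1:ℝ) : Finset (Fin n) → ℝ), (0:ℝ)))
          + r • ((0 : Finset (Fin n) → ℝ), (1:ℝ)) := by
      refine Prod.ext ?_ ?_
      · simp only [Prod.fst_add, Prod.fst_sum, Prod.smul_fst, smul_zero]
        have : ∀ T : Finset (Fin n), x T • (Pi.single T (1:ℝ) : Finset (Fin n) → ℝ)
            = Pi.single T (x T) := by
          intro T
          rw [← Pi.single_smul, smul_eq_mul, mul_one]
        rw [Finset.sum_congr rfl (fun T _ => this T), Finset.univ_sum_single]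
        simp
      · simp only [Prod.snd_add, Prod.snd_sum, Prod.smul_snd, smul_zero, smul_eq_mul, mul_one]
        simp
    rw [hxdecomp, map_add, map_sum, map_smul, smul_eq_mul]
    congr 1
    apply Finset.sum_congr rfl
    intro T _
    rw [map_smul, smul_eq_mul]
  have hgen : ∀ K, IsCliqueOf G K →
      (∑ T ∈ Finset.univ.filter (fun T : Finset (Fin n) => T ⊆ K ∧ T.card = t), y0 T)
        + c K.card * μ ≤ 0 := by
    intro K hK
    have hPmem : ((Pi.single K (1:ℝ) : Finset (Fin n) → ℝ), (0:ℝ)) ∈ Pset G := by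
      refine ⟨?_, ?_, le_refl 0⟩
      · intro K'
        by_cases h : K' = K
        · subst h; simp
        · simp [Pi.single_eq_of_ne h]
      · intro K' hK'
        have h : K' ≠ K := fun h => hK' (h ▸ hK)
        simp [Pi.single_eq_of_ne h]
    have hmem : Lmap t c ((Pi.single K (1:ℝ) : Finset (Fin n) → ℝ), (0:ℝ))
        ∈ Lmap t c '' Pset G := ⟨_, hPmem, rfl⟩
    have h1 := hφle _ hmem
    have hL : Lmap t c ((Pi.single K (1:ℝ) : Finset (Fin n) → ℝ), (0:ℝ))
        = ((fun T => covFn t K T), c K.card) := by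
      refine Prod.ext ?_ ?_
      · funext T
        simp only [Lmap, LinearMap.coe_mk, AddHom.coe_mk]
        rw [Finset.sum_eq_single K]
        · simp
        · intro b _ hb; simp [Pi.single_eq_of_ne hb]
        · intro h; exact absurd (Finset.mem_univ K) h
      · simp only [Lmap, LinearMap.coe_mk, AddHom.coe_mk]
        rw [Finset.sum_eq_single K]
        · simp
        · intro b _ hb; simp [Pi.single_eq_of_ne hb]
        · intro h; exact absurd (Finset.mem_univ K) h
    rw [hL, hrep] at h1
    have hcov : ∑ T : Finset (Fin n), covFn t K T * y0 T
        = ∑ T ∈ Finset.univ.filter (fun T : Finset (Fin n) => T ⊆ K ∧ T.card = t), y0 T := by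
      rw [Finset.sum_filter]
      apply Finset.sum_congr rfl
      intro T _
      by_cases h : T ⊆ K ∧ T.card = t <;> simp [covFn, h]
    rw [hcov] at h1
    exact h1
  have hμ0 : μ ≤ 0 := by
    have hPmem : ((0 : Finset (Fin n) → ℝ), (1:ℝ)) ∈ Pset G := by
      refine ⟨fun K => le_refl 0, fun K _ => rfl, zero_le_one⟩
    have hmem : Lmap t c ((0 : Finset (Fin n) → ℝ), (1:ℝ)) ∈ Lmap t c '' Pset G :=
      ⟨_, hPmem, rfl⟩
    have h1 := hφle _ hmem
    have hL : Lmap t c ((0 : Finset (Fin n) → ℝ), (1:ℝ))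
        = ((0 : Finset (Fin n) → ℝ), (1:ℝ)) := by
      refine Prod.ext ?_ ?_
      · funext T
        show ∑ K : Finset (Fin n), (0:ℝ) * covFn t K T = 0
        simp
      · show (∑ K : Finset (Fin n), c K.card * 0) + 1 = 1
        simp
    rw [hL] at h1
    exact h1
  have hpt : s < (∑ T : Finset (Fin n), bvec T * y0 T) + lam * μ := by
    rw [← hrep]; exact hφpt
  have hbv : ∑ T : Finset (Fin n), bvec T * y0 T
      = ∑ T ∈ Finset.univ.filter
          (fun T : Finset (Fin n) => T.card = t ∧ G.IsClique (T : Set (Fin n))), y0 T := by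
    rw [Finset.sum_filter]
    apply Finset.sum_congr rfl
    intro T _
    by_cases h : T.card = t ∧ G.IsClique (T : Set (Fin n)) <;> simp [hbvec, h]
  have hμneg : μ < 0 := by
    rcases lt_or_eq_of_le hμ0 with h | h
    · exact h
    · exfalso
      have hT0 : ∀ T ∈ Finset.univ.filter
          (fun T : Finset (Fin n) => T.card = t ∧ G.IsClique (T : Set (Fin n))), y0 T ≤ 0 := by
        intro T hT
        simp only [Finset.mem_filter, Finset.mem_univ, true_and] at hT
        have hTne : T.Nonempty := Finset.card_pos.mp (by rw [hT.1]; omega)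
        have := hgen T ⟨hTne, hT.2⟩
        have hfil : Finset.univ.filter (fun T' : Finset (Fin n) => T' ⊆ T ∧ T'.card = t)
            = {T} := by
          ext T'
          simp only [Finset.mem_filter, Finset.mem_univ, true_and, Finset.mem_singleton]
          constructor
          · rintro ⟨hsub, hcard⟩
            exact Finset.eq_of_subset_of_card_le hsub (by rw [hcard, hT.1])
          · rintro rfl; exact ⟨Finset.Subset.refl _, hT.1⟩
        rw [hfil, Finset.sum_singleton, h, mul_zero, add_zero] at this
        exact this
      have hsum0 : ∑ T ∈ Finset.univ.filter
          (fun T : Finset (Fin n) => T.card = t ∧ G.IsClique (T : Set (Fin n))), y0 T ≤ 0 :=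
        Finset.sum_nonpos hT0
      rw [hbv] at hpt
      rw [h, mul_zero, add_zero] at hpt
      linarith
  set z : Finset (Fin n) → ℝ :=
    fun T => if T.card = t ∧ G.IsClique ((T : Finset (Fin n)) : Set (Fin n)) then y0 T / (-μ)
      else 0 with hzdef
  have hzval : ∀ T : Finset (Fin n),
      z T = if T.card = t ∧ G.IsClique (T : Set (Fin n)) then y0 T / (-μ) else 0 :=
    fun T => rfl
  refine ⟨z, ?_, ?_, ?_⟩
  · intro T hT
    rw [hzval T, if_neg hT]
  · intro K hK
    have hz : ∑ T ∈ Finset.univ.filter (fun T : Finset (Fin n) => T ⊆ K ∧ T.card = t), z T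
        = (∑ T ∈ Finset.univ.filter (fun T : Finset (Fin n) => T ⊆ K ∧ T.card = t), y0 T)
            / (-μ) := by
      rw [Finset.sum_div]
      apply Finset.sum_congr rfl
      intro T hT
      simp only [Finset.mem_filter, Finset.mem_univ, true_and] at hT
      have hTcl : G.IsClique (T : Set (Fin n)) := hK.2.subset (Finset.coe_subset.mpr hT.1)
      rw [hzval T, if_pos ⟨hT.2, hTcl⟩]
    rw [hz, div_le_iff₀ (by linarith : (0:ℝ) < -μ)]
    have := hgen K hK
    nlinarith
  · have hz : dval z
        = (∑ T ∈ Finset.univ.filter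
            (fun T : Finset (Fin n) => T.card = t ∧ G.IsClique (T : Set (Fin n))), y0 T)
          / (-μ) := by
      rw [dval, Finset.sum_div, Finset.sum_filter]
    rw [hz, lt_div_iff₀ (by linarith : (0:ℝ) < -μ)]
    rw [hbv] at hpt
    nlinarith

end S3

/-- Theorem 1.7 (decomposition part): the fractional `t`-clique decomposition
number of any `n`-vertex graph is at most that of some `n`-vertex complete
multipartite graph. -/
theorem stmt3 (n t : ℕ) (ht : 2 ≤ t) (c : ℕ → ℝ) (hc : ∀ i, 1 ≤ i → 0 ≤ c i)
    (G : SimpleGraph (Fin n)) :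
    ∃ H' : SimpleGraph (Fin n), IsCompleteMultipartite H' ∧
      piFrac t G c ≤ piFrac t H' c := by
  classical
  obtain ⟨H₀, hH₀CM, hH₀max⟩ : ∃ H₀ : SimpleGraph (Fin n), IsCompleteMultipartite H₀ ∧
      ∀ H' : SimpleGraph (Fin n), IsCompleteMultipartite H' → piFrac t H' c ≤ piFrac t H₀ c := by
    haveI : Nonempty {H : SimpleGraph (Fin n) // IsCompleteMultipartite H} :=
      ⟨⟨⊥, ⟨fun _ => 0, by simp⟩⟩⟩
    obtain ⟨H₀, hmax⟩ := Finite.exists_max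
      (fun H : {H : SimpleGraph (Fin n) // IsCompleteMultipartite H} => piFrac t H.1 c)
    exact ⟨H₀.1, H₀.2, fun H' hH' => hmax ⟨H', hH'⟩⟩
  refine ⟨H₀, hH₀CM, ?_⟩
  apply le_of_forall_pos_le_add
  intro ε hε
  set N : ℝ := (Fintype.card (Finset (Fin n)) : ℝ) with hNdef
  have hN0 : 0 ≤ N := by rw [hNdef]; positivity
  set δ : ℝ := ε / (2 * (N + 1)) with hδdef
  have hδ0 : 0 < δ := by rw [hδdef]; positivity
  set c' : ℕ → ℝ := fun i => c i + δ with hc'def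
  have hc'δ : ∀ i, 1 ≤ i → δ ≤ c' i := by
    intro i hi
    have := hc i hi
    simp only [hc'def]
    linarith
  have hc'0 : ∀ i, 1 ≤ i → 0 ≤ c' i := fun i hi => hδ0.le.trans (hc'δ i hi)
  have hmono : piFrac t G c ≤ piFrac t G c' := by
    apply le_csInf (S3.decompSet_nonempty G c' (by omega))
    rintro x ⟨f, hf, rfl⟩
    have h1 : piFrac t G c ≤ cliqueCost c f :=
      csInf_le ⟨0, fun x hx => S3.decompSet_bddBelow G hc x hx⟩ ⟨f, hf, rfl⟩
    have h2 : cliqueCost c f ≤ cliqueCost c' f := by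
      apply Finset.sum_le_sum
      intro K _
      by_cases hK : IsCliqueOf G K
      · apply mul_le_mul_of_nonneg_right _ (hf.1 K)
        simp only [hc'def]
        linarith
      · rw [hf.2.1 K hK, mul_zero, mul_zero]
    linarith
  have hlam : piFrac t G c' - ε/2 < piFrac t G c' := by linarith
  obtain ⟨z, hzsupp, hzcons, hzval⟩ := S3.farkas ht G hδ0 hc'δ hlam
  set z' : Finset (Fin n) → ℝ :=
    fun T => if T.card = t ∧ G.IsClique ((T : Finset (Fin n)) : Set (Fin n)) then z T - δ
      else 0 with hz'def
  have hz'val' : ∀ T : Finset (Fin n),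
      z' T = if T.card = t ∧ G.IsClique (T : Set (Fin n)) then z T - δ else 0 := fun T => rfl
  have hz'supp : ∀ T : Finset (Fin n), ¬(T.card = t ∧ G.IsClique (T : Set (Fin n))) →
      z' T = 0 := by
    intro T hT
    rw [hz'val' T, if_neg hT]
  have hz'cons : ∀ K, IsCliqueOf G K →
      ∑ T ∈ Finset.univ.filter (fun T : Finset (Fin n) => T ⊆ K ∧ T.card = t), z' T
        ≤ c K.card := by
    intro K hK
    have heach : ∀ T ∈ Finset.univ.filter (fun T : Finset (Fin n) => T ⊆ K ∧ T.card = t),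
        z' T = z T - δ := by
      intro T hT
      simp only [Finset.mem_filter, Finset.mem_univ, true_and] at hT
      have hTcl : G.IsClique (T : Set (Fin n)) := hK.2.subset (Finset.coe_subset.mpr hT.1)
      rw [hz'val' T, if_pos ⟨hT.2, hTcl⟩]
    rw [Finset.sum_congr rfl heach, Finset.sum_sub_distrib, Finset.sum_const, nsmul_eq_mul]
    have hzK := hzcons K hK
    by_cases hemp : (Finset.univ.filter (fun T : Finset (Fin n) => T ⊆ K ∧ T.card = t)) = ∅
    · rw [hemp]
      simp only [Finset.sum_empty, Finset.card_empty, Nat.cast_zero, zero_mul, sub_zero]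
      exact hc K.card (Finset.card_pos.mpr hK.1)
    · have hcard1 : 1 ≤ ((Finset.univ.filter
          (fun T : Finset (Fin n) => T ⊆ K ∧ T.card = t)).card : ℝ) := by
        have := Finset.card_pos.mpr (Finset.nonempty_of_ne_empty hemp)
        exact_mod_cast this
      have hcK : c' K.card = c K.card + δ := rfl
      nlinarith
  set B : ℝ := ∑ T : Finset (Fin n), |z' T| with hBdef
  have hB0 : 0 ≤ B := Finset.sum_nonneg (fun T _ => abs_nonneg _)
  have hz'lb : ∀ T : Finset (Fin n), -B ≤ z' T := by
    intro T
    have h1 : |z' T| ≤ B :=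
      Finset.single_le_sum (fun T _ => abs_nonneg (z' T)) (Finset.mem_univ T)
    have h2 := neg_abs_le (z' T)
    linarith
  have hz'mem : z' ∈ S3.region t c B G := ⟨hz'supp, hz'lb, hz'cons⟩
  have hz'dval : S3.dval z - δ * N ≤ S3.dval z' := by
    have hterm : ∀ T : Finset (Fin n), z T - δ ≤ z' T := by
      intro T
      by_cases h : T.card = t ∧ G.IsClique (T : Set (Fin n))
      · rw [hz'val' T, if_pos h]
      · rw [hz'val' T, if_neg h, hzsupp T h]
        linarith
    calc S3.dval z - δ * N = ∑ T : Finset (Fin n), (z T - δ) := by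
          rw [S3.dval, Finset.sum_sub_distrib, Finset.sum_const, nsmul_eq_mul, hNdef,
            Finset.card_univ]
          ring
      _ ≤ ∑ T : Finset (Fin n), z' T := Finset.sum_le_sum (fun T _ => hterm T)
      _ = S3.dval z' := rfl
  haveI : Nonempty (SimpleGraph (Fin n)) := ⟨⊥⟩
  obtain ⟨Hm, hHm⟩ := Finite.exists_max (fun H : SimpleGraph (Fin n) => S3.mu t c B H)
  obtain ⟨H₁, hH₁CM, hH₁mu⟩ := S3.exists_CM_maximizer ht hc hB0 (n*n - S3.Phi Hm) Hm
    (fun H₂ => hHm H₂) (le_refl _)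
  have step1 : S3.dval z' ≤ S3.mu t c B G := S3.le_mu ht hc hB0 hz'mem
  have step2 : S3.mu t c B G ≤ S3.mu t c B Hm := hHm G
  have step3 : S3.mu t c B H₁ ≤ piFrac t H₁ c := by
    obtain ⟨y, hy, hyval, -⟩ := S3.exists_opt (H := H₁) ht hc hB0
    rw [← hyval]
    exact S3.weak_duality ht hy
  have step4 : piFrac t H₁ c ≤ piFrac t H₀ c := hH₀max H₁ hH₁CM
  have hcard : δ * N ≤ ε / 2 := by
    have h1 : δ * (N + 1) = ε / 2 := by
      rw [hδdef]
      field_simp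
    nlinarith
  linarith [hH₁mu]
end

section
/- Let t ≥ 2, let n ≥ t, and let c = (c_i)_{i≥1} be a cost vector of nonnegative reals such that c_{i+1} - c_i ≤ c_t for every i ≥ t. Then for every complete multipartite graph H on n vertices, θ*_t(H, c) ≤ θ*_t(T_{n,t}, c), and moreover θ*_t(T_{n,t}, c) = θ_t(T_{n,t}, c). -/
open scoped Classical
open Finset

section Machinery
variable {n : ℕ} (p : Fin n → ℕ)

/-- fiber size -/
def mfib (c : ℕ) : ℕ := #(univ.filter (fun v : Fin n => p v = c))

/-- transversal sets of a color set `D` -/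
def Tr (D : Finset ℕ) : Finset (Finset (Fin n)) :=
  univ.filter (fun K => K.image p = D ∧ K.card = D.card)

lemma mem_Tr {D : Finset ℕ} {K : Finset (Fin n)} :
    K ∈ Tr p D ↔ K.image p = D ∧ K.card = D.card := by
  simp [Tr]

lemma injOn_of_mem_Tr {D : Finset ℕ} {K : Finset (Fin n)} (h : K ∈ Tr p D) :
    Set.InjOn p ↑K := by
  rw [mem_Tr] at h
  exact Finset.injOn_of_card_image_eq (by rw [h.1, h.2])

lemma card_Tr (D : Finset ℕ) : (Tr p D).card = ∏ c ∈ D, mfib p c := by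
  classical
  induction D using Finset.induction_on with
  | empty =>
      have : Tr p ∅ = {∅} := by
        ext K
        simp only [mem_Tr, Finset.image_eq_empty, Finset.card_empty, Finset.mem_singleton]
        constructor
        · rintro ⟨h, -⟩; exact h
        · rintro rfl; simp
      rw [this]; simp
  | @insert c D hc ih =>
      have hTr : Tr p (insert c D) =
          ((univ.filter (fun v : Fin n => p v = c)) ×ˢ Tr p D).image
            (fun q => insert q.1 q.2) := by
        ext K
        constructor
        · intro hK
          rw [mem_Tr] at hK
          obtain ⟨him, hcard⟩ := hK
          have hinj : Set.InjOn p ↑K := Finset.injOn_of_card_image_eq (by rw [him, hcard])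
          have hcK : c ∈ K.image p := by rw [him]; exact mem_insert_self c D
          obtain ⟨v, hvK, hvc⟩ := Finset.mem_image.1 hcK
          refine Finset.mem_image.2 ⟨(v, K.erase v), ?_, ?_⟩
          · rw [Finset.mem_product]
            constructor
            · simp [hvc]
            · rw [mem_Tr]
              constructor
              · ext d
                simp only [Finset.mem_image]
                constructor
                · rintro ⟨u, hu, rfl⟩
                  have huK := Finset.mem_of_mem_erase hu
                  have : p u ∈ insert c D := by rw [← him]; exact Finset.mem_image_of_mem p huK
                  rcases Finset.mem_insert.1 this with h | h
                  · exfalso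
                    exact (Finset.ne_of_mem_erase hu) (hinj huK hvK (by rw [h, hvc]))
                  · exact h
                · intro hd
                  have : d ∈ insert c D := Finset.mem_insert_of_mem hd
                  rw [← him] at this
                  obtain ⟨u, huK, hud⟩ := Finset.mem_image.1 this
                  refine ⟨u, ?_, hud⟩
                  refine Finset.mem_erase.2 ⟨?_, huK⟩
                  rintro rfl
                  rw [hvc] at hud; exact hc (hud ▸ hd)
              · rw [Finset.card_erase_of_mem hvK, hcard, Finset.card_insert_of_notMem hc]
                omega
          · simp only
            exact Finset.insert_erase hvK
        · intro hK
          obtain ⟨⟨v, J⟩, hmem, rfl⟩ := Finset.mem_image.1 hK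
          rw [Finset.mem_product] at hmem
          obtain ⟨hv, hJ⟩ := hmem
          simp only [Finset.mem_filter] at hv
          rw [mem_Tr] at hJ ⊢
          have hvJ : v ∉ J := by
            intro hmem
            have : p v ∈ J.image p := Finset.mem_image_of_mem p hmem
            rw [hJ.1, hv.2] at this
            exact hc this
          constructor
          · simp only [Finset.image_insert, hv.2, hJ.1]
          · rw [Finset.card_insert_of_notMem hvJ, hJ.2,
              Finset.card_insert_of_notMem hc]
      rw [hTr, Finset.card_image_of_injOn, Finset.card_product, Finset.prod_insert hc, ← ih]
      · rfl
      · rintro ⟨v, J⟩ hvJ ⟨v', J'⟩ hvJ' heq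
        simp only [Finset.mem_coe, Finset.mem_product, Finset.mem_filter, mem_Tr] at hvJ hvJ'
        simp only at heq
        have hvJmem : v ∉ J := by
          intro hmem
          have : p v ∈ J.image p := Finset.mem_image_of_mem p hmem
          rw [hvJ.2.1, hvJ.1.2] at this
          exact hc this
        have hvJ'mem : v' ∉ J' := by
          intro hmem
          have : p v' ∈ J'.image p := Finset.mem_image_of_mem p hmem
          rw [hvJ'.2.1, hvJ'.1.2] at this
          exact hc this
        have hKinj : Set.InjOn p ↑(insert v J) := by
          apply Finset.injOn_of_card_image_eq
          rw [Finset.image_insert, hvJ.1.2, hvJ.2.1,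
            Finset.card_insert_of_notMem hvJmem, hvJ.2.2,
            Finset.card_insert_of_notMem hc]
        have hv'mem : v' ∈ insert v J := by rw [heq]; exact Finset.mem_insert_self v' J'
        have hvv' : v = v' := by
          apply hKinj (Finset.mem_insert_self v J) hv'mem
          rw [hvJ.1.2, hvJ'.1.2]
        subst hvv'
        have : J = J' := by
          have h1 := Finset.erase_insert hvJmem
          have h2 := Finset.erase_insert hvJ'mem
          rw [← h1, ← h2, heq]
        rw [this]

lemma card_Tr_filter_subset {D S : Finset ℕ} {T : Finset (Fin n)}
    (hinj : Set.InjOn p ↑T) (hTS : T.image p = S) (hSD : S ⊆ D) :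
    ((Tr p D).filter (fun K => T ⊆ K)).card = (Tr p (D \ S)).card := by
  classical
  apply Finset.card_bij' (fun K _ => K \ T) (fun J _ => J ∪ T)
  · intro K hK
    rw [Finset.mem_filter] at hK
    obtain ⟨hKTr, hTK⟩ := hK
    rw [mem_Tr] at hKTr ⊢
    have hKinj : Set.InjOn p ↑K := Finset.injOn_of_card_image_eq (by rw [hKTr.1, hKTr.2])
    constructor
    · ext d
      simp only [Finset.mem_image, Finset.mem_sdiff]
      constructor
      · rintro ⟨u, ⟨huK, huT⟩, rfl⟩
        constructor
        · rw [← hKTr.1]; exact Finset.mem_image_of_mem p huK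
        · intro hdS
          rw [← hTS] at hdS
          obtain ⟨w, hwT, hwp⟩ := Finset.mem_image.1 hdS
          exact huT (hKinj (hTK hwT) huK hwp ▸ hwT)
      · rintro ⟨hdD, hdS⟩
        rw [← hKTr.1] at hdD
        obtain ⟨u, huK, hup⟩ := Finset.mem_image.1 hdD
        refine ⟨u, ⟨huK, ?_⟩, hup⟩
        intro huT
        exact hdS (by rw [← hTS, ← hup]; exact Finset.mem_image_of_mem p huT)
    · rw [Finset.card_sdiff_of_subset hTK, Finset.card_sdiff_of_subset hSD, hKTr.2, ← hTS,
        Finset.card_image_of_injOn hinj]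
  · intro J hJ
    rw [mem_Tr] at hJ
    have hdisj : Disjoint J T := by
      rw [Finset.disjoint_left]
      intro u huJ huT
      have h1 : p u ∈ D \ S := by rw [← hJ.1]; exact Finset.mem_image_of_mem p huJ
      have h2 : p u ∈ S := by rw [← hTS]; exact Finset.mem_image_of_mem p huT
      exact (Finset.mem_sdiff.1 h1).2 h2
    rw [Finset.mem_filter, mem_Tr]
    refine ⟨⟨?_, ?_⟩, Finset.subset_union_right⟩
    · rw [Finset.image_union, hJ.1, hTS, Finset.sdiff_union_of_subset hSD]
    · rw [Finset.card_union_of_disjoint hdisj, hJ.2, Finset.card_sdiff_of_subset hSD, ← hTS,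
        Finset.card_image_of_injOn hinj]
      have : S.card ≤ D.card := Finset.card_le_card hSD
      rw [← hTS, Finset.card_image_of_injOn hinj] at this
      omega
  · intro K hK
    rw [Finset.mem_filter] at hK
    exact Finset.sdiff_union_of_subset hK.2
  · intro J hJ
    rw [mem_Tr] at hJ
    have hdisj : Disjoint J T := by
      rw [Finset.disjoint_left]
      intro u huJ huT
      have h1 : p u ∈ D \ S := by rw [← hJ.1]; exact Finset.mem_image_of_mem p huJ
      have h2 : p u ∈ S := by rw [← hTS]; exact Finset.mem_image_of_mem p huT
      exact (Finset.mem_sdiff.1 h1).2 h2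
    rw [Finset.union_sdiff_right, Finset.sdiff_eq_self_of_disjoint hdisj]

lemma sum_mfib : ∑ c ∈ univ.image p, mfib p c = n := by
  have := Finset.card_eq_sum_card_fiberwise
    (fun v (_ : v ∈ (univ : Finset (Fin n))) => Finset.mem_image_of_mem p (Finset.mem_univ v))
  simpa [mfib] using this.symm

end Machinery

section Helpers

variable {n : ℕ}

lemma clique_iff_injOn {G : SimpleGraph (Fin n)} {p : Fin n → ℕ}
    (hG : ∀ u v, G.Adj u v ↔ p u ≠ p v) (K : Finset (Fin n)) :
    G.IsClique (K : Set (Fin n)) ↔ Set.InjOn p ↑K := by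
  constructor
  · intro h u hu v hv hpv
    by_contra hne
    exact (hG u v).1 (h hu hv hne) hpv
  · intro h u hu v hv hne
    exact (hG u v).2 (fun hp => hne (h hu hv hp))

/-- telescoping sum for antitone g -/
lemma tele_nat (g : ℕ → ℕ) (hg : ∀ i j, i ≤ j → g j ≤ g i) :
    ∀ k a, a ≤ k + 1 → ∑ j ∈ Icc a k, (g (j-1) - g j) = g (a-1) - g k := by
  intro k
  induction k with
  | zero =>
      intro a ha
      interval_cases a
      · simp
      · simp
  | succ k ih =>
      intro a ha
      rcases Nat.lt_or_ge a (k+2) with h | h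
      · have ha' : a ≤ k + 1 := by omega
        rw [Finset.sum_Icc_succ_top ha', ih a ha']
        rw [show k + 1 - 1 = k from rfl]
        have h1 : g (k+1) ≤ g k := hg k (k+1) (by omega)
        have h2 : g k ≤ g (a-1) := hg (a-1) k (by omega)
        omega
      · have : a = k + 2 := by omega
        subst this
        simp

/-- Abel-type summation for antitone g -/
lemma abel_nat (g : ℕ → ℕ) (hg : ∀ i j, i ≤ j → g j ≤ g i) :
    ∀ k a, a ≤ k + 1 →
      (∑ j ∈ Icc a k, (j - a + 1) * (g (j-1) - g j)) + (k + 1 - a) * g k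
        = ∑ j ∈ Icc a k, g (j-1) := by
  intro k
  induction k with
  | zero =>
      intro a ha
      interval_cases a
      · simp
      · simp
  | succ k ih =>
      intro a ha
      rcases Nat.lt_or_ge a (k+2) with h | h
      · have ha' : a ≤ k + 1 := by omega
        rw [Finset.sum_Icc_succ_top ha', Finset.sum_Icc_succ_top ha']
        rw [show k + 1 - 1 = k from rfl]
        have h1 : g (k+1) ≤ g k := hg k (k+1) (by omega)
        have ihEq := ih a ha'
        have e1 : k + 1 + 1 - a = k + 1 - a + 1 := by omega
        have e2 : k + 1 - a + 1 = k + 2 - a := by omega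
        rw [e1]
        have hexp : (k + 1 - a + 1) * (g k - g (k+1))
            = (k + 1 - a + 1) * g k - (k + 1 - a + 1) * g (k+1) := Nat.mul_sub _ _ _
        have hmul : (k + 1 - a + 1) * g k = (k + 1 - a) * g k + g k := Nat.succ_mul _ _
        have hP : (k + 1 - a + 1) * g (k+1) ≤ (k + 1 - a + 1) * g k :=
          Nat.mul_le_mul_left _ h1
        rw [hexp]
        omega
      · have : a = k + 2 := by omega
        subst this
        simp

/-- product over an r-element Finset of an antitone function is at most the
product over `range r` -/
lemma prod_anti_le (g : ℕ → ℕ) (hg : ∀ i j, i ≤ j → g j ≤ g i) :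
    ∀ (r : ℕ) (J : Finset ℕ), J.card = r → ∏ i ∈ J, g i ≤ ∏ i ∈ range r, g i := by
  intro r
  induction r with
  | zero => intro J hJ; rw [Finset.card_eq_zero] at hJ; subst hJ; simp
  | succ r ih =>
      intro J hJ
      have hne : J.Nonempty := by rw [← Finset.card_pos, hJ]; omega
      set M := J.max' hne with hM
      have hMJ : M ∈ J := J.max'_mem hne
      have hcard : (J.erase M).card = r := by rw [Finset.card_erase_of_mem hMJ, hJ]; omega
      have hrange : J ⊆ range (M+1) := by
        intro x hx
        rw [Finset.mem_range]
        have := J.le_max' x hx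
        omega
      have hrM : r ≤ M := by
        have := Finset.card_le_card hrange
        rw [hJ, Finset.card_range] at this
        omega
      calc ∏ i ∈ J, g i = g M * ∏ i ∈ J.erase M, g i := (Finset.mul_prod_erase J g hMJ).symm
        _ ≤ g r * ∏ i ∈ range r, g i :=
            Nat.mul_le_mul (hg r M hrM) (ih _ hcard)
        _ = ∏ i ∈ range (r+1), g i := by rw [Finset.prod_range_succ]; ring

/-- cost of a clique of size j is at most (j - t + 1) times cost t -/
lemma cost_step (c : ℕ → ℝ) (t : ℕ) (hct : 0 ≤ c t)
    (hstep : ∀ i, t ≤ i → c (i + 1) - c i ≤ c t) :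
    ∀ j, t ≤ j → c j ≤ ((j - t + 1 : ℕ) : ℝ) * c t := by
  intro j
  induction j with
  | zero =>
      intro h
      have : t = 0 := by omega
      subst this
      simp
  | succ j ih =>
      intro h
      rcases Nat.lt_or_ge j t with h' | h'
      · have : t = j + 1 := by omega
        subst this
        simp
      · have h1 := hstep j h'
        have h2 := ih h'
        have e1 : j + 1 - t + 1 = (j - t + 1) + 1 := by omega
        rw [e1]
        push_cast at h2 ⊢
        linarith

end Helpers

section LemT

/-- count of naturals below n congruent to r mod t, as a Finset of ℕ -/
def modFib (n t r : ℕ) : Finset ℕ := (range n).filter (fun v => v % t = r)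

lemma modFib_mono (n t : ℕ) {r r' : ℕ} (hr' : r' < t) (hrr : r ≤ r') :
    (modFib n t r').card ≤ (modFib n t r).card := by
  classical
  apply Finset.card_le_card_of_injOn (fun v => v - (r' - r))
  · intro v hv
    simp only [modFib, Finset.mem_coe, Finset.mem_filter, Finset.mem_range] at hv ⊢
    obtain ⟨hvn, hvm⟩ := hv
    have hvr : r' ≤ v := by
      have := Nat.mod_le v t
      omega
    constructor
    · omega
    · have hdm := Nat.div_add_mod v t
      have hrt : r < t := by omega
      have : v - (r' - r) = t * (v / t) + r := by omega
      rw [this, Nat.mul_add_mod, Nat.mod_eq_of_lt hrt]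
  · intro v₁ h₁ v₂ h₂ heq
    simp only [modFib, Finset.coe_filter, Set.mem_setOf_eq, Finset.mem_range] at h₁ h₂
    have hv₁ : r' ≤ v₁ := by have := Nat.mod_le v₁ t; omega
    have hv₂ : r' ≤ v₂ := by have := Nat.mod_le v₂ t; omega
    have heq' : v₁ - (r' - r) = v₂ - (r' - r) := heq
    omega

lemma modFib_gap (n t : ℕ) {r r' : ℕ} (hr' : r' < t) (hrr : r ≤ r') :
    (modFib n t r).card ≤ (modFib n t r').card + 1 := by
  classical
  set d := r' - r with hd
  set B := (modFib n t r).filter (fun v => v + d < n) with hB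
  have hBsub : B ⊆ modFib n t r := Finset.filter_subset _ _
  have key : ∀ v₁ v₂ : ℕ, v₁ % t = v₂ % t → v₁ < v₂ → v₁ + t ≤ v₂ := by
    intro v₁ v₂ hm hlt
    have h1 := Nat.div_add_mod v₁ t
    have h2 := Nat.div_add_mod v₂ t
    have hq : v₁ / t < v₂ / t := by
      by_contra hq
      push_neg at hq
      have := Nat.mul_le_mul_left t hq
      omega
    have h3 : t * (v₁ / t + 1) ≤ t * (v₂ / t) := Nat.mul_le_mul_left t (Nat.succ_le_of_lt hq)
    have h4 : t * (v₁ / t + 1) = t * (v₁ / t) + t := by ring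
    omega
  -- at most one element of modFib n t r lies outside B
  have hsmall : ((modFib n t r) \ B).card ≤ 1 := by
    rw [Finset.card_le_one]
    intro v₁ h₁ v₂ h₂
    simp only [hB, Finset.mem_sdiff, Finset.mem_filter, modFib, Finset.mem_range] at h₁ h₂
    push_neg at h₁ h₂
    obtain ⟨⟨hv₁n, hv₁m⟩, hv₁big⟩ := h₁
    obtain ⟨⟨hv₂n, hv₂m⟩, hv₂big⟩ := h₂
    have hv₁big' := hv₁big ⟨hv₁n, hv₁m⟩
    have hv₂big' := hv₂big ⟨hv₂n, hv₂m⟩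
    by_contra hne
    rcases Nat.lt_or_ge v₁ v₂ with hlt | hge
    · have := key v₁ v₂ (by omega) hlt
      omega
    · rcases Nat.lt_or_ge v₂ v₁ with hlt | hge'
      · have := key v₂ v₁ (by omega) hlt
        omega
      · omega
  have hcardB : (modFib n t r).card ≤ B.card + 1 := by
    have := Finset.card_sdiff_add_card_eq_card hBsub
    omega
  have hBle : B.card ≤ (modFib n t r').card := by
    apply Finset.card_le_card_of_injOn (fun v => v + d)
    · intro v hv
      simp only [hB, Finset.mem_coe, Finset.mem_filter, modFib, Finset.mem_range] at hv ⊢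
      obtain ⟨⟨hvn, hvm⟩, hvd⟩ := hv
      refine ⟨hvd, ?_⟩
      have hdm := Nat.div_add_mod v t
      have : v + d = t * (v / t) + r' := by omega
      rw [this, Nat.mul_add_mod, Nat.mod_eq_of_lt hr']
    · intro v₁ _ v₂ _ heq
      have heq' : v₁ + d = v₂ + d := heq
      omega
  omega

/-- the product of a balanced vector is determined by its sum -/
lemma balanced_prod {t : ℕ} (ht : 1 ≤ t) (b : Fin t → ℕ) (n : ℕ)
    (hsum : ∑ i, b i = n) (hbal : ∀ i j, b i ≤ b j + 1) :
    ∏ i, b i = (n / t + 1) ^ (n % t) * (n / t) ^ (t - n % t) := by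
  classical
  have hne : (univ : Finset (Fin t)).Nonempty := by
    rw [Finset.univ_nonempty_iff]
    exact Fin.pos_iff_nonempty.1 (by omega)
  obtain ⟨i₀, -, hmin⟩ := Finset.exists_min_image univ b hne
  set a := b i₀ with ha
  have hval : ∀ i, b i = a ∨ b i = a + 1 := by
    intro i
    have h1 := hmin i (Finset.mem_univ i)
    have h2 := hbal i i₀
    omega
  set s' := (univ.filter (fun i => b i = a + 1)).card with hs'
  have hcards : s' + (univ.filter (fun i => ¬ b i = a + 1)).card = t := by
    rw [hs']
    rw [Finset.card_filter_add_card_filter_not]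
    simp
  have hsum2 : n = t * a + s' := by
    rw [← hsum]
    rw [← Finset.sum_filter_add_sum_filter_not univ (fun i => b i = a + 1)]
    have e1 : ∑ i ∈ univ.filter (fun i => b i = a + 1), b i = s' * (a + 1) := by
      rw [Finset.sum_congr rfl (fun i hi => (Finset.mem_filter.1 hi).2), Finset.sum_const,
        smul_eq_mul]
    have e2 : ∑ i ∈ univ.filter (fun i => ¬ b i = a + 1), b i
        = (univ.filter (fun i => ¬ b i = a + 1)).card * a := by
      rw [Finset.sum_congr rfl (fun i hi => ?_), Finset.sum_const, smul_eq_mul]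
      have := (Finset.mem_filter.1 hi).2
      rcases hval i with h | h
      · exact h
      · exact absurd h this
    rw [e1, e2]
    nlinarith [hcards]
  have hs't : s' < t := by
    rcases Nat.lt_or_ge s' t with h | h
    · exact h
    · exfalso
      have : (univ.filter (fun i => b i = a + 1)) = univ := by
        apply Finset.eq_univ_of_card
        have hle : (univ.filter (fun i => b i = a + 1)).card ≤ (univ : Finset (Fin t)).card :=
          Finset.card_le_card (Finset.filter_subset _ _)
        simp only [Finset.card_univ, Fintype.card_fin] at hle ⊢
        omega
      have hi₀ : b i₀ = a + 1 := by
        have := Finset.mem_filter.1 (this ▸ Finset.mem_univ i₀)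
        exact this.2
      omega
  have hq : n / t = a := by
    rw [hsum2, Nat.mul_add_div (by omega), Nat.div_eq_of_lt hs't]
    omega
  have hr : n % t = s' := by
    rw [hsum2, Nat.mul_add_mod, Nat.mod_eq_of_lt hs't]
  rw [hq, hr]
  rw [← Finset.prod_filter_mul_prod_filter_not univ (fun i => b i = a + 1)]
  have e1 : ∏ i ∈ univ.filter (fun i => b i = a + 1), b i = (a + 1) ^ s' := by
    rw [Finset.prod_congr rfl (fun i hi => (Finset.mem_filter.1 hi).2), Finset.prod_const]
  have e2 : ∏ i ∈ univ.filter (fun i => ¬ b i = a + 1), b i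
      = a ^ (t - s') := by
    have hcongr : ∀ i ∈ univ.filter (fun i => ¬ b i = a + 1), b i = a := by
      intro i hi
      have := (Finset.mem_filter.1 hi).2
      rcases hval i with h | h
      · exact h
      · exact absurd h this
    rw [Finset.prod_congr rfl hcongr, Finset.prod_const]
    congr 1
    omega
  rw [e1, e2]

end LemT

section Smooth

lemma smooth_le {t n : ℕ} (ht : 1 ≤ t) :
    ∀ (μ : ℕ) (b : Fin t → ℕ), (∑ i, b i * b i) ≤ μ → (∑ i, b i) = n →
      ∏ i, b i ≤ (n / t + 1) ^ (n % t) * (n / t) ^ (t - n % t) := by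
  intro μ
  induction μ using Nat.strong_induction_on with
  | _ μ ih =>
    intro b hμ hsum
    by_cases hbal : ∀ i j, b i ≤ b j + 1
    · exact le_of_eq (balanced_prod ht b n hsum hbal)
    · push_neg at hbal
      obtain ⟨i, j, hij⟩ := hbal
      have hne : i ≠ j := by intro h; subst h; omega
      obtain ⟨d, hd⟩ : ∃ d, b i = b j + 2 + d := ⟨b i - (b j + 2), by omega⟩
      set b' := Function.update (Function.update b i (b i - 1)) j (b j + 1) with hb'
      have hbi' : b' i = b j + 1 + d := by
        rw [hb', Function.update_of_ne hne, Function.update_self]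
        omega
      have hbj' : b' j = b j + 1 := by
        rw [hb', Function.update_self]
      have hrest : ∀ x ∈ (univ.erase j).erase i, b' x = b x := by
        intro x hx
        have hxi : x ≠ i := (Finset.mem_erase.1 hx).1
        have hxj : x ≠ j := (Finset.mem_erase.1 (Finset.mem_erase.1 hx).2).1
        rw [hb', Function.update_of_ne hxj, Function.update_of_ne hxi]
      have hmemi : i ∈ univ.erase j := Finset.mem_erase.2 ⟨hne, Finset.mem_univ i⟩
      have split : ∀ (g : Fin t → ℕ),
          ∑ x, g x = g j + (g i + ∑ x ∈ (univ.erase j).erase i, g x) := by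
        intro g
        rw [← Finset.add_sum_erase _ g (Finset.mem_univ j)]
        congr 1
        rw [← Finset.add_sum_erase _ g hmemi]
      have splitP : ∀ (g : Fin t → ℕ),
          ∏ x, g x = g j * (g i * ∏ x ∈ (univ.erase j).erase i, g x) := by
        intro g
        rw [← Finset.mul_prod_erase _ g (Finset.mem_univ j)]
        congr 1
        rw [← Finset.mul_prod_erase _ g hmemi]
      have htail : ∑ x ∈ (univ.erase j).erase i, b' x = ∑ x ∈ (univ.erase j).erase i, b x :=
        Finset.sum_congr rfl hrest
      have htailsq : ∑ x ∈ (univ.erase j).erase i, b' x * b' x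
          = ∑ x ∈ (univ.erase j).erase i, b x * b x :=
        Finset.sum_congr rfl (fun x hx => by rw [hrest x hx])
      have htailP : ∏ x ∈ (univ.erase j).erase i, b' x = ∏ x ∈ (univ.erase j).erase i, b x :=
        Finset.prod_congr rfl hrest
      have hsum' : ∑ x, b' x = n := by
        rw [split b', htail, hbi', hbj', ← hsum, split b, hd]
        ring
      have hsq : (∑ x, b' x * b' x) + 1 ≤ ∑ x, b x * b x := by
        have e1 := split (fun x => b' x * b' x)
        have e2 := split (fun x => b x * b x)
        rw [e1, e2, htailsq, hbi', hbj', hd]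
        nlinarith [Nat.zero_le d, Nat.zero_le (b j)]
      have hprod : ∏ x, b x ≤ ∏ x, b' x := by
        rw [splitP b, splitP b', htailP, hbi', hbj', hd]
        have hhead : (b j + 2 + d) * (b j) ≤ (b j + 1 + d) * (b j + 1) := by nlinarith
        calc (b j) * ((b j + 2 + d) * ∏ x ∈ (univ.erase j).erase i, b x)
            = ((b j + 2 + d) * (b j)) * ∏ x ∈ (univ.erase j).erase i, b x := by ring
          _ ≤ ((b j + 1 + d) * (b j + 1)) * ∏ x ∈ (univ.erase j).erase i, b x :=
              Nat.mul_le_mul_right _ hhead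
          _ = (b j + 1) * ((b j + 1 + d) * ∏ x ∈ (univ.erase j).erase i, b x) := by ring
      exact hprod.trans (ih (∑ x, b' x * b' x) (by omega) b' le_rfl hsum')

lemma modFib_sum (n t : ℕ) (ht : 1 ≤ t) : ∑ r ∈ range t, (modFib n t r).card = n := by
  have := Finset.card_eq_sum_card_fiberwise
    (f := fun v : ℕ => v % t) (s := range n) (t := range t)
    (fun x _ => Finset.mem_range.2 (Nat.mod_lt x (by omega)))
  rw [Finset.card_range] at this
  exact this.symm

lemma modFib_balanced (n t : ℕ) (i j : Fin t) :
    (modFib n t (i : ℕ)).card ≤ (modFib n t (j : ℕ)).card + 1 := by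
  rcases le_total (i : ℕ) (j : ℕ) with h | h
  · exact modFib_gap n t j.2 h
  · exact (modFib_mono n t i.2 h).trans (Nat.le_succ _)

lemma modFib_prod (n t : ℕ) (ht : 1 ≤ t) :
    ∏ r ∈ range t, (modFib n t r).card
      = (n / t + 1) ^ (n % t) * (n / t) ^ (t - n % t) := by
  rw [← Fin.prod_univ_eq_prod_range (fun r => (modFib n t r).card) t]
  apply balanced_prod ht (fun r : Fin t => (modFib n t (r : ℕ)).card) n
  · rw [Fin.sum_univ_eq_sum_range (fun r => (modFib n t r).card) t]
    exact modFib_sum n t ht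
  · exact modFib_balanced n t

/-- Lemma T: product of t naturals summing to n is at most the Turán product -/
lemma lemT {t n : ℕ} (ht : 1 ≤ t) (b : Fin t → ℕ) (hsum : ∑ i, b i = n) :
    ∏ i, b i ≤ ∏ r ∈ range t, (modFib n t r).card := by
  rw [modFib_prod n t ht]
  exact smooth_le ht (∑ i, b i * b i) b le_rfl hsum

/-- fibers of the Turán coloring agree with modFib -/
lemma mfib_turan (n t r : ℕ) :
    mfib (fun v : Fin n => (v : ℕ) % t) r = (modFib n t r).card := by
  classical
  unfold mfib modFib
  apply Finset.card_bij (fun (v : Fin n) _ => (v : ℕ))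
  · intro v hv
    simp only [Finset.mem_filter, Finset.mem_univ, true_and] at hv
    simp only [Finset.mem_filter, Finset.mem_range]
    exact ⟨v.2, hv⟩
  · intro v₁ _ v₂ _ h
    exact Fin.val_injective h
  · intro x hx
    simp only [Finset.mem_filter, Finset.mem_range] at hx
    exact ⟨⟨x, hx.1⟩, by simp [hx.2]⟩

end Smooth

section Cover

variable {n : ℕ}

lemma mfib_le (p : Fin n → ℕ) (c : ℕ) : mfib p c ≤ n := by
  unfold mfib
  calc #(univ.filter (fun v : Fin n => p v = c)) ≤ #(univ : Finset (Fin n)) :=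
        Finset.card_le_card (Finset.filter_subset _ _)
    _ = n := by simp

lemma exists_enum (p : Fin n → ℕ) :
    ∃ ee : ℕ → ℕ,
      ((range (univ.image p).card).image ee = univ.image p) ∧
      (Set.InjOn ee ↑(range (univ.image p).card)) ∧
      (∀ i j, i ≤ j → j < (univ.image p).card → mfib p (ee j) ≤ mfib p (ee i)) := by
  classical
  set C := univ.image p with hC
  set k := C.card with hk
  set e₀ : Fin k ≃o {x // x ∈ C} := C.orderIsoOfFin rfl with he₀
  set key : Fin k → ℕ := fun i => n - mfib p ((e₀ i : ℕ)) with hkey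
  set σ := Tuple.sort key with hσ
  set ee : ℕ → ℕ := fun i => if h : i < k then ((e₀ (σ ⟨i, h⟩) : ℕ)) else 0 with hee
  have hinj : Set.InjOn ee ↑(range k) := by
    intro i hi j hj hij
    simp only [Finset.coe_range, Set.mem_Iio] at hi hj
    rw [hee] at hij
    simp only [dif_pos hi, dif_pos hj] at hij
    have : (⟨i, hi⟩ : Fin k) = ⟨j, hj⟩ := σ.injective (e₀.injective (Subtype.coe_injective hij))
    exact congrArg Fin.val this
  refine ⟨ee, ?_, hinj, ?_⟩
  · apply Finset.eq_of_subset_of_card_le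
    · intro x hx
      obtain ⟨i, hi, rfl⟩ := Finset.mem_image.1 hx
      rw [Finset.mem_range] at hi
      rw [hee]
      simp only [dif_pos hi]
      exact (e₀ (σ ⟨i, hi⟩)).2
    · rw [Finset.card_image_of_injOn hinj, Finset.card_range]
  · intro i j hij hjk
    have hik : i < k := by omega
    have hmono := Tuple.monotone_sort key
    have h1 : key (σ ⟨i, hik⟩) ≤ key (σ ⟨j, hjk⟩) := by
      have : (⟨i, hik⟩ : Fin k) ≤ ⟨j, hjk⟩ := by simp [Fin.le_def]; omega
      exact hmono this
    rw [hkey] at h1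
    simp only at h1
    have hle1 := mfib_le p ((e₀ (σ ⟨i, hik⟩) : ℕ))
    have hle2 := mfib_le p ((e₀ (σ ⟨j, hjk⟩) : ℕ))
    rw [hee]
    simp only [dif_pos hik, dif_pos hjk]
    omega

end Cover



section CoverMain

variable {n : ℕ}

lemma cover_exists (t : ℕ) (ht : 2 ≤ t) (p : Fin n → ℕ)
    (G : SimpleGraph (Fin n)) (hG : ∀ u v, G.Adj u v ↔ p u ≠ p v)
    (c : ℕ → ℝ) (hc : ∀ i, 1 ≤ i → 0 ≤ c i)
    (hstep : ∀ i, t ≤ i → c (i + 1) - c i ≤ c t)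
    (htk : t ≤ (univ.image p).card) :
    ∃ b : Fin t → ℕ, (∑ i, b i) = n ∧
      ∃ f, IsFracCover t G f ∧ cliqueCost c f ≤ c t * ((∏ i, b i : ℕ) : ℝ) := by
  classical
  obtain ⟨ee, himg, hinj, hsort⟩ := exists_enum p
  set C := univ.image p with hC
  set k := C.card with hk
  -- extended antitone fiber-size sequence
  set mm : ℕ → ℕ := fun i => if i < k then mfib p (ee i) else 0 with hmm
  have hmm_anti : ∀ i j, i ≤ j → mm j ≤ mm i := by
    intro i j hij
    rw [hmm]
    simp only
    by_cases hj : j < k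
    · rw [if_pos hj, if_pos (by omega)]
      exact hsort i j hij hj
    · rw [if_neg hj]
      omega
  have hmm_pos : ∀ i, i < k → 1 ≤ mm i := by
    intro i hi
    have : ee i ∈ C := by
      rw [← himg]
      exact Finset.mem_image_of_mem ee (Finset.mem_range.2 hi)
    obtain ⟨v, -, hv⟩ := Finset.mem_image.1 this
    rw [hmm]
    simp only [if_pos hi]
    exact Finset.card_pos.2 ⟨v, Finset.mem_filter.2 ⟨Finset.mem_univ v, hv⟩⟩
  have hmm_eq : ∀ i, i < k → mm i = mfib p (ee i) := by
    intro i hi; rw [hmm]; simp only [if_pos hi]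
  have hmmk : mm k = 0 := by rw [hmm]; simp
  -- chain of color sets
  set D : ℕ → Finset ℕ := fun j => (range j).image ee with hD
  have hD_card : ∀ j, j ≤ k → (D j).card = j := by
    intro j hj
    rw [hD]
    simp only
    have hsub : (↑(range j) : Set ℕ) ⊆ ↑(range k) := by
      intro x hx
      simp only [Finset.coe_range, Set.mem_Iio] at hx ⊢
      omega
    rw [Finset.card_image_of_injOn (hinj.mono hsub), Finset.card_range]
  set M : ℕ → ℕ := fun j => ∏ x ∈ D j, mfib p x with hM
  have hM_eq : ∀ j, j ≤ k → M j = ∏ i ∈ range j, mm i := by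
    intro j hj
    rw [hM, hD]
    simp only
    rw [Finset.prod_image (fun x hx y hy hxy => hinj
      (by simp only [Finset.coe_range, Set.mem_Iio]; exact (Finset.mem_range.1 hx).trans_le hj)
      (by simp only [Finset.coe_range, Set.mem_Iio]; exact (Finset.mem_range.1 hy).trans_le hj)
      hxy)]
    apply Finset.prod_congr rfl
    intro i hi
    rw [hmm_eq i ((Finset.mem_range.1 hi).trans_le hj)]
  have hM_pos : ∀ j, j ≤ k → 0 < M j := by
    intro j hj
    rw [hM_eq j hj]
    apply Finset.prod_pos
    intro i hi
    exact hmm_pos i ((Finset.mem_range.1 hi).trans_le hj)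
  set Q : ℕ := ∏ i ∈ range (t-1), mm i with hQ
  set y : ℕ → ℕ := fun j => Q * (mm (j-1) - mm j) with hy
  set w : ℕ → ℝ := fun j => (y j : ℝ) / (M j : ℝ) with hw
  set f : Finset (Fin n) → ℝ :=
    fun K => ∑ j ∈ Icc t k, if K ∈ Tr p (D j) then w j else 0 with hf
  have hw_nonneg : ∀ j, 0 ≤ w j := by
    intro j
    rw [hw]
    positivity
  have hf_nonneg : ∀ K, 0 ≤ f K := by
    intro K
    rw [hf]
    apply Finset.sum_nonneg
    intro j _
    by_cases h : K ∈ Tr p (D j)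
    · rw [if_pos h]; exact hw_nonneg j
    · rw [if_neg h]
  have hTr_clique : ∀ j, j ∈ Icc t k → ∀ K, K ∈ Tr p (D j) → IsCliqueOf G K := by
    intro j hj K hK
    rw [Finset.mem_Icc] at hj
    have hKcard : K.card = j := by
      rw [(mem_Tr p).1 hK |>.2, hD_card j hj.2]
    constructor
    · rw [← Finset.card_pos, hKcard]; omega
    · exact (clique_iff_injOn hG K).2 (injOn_of_mem_Tr p hK)
  have hf_zero : ∀ K, ¬ IsCliqueOf G K → f K = 0 := by
    intro K hK
    rw [hf]
    apply Finset.sum_eq_zero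
    intro j hj
    rw [if_neg (fun h => hK (hTr_clique j hj K h))]
  -- the vector b
  set R : ℕ := ∑ i ∈ Finset.Ico (t-1) k, mm i with hR
  set b : Fin t → ℕ := fun s => if (s : ℕ) < t - 1 then mm (s : ℕ) else R with hb
  have hsum_range : ∑ i ∈ range k, mm i = n := by
    have h1 : ∑ i ∈ range k, mm i = ∑ i ∈ range k, mfib p (ee i) :=
      Finset.sum_congr rfl (fun i hi => hmm_eq i (Finset.mem_range.1 hi))
    have h2 : ∑ i ∈ range k, mfib p (ee i) = ∑ x ∈ C, mfib p x := by
      rw [← himg]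
      rw [Finset.sum_image (fun x hx y hy hxy => hinj
        (by simpa using Finset.mem_range.1 hx) (by simpa using Finset.mem_range.1 hy) hxy)]
    rw [h1, h2, hC]
    exact sum_mfib p
  have hbsum : ∑ i, b i = n := by
    rw [hb, Fin.sum_univ_eq_sum_range (fun s => if s < t - 1 then mm s else R) t]
    have ht1 : t - 1 + 1 = t := by omega
    have : ∑ s ∈ range t, (if s < t - 1 then mm s else R)
        = (∑ s ∈ range (t-1), (if s < t - 1 then mm s else R)) + (if t - 1 < t - 1 then mm (t-1) else R) := by
      rw [← Finset.sum_range_succ (fun s => if s < t - 1 then mm s else R) (t-1), ht1]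
    rw [this, if_neg (by omega)]
    have : ∑ s ∈ range (t-1), (if s < t - 1 then mm s else R) = ∑ s ∈ range (t-1), mm s :=
      Finset.sum_congr rfl (fun s hs => if_pos (Finset.mem_range.1 hs))
    rw [this, hR, ← hsum_range]
    exact Finset.sum_range_add_sum_Ico mm (by omega)
  have hbprod : ∏ i, b i = Q * R := by
    rw [hb, Fin.prod_univ_eq_prod_range (fun s => if s < t - 1 then mm s else R) t]
    have ht1 : t - 1 + 1 = t := by omega
    have h3 : ∏ s ∈ range t, (if s < t - 1 then mm s else R)
        = (∏ s ∈ range (t-1), (if s < t - 1 then mm s else R)) * (if t - 1 < t - 1 then mm (t-1) else R) := by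
      rw [← Finset.prod_range_succ (fun s => if s < t - 1 then mm s else R) (t-1), ht1]
    rw [h3, if_neg (by omega)]
    have h4 : ∏ s ∈ range (t-1), (if s < t - 1 then mm s else R) = ∏ s ∈ range (t-1), mm s :=
      Finset.prod_congr rfl (fun s hs => if_pos (Finset.mem_range.1 hs))
    rw [h4, hQ]
  refine ⟨b, hbsum, f, ⟨hf_nonneg, hf_zero, ?_⟩, ?_⟩
  · -- coverage
    intro T hTcard hTclique
    have hTinj : Set.InjOn p ↑T := (clique_iff_injOn hG T).1 hTclique
    set S := T.image p with hS
    have hScard : S.card = t := by rw [hS, Finset.card_image_of_injOn hTinj, hTcard]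
    have hSC : S ⊆ C := by
      rw [hS, hC]
      exact Finset.image_subset_image (Finset.subset_univ T)
    set I : Finset ℕ := (range k).filter (fun i => ee i ∈ S) with hI
    have hIcard : I.card = t := by
      rw [← hScard]
      apply Finset.card_bij (fun i _ => ee i)
      · intro i hi
        exact (Finset.mem_filter.1 hi).2
      · intro i hi j hj hij
        exact hinj (by simpa using Finset.mem_range.1 (Finset.mem_filter.1 hi).1)
          (by simpa using Finset.mem_range.1 (Finset.mem_filter.1 hj).1) hij
      · intro s hs
        have hsC : s ∈ C := hSC hs
        rw [← himg] at hsC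
        obtain ⟨i, hi, rfl⟩ := Finset.mem_image.1 hsC
        exact ⟨i, Finset.mem_filter.2 ⟨hi, hs⟩, rfl⟩
    have hIne : I.Nonempty := by rw [← Finset.card_pos, hIcard]; omega
    set imax := I.max' hIne with himax
    have himaxI : imax ∈ I := I.max'_mem hIne
    have himaxk : imax < k := Finset.mem_range.1 (Finset.mem_filter.1 himaxI).1
    set j₀ := imax + 1 with hj₀
    have hj₀t : t ≤ j₀ := by
      have hsub : I ⊆ range j₀ := by
        intro x hx
        rw [Finset.mem_range, hj₀]
        have := I.le_max' x hx
        omega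
      have := Finset.card_le_card hsub
      rw [hIcard, Finset.card_range] at this
      exact this
    have hj₀k : j₀ ≤ k := by omega
    have hSD : ∀ j, j ≤ k → (S ⊆ D j ↔ j₀ ≤ j) := by
      intro j hj
      constructor
      · intro hsub
        have h1 : ee imax ∈ S := (Finset.mem_filter.1 himaxI).2
        have h2 : ee imax ∈ D j := hsub h1
        rw [hD] at h2
        obtain ⟨i, hi, hie⟩ := Finset.mem_image.1 h2
        have hik : i < k := (Finset.mem_range.1 hi).trans_le hj
        have : i = imax := hinj (by simpa using hik) (by simpa using himaxk) hie
        have := Finset.mem_range.1 hi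
        omega
      · intro hj₀j s hs
        have hsC : s ∈ C := hSC hs
        rw [← himg] at hsC
        obtain ⟨i, hi, rfl⟩ := Finset.mem_image.1 hsC
        have hiI : i ∈ I := Finset.mem_filter.2 ⟨hi, hs⟩
        have : i ≤ imax := I.le_max' i hiI
        rw [hD]
        exact Finset.mem_image_of_mem ee (Finset.mem_range.2 (by omega))
    set P : ℕ := ∏ x ∈ S, mfib p x with hP
    have hP_eq : P = ∏ i ∈ I, mm i := by
      have hSI : S = I.image ee := by
        apply Finset.eq_of_subset_of_card_le
        · intro s hs
          have hsC : s ∈ C := hSC hs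
          rw [← himg] at hsC
          obtain ⟨i, hi, rfl⟩ := Finset.mem_image.1 hsC
          exact Finset.mem_image_of_mem ee (Finset.mem_filter.2 ⟨hi, hs⟩)
        · apply le_trans (Finset.card_image_le)
          rw [hIcard, hScard]
      rw [hP, hSI, Finset.prod_image (fun x hx y hy hxy => hinj
        (by simpa using Finset.mem_range.1 (Finset.mem_filter.1 hx).1)
        (by simpa using Finset.mem_range.1 (Finset.mem_filter.1 hy).1) hxy)]
      apply Finset.prod_congr rfl
      intro i hi
      rw [hmm_eq i (Finset.mem_range.1 (Finset.mem_filter.1 hi).1)]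
    have hP_pos : 0 < P := by
      rw [hP_eq]
      apply Finset.prod_pos
      intro i hi
      exact hmm_pos i (Finset.mem_range.1 (Finset.mem_filter.1 hi).1)
    have hP_le : P ≤ Q * mm imax := by
      rw [hP_eq, ← Finset.mul_prod_erase I mm himaxI]
      rw [mul_comm]
      apply Nat.mul_le_mul_right
      apply prod_anti_le mm hmm_anti (t-1)
      rw [Finset.card_erase_of_mem himaxI, hIcard]
    -- the coverage sum
    set cnt : ℕ → ℕ := fun j => ((univ.filter (fun K => T ⊆ K)) ∩ Tr p (D j)).card with hcnt
    have hcov : ∑ K ∈ univ.filter (fun K => T ⊆ K), f K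
        = ∑ j ∈ Icc t k, (cnt j : ℝ) * w j := by
      rw [hf]
      rw [Finset.sum_comm]
      apply Finset.sum_congr rfl
      intro j _
      rw [Finset.sum_ite_mem, Finset.sum_const, hcnt]
      simp [nsmul_eq_mul]
    have hcnt_eq : ∀ j, j ∈ Icc t k → j₀ ≤ j → cnt j * P = M j := by
      intro j hj hj₀j
      rw [Finset.mem_Icc] at hj
      have hSubD : S ⊆ D j := (hSD j hj.2).2 hj₀j
      have h1 : (univ.filter (fun K => T ⊆ K)) ∩ Tr p (D j)
          = (Tr p (D j)).filter (fun K => T ⊆ K) := by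
        ext K
        simp only [Finset.mem_inter, Finset.mem_filter, Finset.mem_univ, true_and]
        tauto
      rw [hcnt]
      simp only
      rw [h1, card_Tr_filter_subset p hTinj rfl hSubD, card_Tr]
      rw [hM]
      simp only
      rw [← Finset.prod_sdiff hSubD, hP]
    have hcnt_zero : ∀ j, j ∈ Icc t k → ¬ j₀ ≤ j → cnt j = 0 := by
      intro j hj hj₀j
      rw [Finset.mem_Icc] at hj
      rw [hcnt]
      simp only
      rw [Finset.card_eq_zero]
      rw [Finset.eq_empty_iff_forall_notMem]
      intro K hK
      rw [Finset.mem_inter, Finset.mem_filter] at hK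
      obtain ⟨⟨-, hTK⟩, hKTr⟩ := hK
      have hKim := ((mem_Tr p).1 hKTr).1
      have hSsub : S ⊆ D j := by
        rw [hS, ← hKim]
        exact Finset.image_subset_image hTK
      exact hj₀j ((hSD j hj.2).1 hSsub)
    have hcov2 : ∑ K ∈ univ.filter (fun K => T ⊆ K), f K
        = ∑ j ∈ Icc j₀ k, (y j : ℝ) / P := by
      rw [hcov]
      rw [← Finset.sum_subset (Finset.Icc_subset_Icc_left hj₀t)]
      · apply Finset.sum_congr rfl
        intro j hj
        have hjIcc : j ∈ Icc t k := Finset.Icc_subset_Icc_left hj₀t hj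
        have hj₀j : j₀ ≤ j := (Finset.mem_Icc.1 hj).1
        have hMp : (0:ℝ) < (M j : ℝ) := by
          exact_mod_cast hM_pos j (Finset.mem_Icc.1 hjIcc).2
        have hPp : (0:ℝ) < (P : ℝ) := by exact_mod_cast hP_pos
        have hkey : (cnt j : ℝ) * (P : ℝ) = (M j : ℝ) := by
          exact_mod_cast hcnt_eq j hjIcc hj₀j
        have hM0 : (M j : ℝ) ≠ 0 := ne_of_gt hMp
        have hP0 : (P : ℝ) ≠ 0 := ne_of_gt hPp
        rw [hw]
        field_simp
        linear_combination (y j : ℝ) * hkey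
      · intro j hj hj'
        have : ¬ j₀ ≤ j :=
          fun hc' => hj' (Finset.mem_Icc.2 ⟨hc', (Finset.mem_Icc.1 hj).2⟩)
        rw [hcnt_zero j hj this]
        simp
    rw [hcov2]
    have hsum_y : ∑ j ∈ Icc j₀ k, y j = Q * mm imax := by
      rw [hy]
      simp only
      rw [← Finset.mul_sum]
      rw [tele_nat mm hmm_anti k j₀ (by omega), hmmk]
      have : j₀ - 1 = imax := by omega
      rw [this, Nat.sub_zero]
    have : ∑ j ∈ Icc j₀ k, (y j : ℝ) / P = ((Q * mm imax : ℕ) : ℝ) / P := by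
      rw [← hsum_y]
      rw [← Finset.sum_div]
      push_cast
      rfl
    rw [this]
    rw [le_div_iff₀ (by exact_mod_cast hP_pos)]
    rw [one_mul]
    exact_mod_cast hP_le
  · -- cost
    have hcost : cliqueCost c f = ∑ j ∈ Icc t k, c j * (y j : ℝ) := by
      rw [cliqueCost, hf]
      have hswap : ∀ K : Finset (Fin n),
          c K.card * (∑ j ∈ Icc t k, if K ∈ Tr p (D j) then w j else 0)
          = ∑ j ∈ Icc t k, (if K ∈ Tr p (D j) then c K.card * w j else 0) := by
        intro K
        rw [Finset.mul_sum]
        exact Finset.sum_congr rfl (fun j _ => by rw [mul_ite, mul_zero])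
      rw [Finset.sum_congr rfl (fun K _ => hswap K)]
      rw [Finset.sum_comm]
      apply Finset.sum_congr rfl
      intro j hj
      rw [Finset.sum_ite_mem, Finset.univ_inter]
      have hjk := Finset.mem_Icc.1 hj
      have hcard : ∀ K ∈ Tr p (D j), c K.card * w j = c j * w j := by
        intro K hK
        rw [(mem_Tr p).1 hK |>.2, hD_card j hjk.2]
      rw [Finset.sum_congr rfl hcard, Finset.sum_const, card_Tr]
      have hMrfl : ∏ x ∈ D j, mfib p x = M j := rfl
      rw [hMrfl, nsmul_eq_mul, hw]
      have hMp : (0:ℝ) < (M j : ℝ) := by exact_mod_cast hM_pos j hjk.2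
      have hM0 : (M j : ℝ) ≠ 0 := ne_of_gt hMp
      field_simp
      try ring
    rw [hcost]
    calc ∑ j ∈ Icc t k, c j * (y j : ℝ)
        ≤ ∑ j ∈ Icc t k, ((j - t + 1 : ℕ) : ℝ) * c t * (y j : ℝ) := by
          apply Finset.sum_le_sum
          intro j hj
          have hjt := (Finset.mem_Icc.1 hj).1
          have h1 := cost_step c t (hc t (by omega)) hstep j hjt
          exact mul_le_mul_of_nonneg_right h1 (Nat.cast_nonneg _)
      _ = c t * ((∑ j ∈ Icc t k, (j - t + 1) * y j : ℕ) : ℝ) := by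
          rw [Nat.cast_sum, Finset.mul_sum]
          apply Finset.sum_congr rfl
          intro j _
          push_cast
          ring
      _ ≤ c t * ((∏ i, b i : ℕ) : ℝ) := by
          apply mul_le_mul_of_nonneg_left _ (hc t (by omega))
          have hnat : (∑ j ∈ Icc t k, (j - t + 1) * y j) = Q * R := by
            have h1 : ∀ j, (j - t + 1) * y j = Q * ((j - t + 1) * (mm (j-1) - mm j)) := by
              intro j; rw [hy]; ring
            rw [Finset.sum_congr rfl (fun j _ => h1 j), ← Finset.mul_sum]
            congr 1
            have habel := abel_nat mm hmm_anti k t (by omega)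
            rw [hmmk, Nat.mul_zero, Nat.add_zero] at habel
            rw [habel, hR]
            apply Finset.sum_nbij' (fun j => j - 1) (fun i => i + 1)
            · intro a ha
              rw [Finset.mem_Icc] at ha
              rw [Finset.mem_Ico]
              omega
            · intro b hb
              rw [Finset.mem_Ico] at hb
              rw [Finset.mem_Icc]
              omega
            · intro a ha
              rw [Finset.mem_Icc] at ha
              omega
            · intro b hb
              omega
            · intro a ha
              rfl
          have hle : ((∑ j ∈ Icc t k, (j - t + 1) * y j : ℕ) : ℝ) ≤ ((∏ i, b i : ℕ) : ℝ) := by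
            rw [hnat, hbprod]
          exact hle

end CoverMain

section Theta

lemma term_nonneg {V : Type} [Fintype V] [DecidableEq V] {t : ℕ} {G : SimpleGraph V}
    {f : Finset V → ℝ} (hf : IsFracCover t G f) {c : ℕ → ℝ} (hc : ∀ i, 1 ≤ i → 0 ≤ c i)
    (K : Finset V) : 0 ≤ c K.card * f K := by
  by_cases h : IsCliqueOf G K
  · have h1 : 1 ≤ K.card := Finset.card_pos.2 h.1
    exact mul_nonneg (hc _ h1) (hf.1 K)
  · rw [hf.2.1 K h, mul_zero]

lemma cost_nonneg {V : Type} [Fintype V] [DecidableEq V] {t : ℕ} {G : SimpleGraph V}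
    {f : Finset V → ℝ} (hf : IsFracCover t G f) {c : ℕ → ℝ} (hc : ∀ i, 1 ≤ i → 0 ≤ c i) :
    0 ≤ cliqueCost c f :=
  Finset.sum_nonneg (fun K _ => term_nonneg hf hc K)

lemma turan_clique_card_le {n t : ℕ} (ht : 1 ≤ t) {K : Finset (Fin n)}
    (hK : (SimpleGraph.turanGraph n t).IsClique (K : Set (Fin n))) : K.card ≤ t := by
  have hinj : Set.InjOn (fun v : Fin n => (v : ℕ) % t) ↑K :=
    (clique_iff_injOn (fun u v => Iff.rfl) K).1 hK
  have h1 : K.card = (K.image (fun v : Fin n => (v : ℕ) % t)).card :=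
    (Finset.card_image_of_injOn hinj).symm
  have h2 : K.image (fun v : Fin n => (v : ℕ) % t) ⊆ range t := by
    intro x hx
    obtain ⟨v, -, rfl⟩ := Finset.mem_image.1 hx
    exact Finset.mem_range.2 (Nat.mod_lt _ (by omega))
  calc K.card = _ := h1
    _ ≤ (range t).card := Finset.card_le_card h2
    _ = t := Finset.card_range t

lemma turan_Kt {n t : ℕ} (ht : 1 ≤ t) (T : Finset (Fin n)) :
    (T.card = t ∧ (SimpleGraph.turanGraph n t).IsClique (T : Set (Fin n)))
      ↔ T ∈ Tr (fun v : Fin n => (v : ℕ) % t) (range t) := by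
  constructor
  · rintro ⟨hcard, hclique⟩
    have hinj := (clique_iff_injOn (fun u v => Iff.rfl) T).1 hclique
    rw [mem_Tr]
    have h2 : T.image (fun v : Fin n => (v : ℕ) % t) ⊆ range t := by
      intro x hx
      obtain ⟨v, -, rfl⟩ := Finset.mem_image.1 hx
      exact Finset.mem_range.2 (Nat.mod_lt _ (by omega))
    have h3 : (T.image (fun v : Fin n => (v : ℕ) % t)).card = t := by
      rw [Finset.card_image_of_injOn hinj, hcard]
    constructor
    · apply Finset.eq_of_subset_of_card_le h2
      rw [h3, Finset.card_range]
    · rw [hcard, Finset.card_range]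
  · intro hT
    have hT' := (mem_Tr (fun v : Fin n => (v : ℕ) % t)).1 hT
    refine ⟨by rw [hT'.2, Finset.card_range], ?_⟩
    exact (clique_iff_injOn (fun u v => Iff.rfl) T).2
      (injOn_of_mem_Tr (fun v : Fin n => (v : ℕ) % t) hT)

end Theta

theorem stmt4' (n t : ℕ) (ht : 2 ≤ t) (hn : t ≤ n) (c : ℕ → ℝ)
    (hc : ∀ i, 1 ≤ i → 0 ≤ c i) (hstep : ∀ i, t ≤ i → c (i + 1) - c i ≤ c t)
    (H : SimpleGraph (Fin n)) (hH : IsCompleteMultipartite H) :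
    thetaFrac t H c ≤ thetaFrac t (SimpleGraph.turanGraph n t) c ∧
    thetaFrac t (SimpleGraph.turanGraph n t) c =
      thetaInt t (SimpleGraph.turanGraph n t) c := by
  classical
  obtain ⟨p, hp⟩ := hH
  set pT : Fin n → ℕ := fun v => (v : ℕ) % t with hpT
  set KT : Finset (Finset (Fin n)) := Tr pT (range t) with hKT
  set N : ℕ := KT.card with hN
  have hct : 0 ≤ c t := hc t (by omega)
  have hNN : N = ∏ r ∈ range t, (modFib n t r).card := by
    rw [hN, hKT, card_Tr]
    exact Finset.prod_congr rfl (fun r _ => mfib_turan n t r)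
  -- lower bound for any fractional cover of the Turán graph
  have hlower : ∀ f, IsFracCover t (SimpleGraph.turanGraph n t) f →
      c t * (N : ℝ) ≤ cliqueCost c f := by
    intro f hf
    have hfT : ∀ T ∈ KT, 1 ≤ f T := by
      intro T hT
      obtain ⟨hTcard, hTclique⟩ := (turan_Kt (by omega) T).2 hT
      have hcov := hf.2.2 T hTcard hTclique
      have hsingle : ∑ K ∈ univ.filter (fun K => T ⊆ K), f K = f T := by
        apply Finset.sum_eq_single_of_mem T
          (Finset.mem_filter.2 ⟨Finset.mem_univ T, subset_rfl⟩)
        intro K hK hne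
        by_cases hcl : IsCliqueOf (SimpleGraph.turanGraph n t) K
        · exfalso
          have hTK : T ⊆ K := (Finset.mem_filter.1 hK).2
          have hle : K.card ≤ t := turan_clique_card_le (by omega) hcl.2
          have heq : T = K := Finset.eq_of_subset_of_card_le hTK (by omega)
          exact hne heq.symm
        · exact hf.2.1 K hcl
      rw [hsingle] at hcov
      exact hcov
    calc c t * (N : ℝ) = ∑ _K ∈ KT, c t * 1 := by
          rw [Finset.sum_const, nsmul_eq_mul, hN]
          ring
      _ ≤ ∑ K ∈ KT, c K.card * f K := by
          apply Finset.sum_le_sum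
          intro K hK
          have hKcard : K.card = t := by
            rw [((mem_Tr pT).1 (hKT ▸ hK)).2, Finset.card_range]
          rw [hKcard]
          exact mul_le_mul_of_nonneg_left (hfT K hK) hct
      _ ≤ cliqueCost c f := by
          rw [cliqueCost]
          exact Finset.sum_le_sum_of_subset_of_nonneg (Finset.subset_univ KT)
            (fun K _ _ => term_nonneg hf hc K)
  -- indicator integer cover of the Turán graph
  set g : Finset (Fin n) → ℝ := fun K => if K ∈ KT then 1 else 0 with hg
  have hg_nonneg : ∀ K, 0 ≤ g K := by
    intro K
    by_cases h : K ∈ KT <;> simp [hg, h]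
  have hgInt : IsIntCover t (SimpleGraph.turanGraph n t) g := by
    refine ⟨⟨hg_nonneg, ?_, ?_⟩, ?_⟩
    · intro K hKcl
      rw [hg]
      simp only
      rw [if_neg]
      intro hK
      obtain ⟨hKcard, hKclique⟩ := (turan_Kt (by omega) K).2 hK
      exact hKcl ⟨Finset.card_pos.1 (by omega), hKclique⟩
    · intro T hTcard hTclique
      have hT : T ∈ KT := (turan_Kt (by omega) T).1 ⟨hTcard, hTclique⟩
      have h1 : g T = 1 := by rw [hg]; simp [hT]
      calc (1:ℝ) = g T := h1.symm
        _ ≤ ∑ K ∈ univ.filter (fun K => T ⊆ K), g K :=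
            Finset.single_le_sum (fun K _ => hg_nonneg K)
              (Finset.mem_filter.2 ⟨Finset.mem_univ T, subset_rfl⟩)
    · intro K
      by_cases h : K ∈ KT
      · right; simp [hg, h]
      · left; simp [hg, h]
  have hgcost : cliqueCost c g = c t * (N : ℝ) := by
    rw [cliqueCost]
    have h1 : ∀ K : Finset (Fin n), c K.card * g K = if K ∈ KT then c K.card else 0 := by
      intro K
      by_cases h : K ∈ KT <;> simp [hg, h]
    rw [Finset.sum_congr rfl (fun K _ => h1 K), Finset.sum_ite_mem, Finset.univ_inter]
    have h2 : ∀ K ∈ KT, c K.card = c t := by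
      intro K hK
      rw [((mem_Tr pT).1 (hKT ▸ hK)).2, Finset.card_range]
    rw [Finset.sum_congr rfl h2, Finset.sum_const, nsmul_eq_mul, hN]
    ring
  have hbddF : BddBelow {x | ∃ f, IsFracCover t (SimpleGraph.turanGraph n t) f
      ∧ x = cliqueCost c f} := by
    refine ⟨0, ?_⟩
    rintro x ⟨f, hf, rfl⟩
    exact cost_nonneg hf hc
  have hbddI : BddBelow {x | ∃ f, IsIntCover t (SimpleGraph.turanGraph n t) f
      ∧ x = cliqueCost c f} := by
    refine ⟨0, ?_⟩
    rintro x ⟨f, hf, rfl⟩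
    exact cost_nonneg hf.1 hc
  have hneF : {x | ∃ f, IsFracCover t (SimpleGraph.turanGraph n t) f
      ∧ x = cliqueCost c f}.Nonempty := ⟨c t * (N : ℝ), g, hgInt.1, hgcost.symm⟩
  have hneI : {x | ∃ f, IsIntCover t (SimpleGraph.turanGraph n t) f
      ∧ x = cliqueCost c f}.Nonempty := ⟨c t * (N : ℝ), g, hgInt, hgcost.symm⟩
  have hfracT_eq : thetaFrac t (SimpleGraph.turanGraph n t) c = c t * (N : ℝ) := by
    apply le_antisymm
    · exact csInf_le hbddF ⟨g, hgInt.1, hgcost.symm⟩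
    · apply le_csInf hneF
      rintro x ⟨f, hf, rfl⟩
      exact hlower f hf
  have hintT_eq : thetaInt t (SimpleGraph.turanGraph n t) c = c t * (N : ℝ) := by
    apply le_antisymm
    · exact csInf_le hbddI ⟨g, hgInt, hgcost.symm⟩
    · apply le_csInf hneI
      rintro x ⟨f, hf, rfl⟩
      exact hlower f hf.1
  have hbddH : BddBelow {x | ∃ f, IsFracCover t H f ∧ x = cliqueCost c f} := by
    refine ⟨0, ?_⟩
    rintro x ⟨f, hf, rfl⟩
    exact cost_nonneg hf hc
  constructor
  · rw [hfracT_eq]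
    by_cases hkt : t ≤ (univ.image p).card
    · obtain ⟨b, hbsum, f, hfcov, hfcost⟩ := cover_exists t ht p H hp c hc hstep hkt
      have h1 : thetaFrac t H c ≤ cliqueCost c f := csInf_le hbddH ⟨f, hfcov, rfl⟩
      have h2 : (∏ i, b i) ≤ N := by
        rw [hNN]
        exact lemT (by omega) b hbsum
      calc thetaFrac t H c ≤ cliqueCost c f := h1
        _ ≤ c t * ((∏ i, b i : ℕ) : ℝ) := hfcost
        _ ≤ c t * (N : ℝ) :=
            mul_le_mul_of_nonneg_left (by exact_mod_cast h2) hct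
    · push_neg at hkt
      have hzero : IsFracCover t H (fun _ : Finset (Fin n) => (0:ℝ)) := by
        refine ⟨fun _ => le_rfl, fun _ _ => rfl, ?_⟩
        intro T hTcard hTclique
        exfalso
        have hinj := (clique_iff_injOn hp T).1 hTclique
        have h1 : (T.image p).card = t := by
          rw [Finset.card_image_of_injOn hinj, hTcard]
        have h2 : T.image p ⊆ univ.image p := Finset.image_subset_image (Finset.subset_univ T)
        have := Finset.card_le_card h2
        omega
      have hc0 : cliqueCost c (fun _ : Finset (Fin n) => (0:ℝ)) = 0 := by simp [cliqueCost]
      have h3 : thetaFrac t H c ≤ 0 := csInf_le hbddH ⟨_, hzero, hc0.symm⟩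
      have h4 : 0 ≤ c t * (N : ℝ) := mul_nonneg hct (Nat.cast_nonneg _)
      linarith
  · rw [hfracT_eq, hintT_eq]

/-- Theorem 1.8 (i): if `c_{i+1} - c_i ≤ c_t` for all `i ≥ t`, then among
complete multipartite graphs the Turán graph maximizes the fractional
`t`-clique cover number, and for the Turán graph the fractional and integer
cover numbers agree. -/
theorem stmt4 (n t : ℕ) (ht : 2 ≤ t) (hn : t ≤ n) (c : ℕ → ℝ)
    (hc : ∀ i, 1 ≤ i → 0 ≤ c i) (hstep : ∀ i, t ≤ i → c (i + 1) - c i ≤ c t)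
    (H : SimpleGraph (Fin n)) (hH : IsCompleteMultipartite H) :
    thetaFrac t H c ≤ thetaFrac t (SimpleGraph.turanGraph n t) c ∧
    thetaFrac t (SimpleGraph.turanGraph n t) c =
      thetaInt t (SimpleGraph.turanGraph n t) c :=
  stmt4' n t ht hn c hc hstep H hH
end
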